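/- arXiv:2104.13550 — 9 statements merged into one kernel-verified Lean document; each statement's English description precedes it below -/
import Mathlib

section
/- Let γ > 0, n ≥ 1, m, p ≥ 1, b₁, b₂ ∈ {0,1}. Let S_r be an m × p real matrix with an SVD of rank q_r given by (Û_r, Σ̂_r, V̂_r, Ŭ_r, V̆_r), and let S_d = S_d(n; b₁, b₂) with an SVD of rank q_d given by (Û_d, Σ̂_d, V̂_d, Ŭ_d, V̆_d). Set S = [γ I_n ⊗ S_r, S_d ⊗ I_m], let Σ̃ be the (q_d q_r) × (q_d q_r) positive diagonal matrix with Σ̃² = Σ̂_d² ⊗ I_{q_r} + I_{q_d} ⊗ γ²Σ̂_r², and define Û = [Û_d ⊗ Û_r, Û_d ⊗ Ŭ_r, Ŭ_d ⊗ Û_r], Ŭ = Ŭ_d ⊗ Ŭ_r, Σ̂ = blockdiag(Σ̃, Σ̂_d ⊗ I_{m−q_r}, γ I_{n−q_d} ⊗ Σ̂_r), V̂ = [[γ(Û_d ⊗ V̂_rΣ̂_r)Σ̃⁻¹, 0, Ŭ_d ⊗ V̂_r], [(V̂_dΣ̂_d ⊗ Û_r)Σ̃⁻¹, V̂_d ⊗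 Ŭ_r, 0]] (top block row with np rows, bottom with (n+1)m rows), and V̆ = [[(Û_dΣ̂_d ⊗ V̂_r)Σ̃⁻¹, Û_d ⊗ V̆_r, 0], [−γ(V̂_d ⊗ Û_rΣ̂_r)Σ̃⁻¹, 0, V̆_d ⊗ [Û_r, Ŭ_r]]]. Then: (i) the nm × nm matrix [Û, Ŭ] is orthogonal; (ii) V̂ᵀV̂ = I, V̆ᵀV̆ = I, and V̂ᵀV̆ = 0; (iii) S = Û Σ̂ V̂ᵀ; (iv) S V̆ = 0 and Sᵀ Ŭ = 0. In particular this exhibits a singular value decomposition of S for every γ > 0. -/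
open Matrix
open scoped Kronecker Matrix

noncomputable section

/-- Kronecker transpose, convenient direction. -/
lemma kt {l m n p : Type*} (A : Matrix l m ℝ) (B : Matrix n p ℝ) :
    (A ⊗ₖ B)ᵀ = Aᵀ ⊗ₖ Bᵀ := (Matrix.kroneckerMap_transpose _ _ _).symm

/-- Pair adjacent Kronecker factors under right-assoc multiplication. -/
lemma kmul_assoc {l l' m m' n n' k : Type*} [Fintype m] [Fintype m'] [Fintype n] [Fintype n']
    (A : Matrix l m ℝ) (B : Matrix l' m' ℝ) (C : Matrix m n ℝ) (D : Matrix m' n' ℝ)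
    (E : Matrix (n × n') k ℝ) :
    (A ⊗ₖ B) * ((C ⊗ₖ D) * E) = ((A * C) ⊗ₖ (B * D)) * E := by
  rw [← Matrix.mul_assoc, ← Matrix.mul_kronecker_mul]

lemma mul_one_assoc' {a b k : Type*} [Fintype b] [Fintype a] [DecidableEq a]
    {P : Matrix a b ℝ} {Q : Matrix b a ℝ} (h : P * Q = 1) (X : Matrix a k ℝ) :
    P * (Q * X) = X := by rw [← Matrix.mul_assoc, h, Matrix.one_mul]

lemma mul_zero_assoc' {a b c k : Type*} [Fintype b] [Fintype c]
    {P : Matrix a b ℝ} {Q : Matrix b c ℝ} (h : P * Q = 0) (X : Matrix c k ℝ) :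
    P * (Q * X) = 0 := by rw [← Matrix.mul_assoc, h, Matrix.zero_mul]

lemma cols_ortho {m n₁ n₂ : Type*} [Fintype m] [Fintype n₁] [Fintype n₂]
    [DecidableEq n₁] [DecidableEq n₂]
    {A : Matrix m n₁ ℝ} {B : Matrix m n₂ ℝ}
    (h : (fromCols A B)ᵀ * fromCols A B = 1) :
    Aᵀ * A = 1 ∧ Aᵀ * B = 0 ∧ Bᵀ * A = 0 ∧ Bᵀ * B = 1 := by
  rw [transpose_fromCols, fromRows_mul_fromCols, ← fromBlocks_one, fromBlocks_inj] at h
  exact ⟨h.1, h.2.1, h.2.2.1, h.2.2.2⟩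

lemma rows_complete {m n₁ n₂ : Type*} [Fintype m] [Fintype n₁] [Fintype n₂] [DecidableEq m]
    {A : Matrix m n₁ ℝ} {B : Matrix m n₂ ℝ}
    (h : fromCols A B * (fromCols A B)ᵀ = 1) :
    A * Aᵀ + B * Bᵀ = 1 := by
  rwa [transpose_fromCols, fromCols_mul_fromRows] at h
section iffs
variable {R : Type*} {A B C D : Type*}

lemma fromRows_eq_zero_iff [Semiring R] {X : Matrix A C R} {Y : Matrix B C R} :
    fromRows X Y = 0 ↔ X = 0 ∧ Y = 0 :=
  ⟨fun h => fromRows_inj (h.trans fromRows_zero.symm),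
   fun h => by rw [h.1, h.2]; exact fromRows_zero⟩

lemma fromCols_eq_zero_iff [Semiring R] {X : Matrix A C R} {Y : Matrix A D R} :
    fromCols X Y = 0 ↔ X = 0 ∧ Y = 0 :=
  ⟨fun h => fromCols_inj (h.trans fromCols_zero.symm),
   fun h => by rw [h.1, h.2]; exact fromCols_zero⟩

lemma fromBlocks_eq_zero_iff [Semiring R] {W : Matrix A C R} {X : Matrix A D R}
    {Y : Matrix B C R} {Z : Matrix B D R} :
    fromBlocks W X Y Z = 0 ↔ W = 0 ∧ X = 0 ∧ Y = 0 ∧ Z = 0 := by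
  constructor
  · intro h
    rw [← fromBlocks_zero, fromBlocks_inj] at h
    exact h
  · rintro ⟨h1, h2, h3, h4⟩
    rw [h1, h2, h3, h4, fromBlocks_zero]

lemma fromBlocks_eq_one_iff [Semiring R] [DecidableEq A] [DecidableEq B]
    {W : Matrix A A R} {X : Matrix A B R} {Y : Matrix B A R} {Z : Matrix B B R} :
    fromBlocks W X Y Z = 1 ↔ W = 1 ∧ X = 0 ∧ Y = 0 ∧ Z = 1 := by
  constructor
  · intro h
    rw [← fromBlocks_one, fromBlocks_inj] at h
    exact h
  · rintro ⟨h1, h2, h3, h4⟩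
    rw [h1, h2, h3, h4, fromBlocks_one]

lemma fromCols_eq_one_iff [Semiring R] [DecidableEq A] [DecidableEq B]
    {X : Matrix (A ⊕ B) A R} {Y : Matrix (A ⊕ B) B R} :
    fromCols X Y = 1 ↔ X = fromRows 1 0 ∧ Y = fromRows 0 1 := by
  rw [← fromBlocks_one, ← fromCols_fromRows_eq_fromBlocks, fromCols_ext_iff]

lemma fromRows_eq_one_iff [Semiring R] [DecidableEq A] [DecidableEq B]
    {X : Matrix A (A ⊕ B) R} {Y : Matrix B (A ⊕ B) R} :
    fromRows X Y = 1 ↔ X = fromCols 1 0 ∧ Y = fromCols 0 1 := by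
  rw [← fromBlocks_one, ← fromRows_fromCols_eq_fromBlocks, fromRows_ext_iff]

end iffs

section comm
variable {R : Type*} {A B C D E F : Type*}
lemma fromCols_fromRows_comm [Semiring R]
    (a : Matrix A C R) (b : Matrix A D R) (c : Matrix B C R) (d : Matrix B D R) :
    fromCols (fromRows a c) (fromRows b d) = fromRows (fromCols a b) (fromCols c d) := by
  rw [fromCols_fromRows_eq_fromBlocks, ← fromRows_fromCols_eq_fromBlocks]
end comm

section normal
variable {R : Type*} {A B C D : Type*} [Semiring R]

lemma one_sum_expand [DecidableEq A] [DecidableEq B] :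
    (1 : Matrix (A ⊕ B) (A ⊕ B) R) = fromRows (fromCols 1 0) (fromCols 0 1) := by
  rw [fromRows_fromCols_eq_fromBlocks, fromBlocks_one]

lemma zero_rows_expand :
    (0 : Matrix (A ⊕ B) C R) = fromRows 0 0 := fromRows_zero.symm

lemma zero_cols_expand :
    (0 : Matrix A (C ⊕ D) R) = fromCols 0 0 := fromCols_zero.symm

lemma fromRows_add (a c : Matrix A C R) (b d : Matrix B C R) :
    fromRows a b + fromRows c d = fromRows (a + c) (b + d) := by
  ext i j; cases i <;> simp [fromRows_apply_inl, fromRows_apply_inr]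

lemma fromCols_add (a c : Matrix A C R) (b d : Matrix A D R) :
    fromCols a b + fromCols c d = fromCols (a + c) (b + d) := by
  ext i j; cases j <;> simp [fromCols]

lemma smul_fromRows (r : R) (a : Matrix A C R) (b : Matrix B C R) :
    r • fromRows a b = fromRows (r • a) (r • b) := by
  ext i j; cases i <;> simp [fromRows_apply_inl, fromRows_apply_inr]

lemma smul_fromCols (r : R) (a : Matrix A C R) (b : Matrix A D R) :
    r • fromCols a b = fromCols (r • a) (r • b) := by
  ext i j; cases j <;> simp [fromCols]

end normal

/-- The diffusion-only stoichiometry matrix `S_d(n; b₁, b₂)` (entries indexed from 1 in the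
paper; here rows `i : Fin n` and columns `j : Fin (n+1)` are indexed from 0). -/
def Sd (n : ℕ) (b₁ b₂ : ℝ) : Matrix (Fin n) (Fin (n+1)) ℝ :=
  Matrix.of fun i j =>
    if (j : ℕ) = (i : ℕ) ∧ (i : ℕ) = 0 then b₁
    else if (j : ℕ) = (i : ℕ) then 1
    else if (j : ℕ) = (i : ℕ) + 1 ∧ (i : ℕ) = n - 1 then -b₂
    else if (j : ℕ) = (i : ℕ) + 1 then (-1 : ℝ)
    else 0
/-- exact SVD of `S = [γ I_n ⊗ S_r, S_d ⊗ I_m]` for every `γ > 0`. -/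
theorem stmt0
    (γ : ℝ) (hγ : 0 < γ)
    (n m p : ℕ) (hn : 1 ≤ n) (hm : 1 ≤ m) (hp : 1 ≤ p)
    (b₁ b₂ : ℝ) (hb₁ : b₁ = 0 ∨ b₁ = 1) (hb₂ : b₂ = 0 ∨ b₂ = 1)
    (Sr : Matrix (Fin m) (Fin p) ℝ)
    (qr : ℕ) (Uhr : Matrix (Fin m) (Fin qr) ℝ) (σr : Fin qr → ℝ)
    (Vhr : Matrix (Fin p) (Fin qr) ℝ)
    (Ucr : Matrix (Fin m) (Fin (m - qr)) ℝ) (Vcr : Matrix (Fin p) (Fin (p - qr)) ℝ)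
    (hσr : ∀ i, 0 < σr i)
    (hUr : (fromCols Uhr Ucr)ᵀ * fromCols Uhr Ucr = 1 ∧
           fromCols Uhr Ucr * (fromCols Uhr Ucr)ᵀ = 1)
    (hVr : (fromCols Vhr Vcr)ᵀ * fromCols Vhr Vcr = 1 ∧
           fromCols Vhr Vcr * (fromCols Vhr Vcr)ᵀ = 1)
    (hSr : Sr = Uhr * Matrix.diagonal σr * Vhrᵀ)
    (qd : ℕ) (Uhd : Matrix (Fin n) (Fin qd) ℝ) (σd : Fin qd → ℝ)
    (Vhd : Matrix (Fin (n+1)) (Fin qd) ℝ)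
    (Ucd : Matrix (Fin n) (Fin (n - qd)) ℝ)
    (Vcd : Matrix (Fin (n+1)) (Fin (n + 1 - qd)) ℝ)
    (hσd : ∀ i, 0 < σd i)
    (hUd : (fromCols Uhd Ucd)ᵀ * fromCols Uhd Ucd = 1 ∧
           fromCols Uhd Ucd * (fromCols Uhd Ucd)ᵀ = 1)
    (hVd : (fromCols Vhd Vcd)ᵀ * fromCols Vhd Vcd = 1 ∧
           fromCols Vhd Vcd * (fromCols Vhd Vcd)ᵀ = 1)
    (hSdsvd : Sd n b₁ b₂ = Uhd * Matrix.diagonal σd * Vhdᵀ)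
    -- `Σ̃` is the positive diagonal matrix with `Σ̃² = Σ̂_d² ⊗ I_{q_r} + I_{q_d} ⊗ γ²Σ̂_r²`
    (Sigt : Matrix (Fin qd × Fin qr) (Fin qd × Fin qr) ℝ)
    (hSigtdiag : ∀ i j, i ≠ j → Sigt i j = 0)
    (hSigtpos : ∀ i, 0 < Sigt i i)
    (hSigtsq : Sigt * Sigt =
      (Matrix.diagonal σd * Matrix.diagonal σd) ⊗ₖ (1 : Matrix (Fin qr) (Fin qr) ℝ) +
      (1 : Matrix (Fin qd) (Fin qd) ℝ) ⊗ₖ (γ ^ 2 • (Matrix.diagonal σr * Matrix.diagonal σr))) :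
    let S : Matrix (Fin n × Fin m) ((Fin n × Fin p) ⊕ (Fin (n+1) × Fin m)) ℝ :=
      fromCols ((γ • (1 : Matrix (Fin n) (Fin n) ℝ)) ⊗ₖ Sr)
        (Sd n b₁ b₂ ⊗ₖ (1 : Matrix (Fin m) (Fin m) ℝ))
    let Uh : Matrix (Fin n × Fin m)
        ((Fin qd × Fin qr) ⊕ ((Fin qd × Fin (m - qr)) ⊕ (Fin (n - qd) × Fin qr))) ℝ :=
      fromCols (Uhd ⊗ₖ Uhr) (fromCols (Uhd ⊗ₖ Ucr) (Ucd ⊗ₖ Uhr))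
    let Uc : Matrix (Fin n × Fin m) (Fin (n - qd) × Fin (m - qr)) ℝ := Ucd ⊗ₖ Ucr
    let Sigh : Matrix
        ((Fin qd × Fin qr) ⊕ ((Fin qd × Fin (m - qr)) ⊕ (Fin (n - qd) × Fin qr)))
        ((Fin qd × Fin qr) ⊕ ((Fin qd × Fin (m - qr)) ⊕ (Fin (n - qd) × Fin qr))) ℝ :=
      fromBlocks Sigt 0 0
        (fromBlocks (Matrix.diagonal σd ⊗ₖ (1 : Matrix (Fin (m - qr)) (Fin (m - qr)) ℝ)) 0 0
          (γ • ((1 : Matrix (Fin (n - qd)) (Fin (n - qd)) ℝ) ⊗ₖ Matrix.diagonal σr)))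
    let Vh : Matrix ((Fin n × Fin p) ⊕ (Fin (n+1) × Fin m))
        ((Fin qd × Fin qr) ⊕ ((Fin qd × Fin (m - qr)) ⊕ (Fin (n - qd) × Fin qr))) ℝ :=
      fromRows
        (fromCols (γ • ((Uhd ⊗ₖ (Vhr * Matrix.diagonal σr)) * Sigt⁻¹))
          (fromCols 0 (Ucd ⊗ₖ Vhr)))
        (fromCols (((Vhd * Matrix.diagonal σd) ⊗ₖ Uhr) * Sigt⁻¹)
          (fromCols (Vhd ⊗ₖ Ucr) 0))
    let Vc : Matrix ((Fin n × Fin p) ⊕ (Fin (n+1) × Fin m))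
        ((Fin qd × Fin qr) ⊕ ((Fin qd × Fin (p - qr)) ⊕
          (Fin (n + 1 - qd) × (Fin qr ⊕ Fin (m - qr))))) ℝ :=
      fromRows
        (fromCols (((Uhd * Matrix.diagonal σd) ⊗ₖ Vhr) * Sigt⁻¹)
          (fromCols (Uhd ⊗ₖ Vcr) 0))
        (fromCols ((-γ) • ((Vhd ⊗ₖ (Uhr * Matrix.diagonal σr)) * Sigt⁻¹))
          (fromCols 0 (Vcd ⊗ₖ fromCols Uhr Ucr)))
    -- (i) `[Û, Ŭ]` is orthogonal
    ((fromCols Uh Uc)ᵀ * fromCols Uh Uc = 1 ∧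
      fromCols Uh Uc * (fromCols Uh Uc)ᵀ = 1) ∧
    -- (ii) orthonormality relations for `V̂`, `V̆`
    (Vhᵀ * Vh = 1 ∧ Vcᵀ * Vc = 1 ∧ Vhᵀ * Vc = 0) ∧
    -- (iii) reconstruction
    S = Uh * Sigh * Vhᵀ ∧
    -- (iv) nullspaces
    (S * Vc = 0 ∧ Sᵀ * Uc = 0) := by

  intro S Uh Uc Sigh Vh Vc
  obtain ⟨a1, a2, a3, a4⟩ := cols_ortho hUr.1
  have a5 := rows_complete hUr.2
  obtain ⟨b1, b2, b3, b4⟩ := cols_ortho hVr.1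
  have b5 := rows_complete hVr.2
  obtain ⟨c1, c2, c3, c4⟩ := cols_ortho hUd.1
  have c5 := rows_complete hUd.2
  obtain ⟨d1, d2, d3, d4⟩ := cols_ortho hVd.1
  have d5 := rows_complete hVd.2
  have hTd : Sigt = Matrix.diagonal (fun i => Sigt i i) := by
    ext i j
    by_cases h : i = j
    · subst h; simp
    · simp [Matrix.diagonal_apply_ne _ h, hSigtdiag i j h]
  have hdet : IsUnit Sigt.det := by
    rw [hTd, Matrix.det_diagonal]
    exact (Finset.prod_pos (fun i _ => hSigtpos i)).ne'.isUnit
  have tT : Sigtᵀ = Sigt := by rw [hTd, Matrix.diagonal_transpose]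
  have tMul : Sigt * Sigt⁻¹ = 1 := Matrix.mul_nonsing_inv Sigt hdet
  have tMul' : Sigt⁻¹ * Sigt = 1 := Matrix.nonsing_inv_mul Sigt hdet
  have tTi : (Sigt⁻¹)ᵀ = Sigt⁻¹ := by rw [Matrix.transpose_nonsing_inv, tT]
  have keyA : (γ * γ) • (Sigt⁻¹ * (((1 : Matrix (Fin qd) (Fin qd) ℝ) ⊗ₖ
        (Matrix.diagonal σr * Matrix.diagonal σr)) * Sigt⁻¹)) +
      Sigt⁻¹ * (((Matrix.diagonal σd * Matrix.diagonal σd) ⊗ₖ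
        (1 : Matrix (Fin qr) (Fin qr) ℝ)) * Sigt⁻¹) = 1 := by
    have e1 : (γ * γ) • (Sigt⁻¹ * (((1 : Matrix (Fin qd) (Fin qd) ℝ) ⊗ₖ
          (Matrix.diagonal σr * Matrix.diagonal σr)) * Sigt⁻¹)) =
        Sigt⁻¹ * (((1 : Matrix (Fin qd) (Fin qd) ℝ) ⊗ₖ
          (γ ^ 2 • (Matrix.diagonal σr * Matrix.diagonal σr))) * Sigt⁻¹) := by
      rw [Matrix.kronecker_smul, Matrix.smul_mul, Matrix.mul_smul, sq]
    rw [e1, ← Matrix.mul_add, ← Matrix.add_mul, add_comm, ← hSigtsq,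
      Matrix.mul_assoc Sigt Sigt, tMul, Matrix.mul_one, tMul']
  have keyB : Sigt⁻¹ * (((Matrix.diagonal σd * Matrix.diagonal σd) ⊗ₖ
        (1 : Matrix (Fin qr) (Fin qr) ℝ)) * Sigt⁻¹) +
      (γ * γ) • (Sigt⁻¹ * (((1 : Matrix (Fin qd) (Fin qd) ℝ) ⊗ₖ
        (Matrix.diagonal σr * Matrix.diagonal σr)) * Sigt⁻¹)) = 1 := by
    rw [add_comm]; exact keyA
  have kW : (1 : Matrix (Fin (n + 1 - qd)) (Fin (n + 1 - qd)) ℝ) ⊗ₖ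
      (fromRows (fromCols (1 : Matrix (Fin qr) (Fin qr) ℝ) 0)
        (fromCols 0 (1 : Matrix (Fin (m - qr)) (Fin (m - qr)) ℝ))) = 1 := by
    rw [← one_sum_expand, Matrix.one_kronecker_one]
  refine ⟨⟨?_, ?_⟩, ⟨?_, ?_, ?_⟩, ?_, ?_, ?_⟩
  · simp only [Uh, Uc, Vh, Vc, Sigh, S, transpose_fromCols, transpose_fromRows, Matrix.transpose_mul, Matrix.transpose_smul, Matrix.transpose_one, Matrix.transpose_zero, Matrix.diagonal_transpose, kt, fromRows_mul_fromCols, fromCols_mul_fromRows, Matrix.mul_fromCols, Matrix.fromRows_mul, fromCols_mul_fromBlocks, fromBlocks_mul_fromRows, Matrix.fromBlocks_multiply, Matrix.fromBlocks_add, Matrix.fromBlocks_transpose, fromCols_fromRows_comm, fromCols_ext_iff, fromRows_ext_iff, Matrix.mul_assoc, kmul_assoc, ← Matrix.mul_kronecker_mul, Matrix.smul_mul, Matrix.mul_smul, smul_smul, neg_smul, smul_neg, neg_neg, Matrix.zero_mul, Matrix.mul_zero, Matrix.one_mul, Matrix.mul_one, add_zero, zero_add, smul_zero, Matrix.zero_kronecker,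 Matrix.kronecker_zero, Matrix.one_kronecker_one, Matrix.smul_kronecker, Matrix.kronecker_smul, a1, a2, a3, a4, b1, b2, b3, b4, c1, c2, c3, c4, d1, d2, d3, d4, mul_one_assoc' a1, mul_zero_assoc' a2, mul_zero_assoc' a3, mul_one_assoc' a4, mul_one_assoc' b1, mul_zero_assoc' b2, mul_zero_assoc' b3, mul_one_assoc' b4, mul_one_assoc' c1, mul_zero_assoc' c2, mul_zero_assoc' c3, mul_one_assoc' c4, mul_one_assoc' d1, mul_zero_assoc' d2, mul_zero_assoc' d3, mul_one_assoc' d4, tMul, tMul', mul_one_assoc' tMul, mul_one_assoc' tMul', tT, tTi, hSr, hSdsvd, and_true, true_and, ← fromRows_fromCols_eq_fromBlocks, one_sum_expand, zero_rows_expand, zero_cols_expand, fromRows_add, fromCols_add, smul_fromRows, smul_fromCols, fromRows_neg, fromCols_neg, Matrix.transpose_neg, Matrix.neg_mul, Matrix.mul_neg, neg_mul, mul_neg, neg_neg, neg_zero, add_neg_cancel, neg_add_cancel, keyA, keyB, kW]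
  · simp only [Uh, Uc, Vh, Vc, Sigh, S, transpose_fromCols, transpose_fromRows, Matrix.transpose_mul, Matrix.transpose_smul, Matrix.transpose_one, Matrix.transpose_zero, Matrix.diagonal_transpose, kt, fromRows_mul_fromCols, fromCols_mul_fromRows, Matrix.mul_fromCols, Matrix.fromRows_mul, fromCols_mul_fromBlocks, fromBlocks_mul_fromRows, Matrix.fromBlocks_multiply, Matrix.fromBlocks_add, Matrix.fromBlocks_transpose, fromCols_fromRows_comm, fromCols_ext_iff, fromRows_ext_iff, Matrix.mul_assoc, kmul_assoc, ← Matrix.mul_kronecker_mul, Matrix.smul_mul, Matrix.mul_smul, smul_smul, neg_smul, smul_neg, neg_neg, Matrix.zero_mul, Matrix.mul_zero, Matrix.one_mul, Matrix.mul_one, add_zero, zero_add, smul_zero, Matrix.zero_kronecker, Matrix.kronecker_zero, Matrix.one_kronecker_one, Matrix.smul_kronecker, Matrix.kronecker_smul, a1, a2, a3, a4, b1, b2, b3, b4, c1, c2, c3, c4, d1, d2, d3, d4, mul_one_assoc' a1, mul_zero_assoc' a2, mul_zero_assoc' a3, mul_one_assoc' a4, mul_one_assoc' b1, mul_zero_assoc'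 b2, mul_zero_assoc' b3, mul_one_assoc' b4, mul_one_assoc' c1, mul_zero_assoc' c2, mul_zero_assoc' c3, mul_one_assoc' c4, mul_one_assoc' d1, mul_zero_assoc' d2, mul_zero_assoc' d3, mul_one_assoc' d4, tMul, tMul', mul_one_assoc' tMul, mul_one_assoc' tMul', tT, tTi, hSr, hSdsvd, and_true, true_and, ← fromRows_fromCols_eq_fromBlocks, one_sum_expand, zero_rows_expand, zero_cols_expand, fromRows_add, fromCols_add, smul_fromRows, smul_fromCols, fromRows_neg, fromCols_neg]
    have h1 : (1 : Matrix (Fin n × Fin m) (Fin n × Fin m) ℝ) =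
        (Uhd * Uhdᵀ + Ucd * Ucdᵀ) ⊗ₖ (Uhr * Uhrᵀ + Ucr * Ucrᵀ) := by
      rw [a5, c5, Matrix.one_kronecker_one]
    rw [h1, Matrix.add_kronecker, Matrix.kronecker_add, Matrix.kronecker_add]
    abel
  · simp only [Uh, Uc, Vh, Vc, Sigh, S, transpose_fromCols, transpose_fromRows, Matrix.transpose_mul, Matrix.transpose_smul, Matrix.transpose_one, Matrix.transpose_zero, Matrix.diagonal_transpose, kt, fromRows_mul_fromCols, fromCols_mul_fromRows, Matrix.mul_fromCols, Matrix.fromRows_mul, fromCols_mul_fromBlocks, fromBlocks_mul_fromRows, Matrix.fromBlocks_multiply, Matrix.fromBlocks_add, Matrix.fromBlocks_transpose, fromCols_fromRows_comm, fromCols_ext_iff, fromRows_ext_iff, Matrix.mul_assoc, kmul_assoc, ← Matrix.mul_kronecker_mul, Matrix.smul_mul, Matrix.mul_smul, smul_smul, neg_smul, smul_neg, neg_neg, Matrix.zero_mul, Matrix.mul_zero, Matrix.one_mul, Matrix.mul_one, add_zero, zero_add, smul_zero, Matrix.zero_kronecker, Matrix.kronecker_zero, Matrix.one_kronecker_one,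 Matrix.smul_kronecker, Matrix.kronecker_smul, a1, a2, a3, a4, b1, b2, b3, b4, c1, c2, c3, c4, d1, d2, d3, d4, mul_one_assoc' a1, mul_zero_assoc' a2, mul_zero_assoc' a3, mul_one_assoc' a4, mul_one_assoc' b1, mul_zero_assoc' b2, mul_zero_assoc' b3, mul_one_assoc' b4, mul_one_assoc' c1, mul_zero_assoc' c2, mul_zero_assoc' c3, mul_one_assoc' c4, mul_one_assoc' d1, mul_zero_assoc' d2, mul_zero_assoc' d3, mul_one_assoc' d4, tMul, tMul', mul_one_assoc' tMul, mul_one_assoc' tMul', tT, tTi, hSr, hSdsvd, and_true, true_and, ← fromRows_fromCols_eq_fromBlocks, one_sum_expand, zero_rows_expand, zero_cols_expand, fromRows_add, fromCols_add, smul_fromRows, smul_fromCols, fromRows_neg, fromCols_neg, Matrix.transpose_neg, Matrix.neg_mul, Matrix.mul_neg, neg_mul, mul_neg, neg_neg, neg_zero, add_neg_cancel, neg_add_cancel, keyA, keyB, kW]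
  · simp only [Uh, Uc, Vh, Vc, Sigh, S, transpose_fromCols, transpose_fromRows, Matrix.transpose_mul, Matrix.transpose_smul, Matrix.transpose_one, Matrix.transpose_zero, Matrix.diagonal_transpose, kt, fromRows_mul_fromCols, fromCols_mul_fromRows, Matrix.mul_fromCols, Matrix.fromRows_mul, fromCols_mul_fromBlocks, fromBlocks_mul_fromRows, Matrix.fromBlocks_multiply, Matrix.fromBlocks_add, Matrix.fromBlocks_transpose, fromCols_fromRows_comm, fromCols_ext_iff, fromRows_ext_iff, Matrix.mul_assoc, kmul_assoc, ← Matrix.mul_kronecker_mul, Matrix.smul_mul, Matrix.mul_smul, smul_smul, neg_smul, smul_neg, neg_neg, Matrix.zero_mul, Matrix.mul_zero, Matrix.one_mul, Matrix.mul_one, add_zero, zero_add, smul_zero, Matrix.zero_kronecker, Matrix.kronecker_zero, Matrix.one_kronecker_one, Matrix.smul_kronecker, Matrix.kronecker_smul, a1, a2, a3, a4, b1, b2, b3, b4, c1, c2, c3, c4, d1, d2, d3, d4, mul_one_assoc' a1, mul_zero_assoc' a2, mul_zero_assoc' a3, mul_one_assoc' a4, mul_one_assoc' b1, mul_zero_assoc'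 b2, mul_zero_assoc' b3, mul_one_assoc' b4, mul_one_assoc' c1, mul_zero_assoc' c2, mul_zero_assoc' c3, mul_one_assoc' c4, mul_one_assoc' d1, mul_zero_assoc' d2, mul_zero_assoc' d3, mul_one_assoc' d4, tMul, tMul', mul_one_assoc' tMul, mul_one_assoc' tMul', tT, tTi, hSr, hSdsvd, and_true, true_and, ← fromRows_fromCols_eq_fromBlocks, one_sum_expand, zero_rows_expand, zero_cols_expand, fromRows_add, fromCols_add, smul_fromRows, smul_fromCols, fromRows_neg, fromCols_neg, Matrix.transpose_neg, Matrix.neg_mul, Matrix.mul_neg, neg_mul, mul_neg, neg_neg, neg_zero, add_neg_cancel, neg_add_cancel, keyA, keyB, kW]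
  · simp only [Uh, Uc, Vh, Vc, Sigh, S, transpose_fromCols, transpose_fromRows, Matrix.transpose_mul, Matrix.transpose_smul, Matrix.transpose_one, Matrix.transpose_zero, Matrix.diagonal_transpose, kt, fromRows_mul_fromCols, fromCols_mul_fromRows, Matrix.mul_fromCols, Matrix.fromRows_mul, fromCols_mul_fromBlocks, fromBlocks_mul_fromRows, Matrix.fromBlocks_multiply, Matrix.fromBlocks_add, Matrix.fromBlocks_transpose, fromCols_fromRows_comm, fromCols_ext_iff, fromRows_ext_iff, Matrix.mul_assoc, kmul_assoc, ← Matrix.mul_kronecker_mul, Matrix.smul_mul, Matrix.mul_smul, smul_smul, neg_smul, smul_neg, neg_neg, Matrix.zero_mul, Matrix.mul_zero, Matrix.one_mul, Matrix.mul_one, add_zero, zero_add, smul_zero, Matrix.zero_kronecker, Matrix.kronecker_zero, Matrix.one_kronecker_one, Matrix.smul_kronecker, Matrix.kronecker_smul, a1, a2, a3, a4, b1, b2, b3, b4, c1, c2, c3, c4, d1, d2, d3, d4, mul_one_assoc' a1, mul_zero_assoc' a2, mul_zero_assoc' a3, mul_one_assoc' a4, mul_one_assoc' b1, mul_zero_assoc'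 b2, mul_zero_assoc' b3, mul_one_assoc' b4, mul_one_assoc' c1, mul_zero_assoc' c2, mul_zero_assoc' c3, mul_one_assoc' c4, mul_one_assoc' d1, mul_zero_assoc' d2, mul_zero_assoc' d3, mul_one_assoc' d4, tMul, tMul', mul_one_assoc' tMul, mul_one_assoc' tMul', tT, tTi, hSr, hSdsvd, and_true, true_and, ← fromRows_fromCols_eq_fromBlocks, one_sum_expand, zero_rows_expand, zero_cols_expand, fromRows_add, fromCols_add, smul_fromRows, smul_fromCols, fromRows_neg, fromCols_neg, Matrix.transpose_neg, Matrix.neg_mul, Matrix.mul_neg, neg_mul, mul_neg, neg_neg, neg_zero, add_neg_cancel, neg_add_cancel, keyA, keyB, kW]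
  · simp only [Uh, Uc, Vh, Vc, Sigh, S, transpose_fromCols, transpose_fromRows, Matrix.transpose_mul, Matrix.transpose_smul, Matrix.transpose_one, Matrix.transpose_zero, Matrix.diagonal_transpose, kt, fromRows_mul_fromCols, fromCols_mul_fromRows, Matrix.mul_fromCols, Matrix.fromRows_mul, fromCols_mul_fromBlocks, fromBlocks_mul_fromRows, Matrix.fromBlocks_multiply, Matrix.fromBlocks_add, Matrix.fromBlocks_transpose, fromCols_fromRows_comm, fromCols_ext_iff, fromRows_ext_iff, Matrix.mul_assoc, kmul_assoc, ← Matrix.mul_kronecker_mul, Matrix.smul_mul, Matrix.mul_smul, smul_smul, neg_smul, smul_neg, neg_neg, Matrix.zero_mul, Matrix.mul_zero, Matrix.one_mul, Matrix.mul_one, add_zero, zero_add, smul_zero, Matrix.zero_kronecker, Matrix.kronecker_zero, Matrix.one_kronecker_one, Matrix.smul_kronecker, Matrix.kronecker_smul, a1, a2, a3, a4, b1, b2, b3, b4, c1, c2, c3, c4, d1, d2, d3, d4, mul_one_assoc' a1, mul_zero_assoc' a2, mul_zero_assoc' a3, mul_one_assoc' a4, mul_one_assoc' b1, mul_zero_assoc'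 b2, mul_zero_assoc' b3, mul_one_assoc' b4, mul_one_assoc' c1, mul_zero_assoc' c2, mul_zero_assoc' c3, mul_one_assoc' c4, mul_one_assoc' d1, mul_zero_assoc' d2, mul_zero_assoc' d3, mul_one_assoc' d4, tMul, tMul', mul_one_assoc' tMul, mul_one_assoc' tMul', tT, tTi, hSr, hSdsvd, and_true, true_and, ← fromRows_fromCols_eq_fromBlocks, one_sum_expand, zero_rows_expand, zero_cols_expand, fromRows_add, fromCols_add, smul_fromRows, smul_fromCols, fromRows_neg, fromCols_neg, Matrix.transpose_neg, Matrix.neg_mul, Matrix.mul_neg, neg_mul, mul_neg, neg_neg, neg_zero, add_neg_cancel, neg_add_cancel, keyA, keyB, kW]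
    constructor
    · rw [← smul_add, ← Matrix.add_kronecker, c5]
    · rw [← Matrix.kronecker_add, a5]
  · simp only [Uh, Uc, Vh, Vc, Sigh, S, transpose_fromCols, transpose_fromRows, Matrix.transpose_mul, Matrix.transpose_smul, Matrix.transpose_one, Matrix.transpose_zero, Matrix.diagonal_transpose, kt, fromRows_mul_fromCols, fromCols_mul_fromRows, Matrix.mul_fromCols, Matrix.fromRows_mul, fromCols_mul_fromBlocks, fromBlocks_mul_fromRows, Matrix.fromBlocks_multiply, Matrix.fromBlocks_add, Matrix.fromBlocks_transpose, fromCols_fromRows_comm, fromCols_ext_iff, fromRows_ext_iff, Matrix.mul_assoc, kmul_assoc, ← Matrix.mul_kronecker_mul, Matrix.smul_mul, Matrix.mul_smul, smul_smul, neg_smul, smul_neg, neg_neg, Matrix.zero_mul, Matrix.mul_zero, Matrix.one_mul, Matrix.mul_one, add_zero, zero_add, smul_zero, Matrix.zero_kronecker, Matrix.kronecker_zero, Matrix.one_kronecker_one, Matrix.smul_kronecker, Matrix.kronecker_smul, a1, a2, a3, a4, b1, b2, b3, b4, c1, c2, c3, c4, d1, d2, d3, d4, mul_one_assoc' a1, mul_zero_assoc'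 a2, mul_zero_assoc' a3, mul_one_assoc' a4, mul_one_assoc' b1, mul_zero_assoc' b2, mul_zero_assoc' b3, mul_one_assoc' b4, mul_one_assoc' c1, mul_zero_assoc' c2, mul_zero_assoc' c3, mul_one_assoc' c4, mul_one_assoc' d1, mul_zero_assoc' d2, mul_zero_assoc' d3, mul_one_assoc' d4, tMul, tMul', mul_one_assoc' tMul, mul_one_assoc' tMul', tT, tTi, hSr, hSdsvd, and_true, true_and, ← fromRows_fromCols_eq_fromBlocks, one_sum_expand, zero_rows_expand, zero_cols_expand, fromRows_add, fromCols_add, smul_fromRows, smul_fromCols, fromRows_neg, fromCols_neg, Matrix.transpose_neg, Matrix.neg_mul, Matrix.mul_neg, neg_mul, mul_neg, neg_neg, neg_zero, add_neg_cancel, neg_add_cancel, keyA, keyB, kW]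
  · simp only [Uh, Uc, Vh, Vc, Sigh, S, transpose_fromCols, transpose_fromRows, Matrix.transpose_mul, Matrix.transpose_smul, Matrix.transpose_one, Matrix.transpose_zero, Matrix.diagonal_transpose, kt, fromRows_mul_fromCols, fromCols_mul_fromRows, Matrix.mul_fromCols, Matrix.fromRows_mul, fromCols_mul_fromBlocks, fromBlocks_mul_fromRows, Matrix.fromBlocks_multiply, Matrix.fromBlocks_add, Matrix.fromBlocks_transpose, fromCols_fromRows_comm, fromCols_ext_iff, fromRows_ext_iff, Matrix.mul_assoc, kmul_assoc, ← Matrix.mul_kronecker_mul, Matrix.smul_mul, Matrix.mul_smul, smul_smul, neg_smul, smul_neg, neg_neg, Matrix.zero_mul, Matrix.mul_zero, Matrix.one_mul, Matrix.mul_one, add_zero, zero_add, smul_zero, Matrix.zero_kronecker, Matrix.kronecker_zero, Matrix.one_kronecker_one, Matrix.smul_kronecker, Matrix.kronecker_smul, a1, a2, a3, a4, b1, b2, b3, b4, c1, c2, c3, c4, d1, d2, d3, d4, mul_one_assoc' a1, mul_zero_assoc' a2, mul_zero_assoc' a3, mul_one_assoc' a4, mul_one_assoc' b1, mul_zero_assoc'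 b2, mul_zero_assoc' b3, mul_one_assoc' b4, mul_one_assoc' c1, mul_zero_assoc' c2, mul_zero_assoc' c3, mul_one_assoc' c4, mul_one_assoc' d1, mul_zero_assoc' d2, mul_zero_assoc' d3, mul_one_assoc' d4, tMul, tMul', mul_one_assoc' tMul, mul_one_assoc' tMul', tT, tTi, hSr, hSdsvd, and_true, true_and, ← fromRows_fromCols_eq_fromBlocks, one_sum_expand, zero_rows_expand, zero_cols_expand, fromRows_add, fromCols_add, smul_fromRows, smul_fromCols, fromRows_neg, fromCols_neg, Matrix.transpose_neg, Matrix.neg_mul, Matrix.mul_neg, neg_mul, mul_neg, neg_neg, neg_zero, add_neg_cancel, neg_add_cancel, keyA, keyB, kW]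
end
end

section
/- Let γ ∈ ℝ, n ≥ 1, m, p ≥ 1, b₁, b₂ ∈ {0,1}. Let S_r be an m × p real matrix with an SVD of rank q_r given by (Û_r, Σ̂_r, V̂_r, Ŭ_r, V̆_r), and let S_d = S_d(n; b₁, b₂) with an SVD of rank q_d given by (Û_d, Σ̂_d, V̂_d, Ŭ_d, V̆_d). Let Σ̃ be the (q_d q_r) × (q_d q_r) positive diagonal matrix with Σ̃² = Σ̂_d² ⊗ I_{q_r} + I_{q_d} ⊗ γ²Σ̂_r², and define Û = [Û_d ⊗ Û_r, Û_d ⊗ Ŭ_r, Ŭ_d ⊗ Û_r], Σ̂ = blockdiag(Σ̃, Σ̂_d ⊗ I_{m−q_r}, γ I_{n−q_d} ⊗ Σ̂_r), and V̂ = [[γ(Û_d ⊗ V̂_rΣ̂_r)Σ̃⁻¹, 0, Ŭ_d ⊗ V̂_r], [(V̂_dΣ̂_d ⊗ Û_r)Σ̃⁻¹, V̂_d ⊗ Ŭ_r, 0]] (top block row with np rows, bottom with (n+1)m rows). Then the reconstruction identity Û Σ̂ V̂ᵀ = [γ I_n ⊗ S_r, S_d ⊗ I_m] holds. -/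
open Matrix
open scoped Kronecker Matrix

noncomputable section

/-- the reconstruction identity `Û Σ̂ V̂ᵀ = [γ I_n ⊗ S_r, S_d ⊗ I_m]`
for every `γ ∈ ℝ`. -/
theorem stmt1
    (γ : ℝ)
    (n m p : ℕ) (hn : 1 ≤ n) (hm : 1 ≤ m) (hp : 1 ≤ p)
    (b₁ b₂ : ℝ) (hb₁ : b₁ = 0 ∨ b₁ = 1) (hb₂ : b₂ = 0 ∨ b₂ = 1)
    (Sr : Matrix (Fin m) (Fin p) ℝ)
    (qr : ℕ) (Uhr : Matrix (Fin m) (Fin qr) ℝ) (σr : Fin qr → ℝ)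
    (Vhr : Matrix (Fin p) (Fin qr) ℝ)
    (Ucr : Matrix (Fin m) (Fin (m - qr)) ℝ) (Vcr : Matrix (Fin p) (Fin (p - qr)) ℝ)
    (hσr : ∀ i, 0 < σr i)
    (hUr : (fromCols Uhr Ucr)ᵀ * fromCols Uhr Ucr = 1 ∧
           fromCols Uhr Ucr * (fromCols Uhr Ucr)ᵀ = 1)
    (hVr : (fromCols Vhr Vcr)ᵀ * fromCols Vhr Vcr = 1 ∧
           fromCols Vhr Vcr * (fromCols Vhr Vcr)ᵀ = 1)
    (hSr : Sr = Uhr * Matrix.diagonal σr * Vhrᵀ)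
    (qd : ℕ) (Uhd : Matrix (Fin n) (Fin qd) ℝ) (σd : Fin qd → ℝ)
    (Vhd : Matrix (Fin (n+1)) (Fin qd) ℝ)
    (Ucd : Matrix (Fin n) (Fin (n - qd)) ℝ)
    (Vcd : Matrix (Fin (n+1)) (Fin (n + 1 - qd)) ℝ)
    (hσd : ∀ i, 0 < σd i)
    (hUd : (fromCols Uhd Ucd)ᵀ * fromCols Uhd Ucd = 1 ∧
           fromCols Uhd Ucd * (fromCols Uhd Ucd)ᵀ = 1)
    (hVd : (fromCols Vhd Vcd)ᵀ * fromCols Vhd Vcd = 1 ∧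
           fromCols Vhd Vcd * (fromCols Vhd Vcd)ᵀ = 1)
    (hSdsvd : Sd n b₁ b₂ = Uhd * Matrix.diagonal σd * Vhdᵀ)
    -- `Σ̃` is the positive diagonal matrix with `Σ̃² = Σ̂_d² ⊗ I_{q_r} + I_{q_d} ⊗ γ²Σ̂_r²`
    (Sigt : Matrix (Fin qd × Fin qr) (Fin qd × Fin qr) ℝ)
    (hSigtdiag : ∀ i j, i ≠ j → Sigt i j = 0)
    (hSigtpos : ∀ i, 0 < Sigt i i)
    (hSigtsq : Sigt * Sigt =
      (Matrix.diagonal σd * Matrix.diagonal σd) ⊗ₖ (1 : Matrix (Fin qr) (Fin qr) ℝ) +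
      (1 : Matrix (Fin qd) (Fin qd) ℝ) ⊗ₖ (γ ^ 2 • (Matrix.diagonal σr * Matrix.diagonal σr))) :
    let S : Matrix (Fin n × Fin m) ((Fin n × Fin p) ⊕ (Fin (n+1) × Fin m)) ℝ :=
      fromCols ((γ • (1 : Matrix (Fin n) (Fin n) ℝ)) ⊗ₖ Sr)
        (Sd n b₁ b₂ ⊗ₖ (1 : Matrix (Fin m) (Fin m) ℝ))
    let Uh : Matrix (Fin n × Fin m)
        ((Fin qd × Fin qr) ⊕ ((Fin qd × Fin (m - qr)) ⊕ (Fin (n - qd) × Fin qr))) ℝ :=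
      fromCols (Uhd ⊗ₖ Uhr) (fromCols (Uhd ⊗ₖ Ucr) (Ucd ⊗ₖ Uhr))
    let Sigh : Matrix
        ((Fin qd × Fin qr) ⊕ ((Fin qd × Fin (m - qr)) ⊕ (Fin (n - qd) × Fin qr)))
        ((Fin qd × Fin qr) ⊕ ((Fin qd × Fin (m - qr)) ⊕ (Fin (n - qd) × Fin qr))) ℝ :=
      fromBlocks Sigt 0 0
        (fromBlocks (Matrix.diagonal σd ⊗ₖ (1 : Matrix (Fin (m - qr)) (Fin (m - qr)) ℝ)) 0 0
          (γ • ((1 : Matrix (Fin (n - qd)) (Fin (n - qd)) ℝ) ⊗ₖ Matrix.diagonal σr)))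
    let Vh : Matrix ((Fin n × Fin p) ⊕ (Fin (n+1) × Fin m))
        ((Fin qd × Fin qr) ⊕ ((Fin qd × Fin (m - qr)) ⊕ (Fin (n - qd) × Fin qr))) ℝ :=
      fromRows
        (fromCols (γ • ((Uhd ⊗ₖ (Vhr * Matrix.diagonal σr)) * Sigt⁻¹))
          (fromCols 0 (Ucd ⊗ₖ Vhr)))
        (fromCols (((Vhd * Matrix.diagonal σd) ⊗ₖ Uhr) * Sigt⁻¹)
          (fromCols (Vhd ⊗ₖ Ucr) 0))
    Uh * Sigh * Vhᵀ = S := by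
  intro S Uh Sigh Vh
  obtain ⟨hUr1, hUr2⟩ := hUr
  obtain ⟨hUd1, hUd2⟩ := hUd
  have hUr' : Uhr * Uhrᵀ + Ucr * Ucrᵀ = 1 := by
    rwa [Matrix.transpose_fromCols, Matrix.fromCols_mul_fromRows] at hUr2
  have hUd' : Uhd * Uhdᵀ + Ucd * Ucdᵀ = 1 := by
    rwa [Matrix.transpose_fromCols, Matrix.fromCols_mul_fromRows] at hUd2
  have hd : Sigt = Matrix.diagonal (fun i => Sigt i i) := by
    ext i j
    rcases eq_or_ne i j with rfl | h
    · simp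
    · simp [Matrix.diagonal_apply_ne _ h, hSigtdiag i j h]
  have hdet : IsUnit Sigt.det := by
    rw [hd, Matrix.det_diagonal]
    exact isUnit_iff_ne_zero.mpr (Finset.prod_pos (fun i _ => hSigtpos i)).ne'
  have hSigT : Sigtᵀ = Sigt := by rw [hd, Matrix.diagonal_transpose]
  have hSigiT : Sigt⁻¹ᵀ = Sigt⁻¹ := by rw [Matrix.transpose_nonsing_inv, hSigT]
  show Uh * Sigh * Vhᵀ = S
  unfold Uh Sigh Vh S
  rw [Matrix.transpose_fromRows, Matrix.fromCols_mul_fromBlocks]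
  simp only [Matrix.fromCols_mul_fromBlocks, Matrix.mul_fromCols,
    Matrix.transpose_fromCols, Matrix.transpose_fromRows,
    Matrix.fromCols_mul_fromRows,
    Matrix.mul_zero, Matrix.zero_mul, add_zero, zero_add, Matrix.transpose_zero]
  rw [Matrix.fromCols_ext_iff]
  constructor
  · simp only [Matrix.transpose_smul, Matrix.transpose_mul, hSigiT,
      ← Matrix.kroneckerMap_transpose, Matrix.diagonal_transpose,
      Matrix.mul_smul, Matrix.smul_mul, Matrix.mul_assoc,
      Matrix.mul_nonsing_inv_cancel_left _ _ hdet,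
      ← Matrix.mul_kronecker_mul, Matrix.mul_one, Matrix.one_mul,
      hSr, Matrix.smul_kronecker, ← smul_add, ← Matrix.add_kronecker, hUd']
  · simp only [Matrix.transpose_smul, Matrix.transpose_mul, hSigiT,
      ← Matrix.kroneckerMap_transpose, Matrix.diagonal_transpose,
      Matrix.mul_smul, Matrix.smul_mul, Matrix.mul_assoc,
      Matrix.mul_nonsing_inv_cancel_left _ _ hdet,
      ← Matrix.mul_kronecker_mul, Matrix.mul_one, Matrix.one_mul,
      hSdsvd, ← Matrix.kronecker_add, hUr']
end
end

section
/- Let n₁, n₂ ≥ 1, n = n₁ + n₂, b₁, b₂ ∈ {0,1}, m ≥ 1, M₊ ⊆ {1,…,m}, and T = S_d S_dᵀ ⊗ D₊ + (S_d S_dᵀ − H Hᵀ) ⊗ D₋ with S_d = S_d(n; b₁, b₂). Let u ∈ ℝⁿ be a unit vector and σ ≥ 0 with S_d S_dᵀ u = σ² u. Then P = u uᵀ ⊗ D₊ satisfies Pᵀ = P, P² = P, T P = P T = σ² P, and trace(P) = |M₊|. In particular P is an orthogonal projection onto a σ²-eigenspace of T of dimension |M₊|. -/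
open Matrix
open scoped Kronecker Matrix

noncomputable section

/-- `P = uuᵀ ⊗ D₊` is an orthogonal eigenprojection of `T` of rank `|M₊|`. -/
theorem stmt6 (n₁ n₂ m : ℕ) (h₁ : 1 ≤ n₁) (h₂ : 1 ≤ n₂) (hm : 1 ≤ m)
    (b₁ b₂ : ℝ) (hb₁ : b₁ = 0 ∨ b₁ = 1) (hb₂ : b₂ = 0 ∨ b₂ = 1)
    (Mp : Finset (Fin m))
    (u : Fin (n₁ + n₂) → ℝ) (hu : ∑ i, u i ^ 2 = 1)
    (σ : ℝ) (hσ : 0 ≤ σ)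
    (heig : (Sd (n₁ + n₂) b₁ b₂ * (Sd (n₁ + n₂) b₁ b₂)ᵀ) *ᵥ u = σ ^ 2 • u) :
    let Dp : Matrix (Fin m) (Fin m) ℝ := Matrix.diagonal fun i => if i ∈ Mp then 1 else 0
    let Dm : Matrix (Fin m) (Fin m) ℝ := Matrix.diagonal fun i => if i ∈ Mp then 0 else 1
    let H : Matrix (Fin (n₁ + n₂)) (Fin (n₁ + n₂ + 1)) ℝ :=
      Matrix.of fun i j =>
        if (i : ℕ) = n₁ - 1 ∧ (j : ℕ) = n₁ then -1
        else if (i : ℕ) = n₁ ∧ (j : ℕ) = n₁ then 1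
        else 0
    let T : Matrix (Fin (n₁ + n₂) × Fin m) (Fin (n₁ + n₂) × Fin m) ℝ :=
      (Sd (n₁ + n₂) b₁ b₂ * (Sd (n₁ + n₂) b₁ b₂)ᵀ) ⊗ₖ Dp +
      (Sd (n₁ + n₂) b₁ b₂ * (Sd (n₁ + n₂) b₁ b₂)ᵀ - H * Hᵀ) ⊗ₖ Dm
    let P : Matrix (Fin (n₁ + n₂) × Fin m) (Fin (n₁ + n₂) × Fin m) ℝ :=
      vecMulVec u u ⊗ₖ Dp
    Pᵀ = P ∧ P * P = P ∧ T * P = σ ^ 2 • P ∧ P * T = σ ^ 2 • P ∧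
      P.trace = (Mp.card : ℝ) := by
  intro Dp Dm H T P
  set A := Sd (n₁ + n₂) b₁ b₂ * (Sd (n₁ + n₂) b₁ b₂)ᵀ with hA
  have hAsym : Aᵀ = A := by
    rw [hA, transpose_mul, transpose_transpose]
  have huuT : (vecMulVec u u)ᵀ = vecMulVec u u := by
    ext i j; simp [vecMulVec_apply, mul_comm]
  have hDpDp : Dp * Dp = Dp := by
    show Matrix.diagonal _ * Matrix.diagonal _ = Matrix.diagonal _
    rw [diagonal_mul_diagonal]
    exact congrArg Matrix.diagonal (funext fun i => by by_cases h : i ∈ Mp <;> simp [h])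
  have hDmDp : Dm * Dp = 0 := by
    show Matrix.diagonal _ * Matrix.diagonal _ = _
    rw [diagonal_mul_diagonal]
    ext i j
    by_cases h : i ∈ Mp <;> by_cases hij : i = j <;> simp [h, hij, diagonal]
  have hDpDm : Dp * Dm = 0 := by
    show Matrix.diagonal _ * Matrix.diagonal _ = _
    rw [diagonal_mul_diagonal]
    ext i j
    by_cases h : i ∈ Mp <;> by_cases hij : i = j <;> simp [h, hij, diagonal]
  have huu : vecMulVec u u * vecMulVec u u = vecMulVec u u := by
    ext i j
    simp only [mul_apply, vecMulVec_apply]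
    calc ∑ k, u i * u k * (u k * u j) = (∑ k, u k ^ 2) * (u i * u j) := by
          rw [Finset.sum_mul]; congr 1; ext k; ring
      _ = u i * u j := by rw [hu, one_mul]
  have hAuu : A * vecMulVec u u = σ ^ 2 • vecMulVec u u := by
    ext i j
    simp only [mul_apply, vecMulVec_apply, Matrix.smul_apply, smul_eq_mul]
    calc ∑ k, A i k * (u k * u j) = (∑ k, A i k * u k) * u j := by
          rw [Finset.sum_mul]; congr 1; ext k; ring
      _ = (A *ᵥ u) i * u j := rfl
      _ = σ ^ 2 * (u i * u j) := by rw [heig]; simp [mul_assoc]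
  have huuA : vecMulVec u u * A = σ ^ 2 • vecMulVec u u := by
    have := congrArg Matrix.transpose hAuu
    rwa [transpose_mul, hAsym, Matrix.transpose_smul, huuT] at this
  refine ⟨?_, ?_, ?_, ?_, ?_⟩
  · show (vecMulVec u u ⊗ₖ Dp)ᵀ = _
    rw [← Matrix.kroneckerMap_transpose, huuT, Matrix.diagonal_transpose]
  · show (vecMulVec u u ⊗ₖ Dp) * (vecMulVec u u ⊗ₖ Dp) = _
    rw [← Matrix.mul_kronecker_mul, huu, hDpDp]
  · show (A ⊗ₖ Dp + (A - H * Hᵀ) ⊗ₖ Dm) * (vecMulVec u u ⊗ₖ Dp) = _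
    rw [add_mul, ← Matrix.mul_kronecker_mul, ← Matrix.mul_kronecker_mul, hDpDp, hDmDp,
      Matrix.kronecker_zero, add_zero, hAuu, Matrix.smul_kronecker]
  · show (vecMulVec u u ⊗ₖ Dp) * (A ⊗ₖ Dp + (A - H * Hᵀ) ⊗ₖ Dm) = _
    rw [mul_add, ← Matrix.mul_kronecker_mul, ← Matrix.mul_kronecker_mul, hDpDp, hDpDm,
      Matrix.kronecker_zero, add_zero, huuA, Matrix.smul_kronecker]
  · show (vecMulVec u u ⊗ₖ Dp).trace = _
    rw [Matrix.trace_kronecker]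
    have h1 : (vecMulVec u u).trace = 1 := by
      rw [Matrix.trace]
      simpa [Matrix.diag, vecMulVec_apply, sq] using hu
    have h2 : Dp.trace = (Mp.card : ℝ) := by
      show (Matrix.diagonal _).trace = _
      rw [Matrix.trace_diagonal]
      simp
    rw [h1, h2, one_mul]
end
end

section
/- Let n₁, n₂ ≥ 1, n = n₁ + n₂, b₁, b₂ ∈ {0,1}, m ≥ 1, M₊ ⊆ {1,…,m}, and T = S_d S_dᵀ ⊗ D₊ + (S_d S_dᵀ − H Hᵀ) ⊗ D₋ with S_d = S_d(n; b₁, b₂), S_{d₁} = S_d(n₁; b₁, 0), S_{d₂} = S_d(n₂; 0, b₂). Let u₁ ∈ ℝ^{n₁} and u₂ ∈ ℝ^{n₂} be unit vectors, α ∈ {1, −1}, C₁, C₂ ≥ 0 with C₁² + C₂² = 1, and set u = [C₁ u₁; α C₂ u₂] ∈ ℝⁿ. Suppose σ ≥ 0 satisfies S_d S_dᵀ u = σ² u, S_{d₁} S_{d₁}ᵀ u₁ = σ² u₁, and S_{d₂} S_{d₂}ᵀ u₂ = σ² u₂. Then P = u uᵀ ⊗ D₊ + blockdiag(u₁u₁ᵀ,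 0_{n₂×n₂}) ⊗ D₋ + blockdiag(0_{n₁×n₁}, u₂u₂ᵀ) ⊗ D₋ satisfies Pᵀ = P, P² = P, and T P = P T = σ² P; i.e., P is an orthogonal projection onto a σ²-eigenspace of T. -/
open Matrix
open scoped Kronecker Matrix

noncomputable section

lemma Sd_apply' (n : ℕ) (b₁ b₂ : ℝ) (i : Fin n) (k : Fin (n+1)) :
    Sd n b₁ b₂ i k =
      (if (k:ℕ) = (i:ℕ) then (if (i:ℕ) = 0 then b₁ else 1) else 0) +
      (if (k:ℕ) = (i:ℕ)+1 then (if (i:ℕ) = n-1 then -b₂ else -1) else 0) := by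
  simp only [Sd, of_apply]
  split_ifs <;> simp_all

lemma sum_ite_val' {N : ℕ} (p : ℕ) (hp : p < N) (g : Fin N → ℝ) :
    ∑ k : Fin N, (if (k:ℕ) = p then g k else 0) = g ⟨p, hp⟩ := by
  rw [Finset.sum_eq_single (⟨p, hp⟩ : Fin N)]
  · simp
  · intro k _ hk
    rw [if_neg]
    exact fun h => hk (Fin.ext h)
  · simp

lemma SdSdT_apply (n : ℕ) (b₁ b₂ : ℝ) (i j : Fin n) :
    (Sd n b₁ b₂ * (Sd n b₁ b₂)ᵀ) i j =
      (if (i:ℕ) = (j:ℕ) then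
        (if (i:ℕ) = 0 then b₁ else 1)^2 + (if (i:ℕ) = n-1 then -b₂ else -1)^2
      else if (i:ℕ)+1 = (j:ℕ) then
        (if (i:ℕ) = n-1 then -b₂ else -1) * (if (j:ℕ) = 0 then b₁ else 1)
      else if (j:ℕ)+1 = (i:ℕ) then
        (if (i:ℕ) = 0 then b₁ else 1) * (if (j:ℕ) = n-1 then -b₂ else -1)
      else 0) := by
  have hi := i.isLt
  have hj := j.isLt
  simp only [Matrix.mul_apply, transpose_apply, Sd_apply']
  simp only [add_mul, mul_add, Finset.sum_add_distrib, ite_mul, mul_ite, zero_mul, mul_zero,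
    if_neg, ite_self]
  rw [sum_ite_val' (j:ℕ) (by omega), sum_ite_val' ((j:ℕ)+1) (by omega)]
  rcases eq_or_ne (i:ℕ) (j:ℕ) with hij | hij
  · simp only [hij]
    simp
    split_ifs <;> ring1
  rcases eq_or_ne ((i:ℕ)+1) (j:ℕ) with hij1 | hij1
  · have c1 : ¬((j:ℕ) = (i:ℕ)) := by omega
    have c2 : (j:ℕ) = (i:ℕ)+1 := by omega
    have c3 : ¬((j:ℕ)+1 = (i:ℕ)) := by omega
    have c4 : ¬((j:ℕ)+1 = (i:ℕ)+1) := by omega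
    have c5 : ¬((i:ℕ) = (j:ℕ)) := hij
    have c6 : ¬((j:ℕ) = 0) := by omega
    have c7 : ¬((i:ℕ) = n-1) := by omega
    simp [c1, c2, c3, c4, c5, c6, c7]
    split_ifs <;> first | ring1 | (exfalso; omega)
  rcases eq_or_ne ((j:ℕ)+1) (i:ℕ) with hji1 | hji1
  · have c1 : ¬((j:ℕ) = (i:ℕ)) := by omega
    have c2 : ¬((j:ℕ) = (i:ℕ)+1) := by omega
    have c4 : ¬((j:ℕ)+1 = (i:ℕ)+1) := by omega
    have c6 : ¬((i:ℕ) = 0) := by omega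
    have c7 : ¬((j:ℕ) = n-1) := by omega
    simp [c1, c2, c4, hij, hij1, c6, c7, hji1]
  · have c1 : ¬((j:ℕ) = (i:ℕ)) := by omega
    have c2 : ¬((j:ℕ) = (i:ℕ)+1) := by omega
    have c3 : ¬((j:ℕ)+1 = (i:ℕ)) := hji1
    have c4 : ¬((j:ℕ)+1 = (i:ℕ)+1) := by omega
    simp [c1, c2, c3, c4, hij, hij1]

/-- The interface-cut matrix. -/
def Hm (n₁ n₂ : ℕ) : Matrix (Fin (n₁ + n₂)) (Fin (n₁ + n₂ + 1)) ℝ :=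
  Matrix.of fun i j =>
    if (i : ℕ) = n₁ - 1 ∧ (j : ℕ) = n₁ then -1
    else if (i : ℕ) = n₁ ∧ (j : ℕ) = n₁ then 1
    else 0

lemma Hm_apply (n₁ n₂ : ℕ) (i : Fin (n₁+n₂)) (k : Fin (n₁+n₂+1)) :
    Hm n₁ n₂ i k = if (k:ℕ) = n₁ then
      (if (i:ℕ) = n₁-1 then (-1:ℝ) else if (i:ℕ) = n₁ then 1 else 0) else 0 := by
  simp only [Hm, of_apply]
  split_ifs <;> first | rfl | (exfalso; omega)

lemma HHT_apply (n₁ n₂ : ℕ) (i j : Fin (n₁+n₂)) :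
    (Hm n₁ n₂ * (Hm n₁ n₂)ᵀ) i j =
      (if (i:ℕ) = n₁-1 then (-1:ℝ) else if (i:ℕ) = n₁ then 1 else 0) *
      (if (j:ℕ) = n₁-1 then (-1:ℝ) else if (j:ℕ) = n₁ then 1 else 0) := by
  simp only [Matrix.mul_apply, transpose_apply, Hm_apply, ite_mul, mul_ite, zero_mul, mul_zero,
    ite_self]
  rw [sum_ite_val' n₁ (by omega)]
  simp

lemma structB (n₁ n₂ : ℕ) (h₁ : 1 ≤ n₁) (h₂ : 1 ≤ n₂) (b₁ b₂ : ℝ) :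
    Sd (n₁+n₂) b₁ b₂ * (Sd (n₁+n₂) b₁ b₂)ᵀ - Hm n₁ n₂ * (Hm n₁ n₂)ᵀ =
    (fromBlocks (Sd n₁ b₁ 0 * (Sd n₁ b₁ 0)ᵀ) 0 0 (Sd n₂ 0 b₂ * (Sd n₂ 0 b₂)ᵀ)).submatrix
      finSumFinEquiv.symm finSumFinEquiv.symm := by
  ext i j
  obtain ⟨s, rfl⟩ := finSumFinEquiv.surjective i
  obtain ⟨t, rfl⟩ := finSumFinEquiv.surjective j
  rw [submatrix_apply, Equiv.symm_apply_apply, Equiv.symm_apply_apply, Matrix.sub_apply,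
    SdSdT_apply, HHT_apply]
  cases s with
  | inl a =>
    cases t with
    | inl a' =>
      have ha := a.isLt
      have ha' := a'.isLt
      rw [finSumFinEquiv_apply_left, finSumFinEquiv_apply_left, Fin.coe_castAdd, Fin.coe_castAdd]
      simp only [finSumFinEquiv_apply_left, fromBlocks_apply₁₁, Fin.coe_castAdd, SdSdT_apply]
      have c1 : ¬((a:ℕ) = n₁+n₂-1) := by omega
      have c2 : ¬((a':ℕ) = n₁+n₂-1) := by omega
      have c3 : ¬((a:ℕ) = n₁) := by omega
      have c4 : ¬((a':ℕ) = n₁) := by omega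
      simp only [c1, c2, c3, c4, if_false]
      split_ifs <;> first | ring1 | (exfalso; omega)
    | inr b =>
      have ha := a.isLt
      have hb := b.isLt
      rw [finSumFinEquiv_apply_left, finSumFinEquiv_apply_right, Fin.coe_castAdd, Fin.coe_natAdd]
      simp only [finSumFinEquiv_apply_left, finSumFinEquiv_apply_right, fromBlocks_apply₁₂,
        Fin.coe_castAdd, Fin.coe_natAdd, Matrix.zero_apply]
      have c1 : ¬((a:ℕ) = n₁ + (b:ℕ)) := by omega
      have c2 : ¬(n₁ + (b:ℕ) + 1 = (a:ℕ)) := by omega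
      have c3 : ¬((a:ℕ) = n₁+n₂-1) := by omega
      have c4 : ¬((a:ℕ) = n₁) := by omega
      have c5 : ¬(n₁ + (b:ℕ) = n₁-1) := by omega
      have c6 : ¬(n₁ + (b:ℕ) = 0) := by omega
      simp only [c1, c2, c3, c4, c5, c6, if_false]
      split_ifs <;> first | ring1 | (exfalso; omega)
  | inr b =>
    cases t with
    | inl a' =>
      have hb := b.isLt
      have ha' := a'.isLt
      rw [finSumFinEquiv_apply_left, finSumFinEquiv_apply_right, Fin.coe_castAdd, Fin.coe_natAdd]
      simp only [finSumFinEquiv_apply_left, finSumFinEquiv_apply_right, fromBlocks_apply₂₁,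
        Fin.coe_castAdd, Fin.coe_natAdd, Matrix.zero_apply]
      have c1 : ¬(n₁ + (b:ℕ) = (a':ℕ)) := by omega
      have c2 : ¬(n₁ + (b:ℕ) + 1 = (a':ℕ)) := by omega
      have c3 : ¬((a':ℕ) = n₁) := by omega
      have c4 : ¬(n₁ + (b:ℕ) = n₁-1) := by omega
      have c5 : ¬((a':ℕ) = n₁+n₂-1) := by omega
      simp only [c1, c2, c3, c4, c5, if_false]
      split_ifs <;> first | ring1 | (exfalso; omega)
    | inr b' =>
      have hb := b.isLt
      have hb' := b'.isLt
      rw [finSumFinEquiv_apply_right, finSumFinEquiv_apply_right, Fin.coe_natAdd, Fin.coe_natAdd]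
      simp only [finSumFinEquiv_apply_right, fromBlocks_apply₂₂, Fin.coe_natAdd, SdSdT_apply]
      have e1 : (n₁ + (b:ℕ) = n₁ + (b':ℕ)) ↔ ((b:ℕ) = (b':ℕ)) := by omega
      have e2 : (n₁ + (b:ℕ) + 1 = n₁ + (b':ℕ)) ↔ ((b:ℕ) + 1 = (b':ℕ)) := by omega
      have e3 : (n₁ + (b':ℕ) + 1 = n₁ + (b:ℕ)) ↔ ((b':ℕ) + 1 = (b:ℕ)) := by omega
      have e4 : (n₁ + (b:ℕ) = n₁+n₂-1) ↔ ((b:ℕ) = n₂-1) := by omega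
      have e5 : (n₁ + (b':ℕ) = n₁+n₂-1) ↔ ((b':ℕ) = n₂-1) := by omega
      have c1 : ¬(n₁ + (b:ℕ) = n₁-1) := by omega
      have c2 : ¬(n₁ + (b':ℕ) = n₁-1) := by omega
      have c3 : ¬(n₁ + (b:ℕ) = 0) := by omega
      have c4 : ¬(n₁ + (b':ℕ) = 0) := by omega
      have e6 : (n₁ + (b:ℕ) = n₁) ↔ ((b:ℕ) = 0) := by omega
      have e7 : (n₁ + (b':ℕ) = n₁) ↔ ((b':ℕ) = 0) := by omega
      simp only [e1, e2, e3, e4, e5, e6, e7, c1, c2, c3, c4, if_false]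
      split_ifs <;> first | ring1 | (exfalso; omega)

section vmv
variable {ι : Type*} [Fintype ι]

lemma vmv_mul_vmv (u v w x : ι → ℝ) :
    vecMulVec u v * vecMulVec w x = (v ⬝ᵥ w) • vecMulVec u x := by
  ext i j
  simp only [Matrix.mul_apply, vecMulVec_apply, Matrix.smul_apply, dotProduct, smul_eq_mul]
  rw [Finset.sum_mul]
  exact Finset.sum_congr rfl fun k _ => by ring

lemma mul_vmv (A : Matrix ι ι ℝ) (u v : ι → ℝ) :
    A * vecMulVec u v = vecMulVec (A *ᵥ u) v := by
  ext i j
  simp only [Matrix.mul_apply, vecMulVec_apply, mulVec, dotProduct, Finset.sum_mul]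
  exact Finset.sum_congr rfl fun k _ => by ring

lemma vmv_mul (A : Matrix ι ι ℝ) (u v : ι → ℝ) :
    vecMulVec u v * A = vecMulVec u (v ᵥ* A) := by
  ext i j
  simp only [Matrix.mul_apply, vecMulVec_apply, vecMul, dotProduct, Finset.mul_sum]
  exact Finset.sum_congr rfl fun k _ => by ring

lemma vmv_transpose (u v : ι → ℝ) : (vecMulVec u v)ᵀ = vecMulVec v u := by
  ext i j
  simp [vecMulVec_apply, mul_comm]

lemma smul_vmv (c : ℝ) (u v : ι → ℝ) : vecMulVec (c • u) v = c • vecMulVec u v := by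
  ext i j
  simp [vecMulVec_apply, mul_assoc]

lemma vmv_smul (c : ℝ) (u v : ι → ℝ) : vecMulVec u (c • v) = c • vecMulVec u v := by
  ext i j
  simp [vecMulVec_apply]
  ring

end vmv

/-- the combined eigenprojection
`P = uuᵀ ⊗ D₊ + blockdiag(u₁u₁ᵀ,0) ⊗ D₋ + blockdiag(0,u₂u₂ᵀ) ⊗ D₋`. -/
theorem stmt7 (n₁ n₂ m : ℕ) (h₁ : 1 ≤ n₁) (h₂ : 1 ≤ n₂) (hm : 1 ≤ m)
    (b₁ b₂ : ℝ) (hb₁ : b₁ = 0 ∨ b₁ = 1) (hb₂ : b₂ = 0 ∨ b₂ = 1)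
    (Mp : Finset (Fin m))
    (u₁ : Fin n₁ → ℝ) (u₂ : Fin n₂ → ℝ)
    (hu₁ : ∑ i, u₁ i ^ 2 = 1) (hu₂ : ∑ i, u₂ i ^ 2 = 1)
    (α : ℝ) (hα : α = 1 ∨ α = -1)
    (C₁ C₂ : ℝ) (hC₁ : 0 ≤ C₁) (hC₂ : 0 ≤ C₂) (hC : C₁ ^ 2 + C₂ ^ 2 = 1)
    (u : Fin (n₁ + n₂) → ℝ)
    (hu : u = fun i =>
      Sum.elim (fun a => C₁ * u₁ a) (fun b => α * (C₂ * u₂ b)) (finSumFinEquiv.symm i))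
    (σ : ℝ) (hσ : 0 ≤ σ)
    (heig : (Sd (n₁ + n₂) b₁ b₂ * (Sd (n₁ + n₂) b₁ b₂)ᵀ) *ᵥ u = σ ^ 2 • u)
    (heig1 : (Sd n₁ b₁ 0 * (Sd n₁ b₁ 0)ᵀ) *ᵥ u₁ = σ ^ 2 • u₁)
    (heig2 : (Sd n₂ 0 b₂ * (Sd n₂ 0 b₂)ᵀ) *ᵥ u₂ = σ ^ 2 • u₂) :
    let Dp : Matrix (Fin m) (Fin m) ℝ := Matrix.diagonal fun i => if i ∈ Mp then 1 else 0
    let Dm : Matrix (Fin m) (Fin m) ℝ := Matrix.diagonal fun i => if i ∈ Mp then 0 else 1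
    let H : Matrix (Fin (n₁ + n₂)) (Fin (n₁ + n₂ + 1)) ℝ :=
      Matrix.of fun i j =>
        if (i : ℕ) = n₁ - 1 ∧ (j : ℕ) = n₁ then -1
        else if (i : ℕ) = n₁ ∧ (j : ℕ) = n₁ then 1
        else 0
    let T : Matrix (Fin (n₁ + n₂) × Fin m) (Fin (n₁ + n₂) × Fin m) ℝ :=
      (Sd (n₁ + n₂) b₁ b₂ * (Sd (n₁ + n₂) b₁ b₂)ᵀ) ⊗ₖ Dp +
      (Sd (n₁ + n₂) b₁ b₂ * (Sd (n₁ + n₂) b₁ b₂)ᵀ - H * Hᵀ) ⊗ₖ Dm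
    let P : Matrix (Fin (n₁ + n₂) × Fin m) (Fin (n₁ + n₂) × Fin m) ℝ :=
      vecMulVec u u ⊗ₖ Dp +
      ((fromBlocks (vecMulVec u₁ u₁) (0 : Matrix (Fin n₁) (Fin n₂) ℝ)
          (0 : Matrix (Fin n₂) (Fin n₁) ℝ) (0 : Matrix (Fin n₂) (Fin n₂) ℝ)).submatrix
        finSumFinEquiv.symm finSumFinEquiv.symm) ⊗ₖ Dm +
      ((fromBlocks (0 : Matrix (Fin n₁) (Fin n₁) ℝ) (0 : Matrix (Fin n₁) (Fin n₂) ℝ)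
          (0 : Matrix (Fin n₂) (Fin n₁) ℝ) (vecMulVec u₂ u₂)).submatrix
        finSumFinEquiv.symm finSumFinEquiv.symm) ⊗ₖ Dm
    Pᵀ = P ∧ P * P = P ∧ T * P = σ ^ 2 • P ∧ P * T = σ ^ 2 • P := by
  intro Dp Dm H T P
  -- local vectors
  set w₁ : Fin (n₁+n₂) → ℝ := fun i => Sum.elim u₁ (0 : Fin n₂ → ℝ) (finSumFinEquiv.symm i) with hw₁def
  set w₂ : Fin (n₁+n₂) → ℝ := fun i => Sum.elim (0 : Fin n₁ → ℝ) u₂ (finSumFinEquiv.symm i) with hw₂def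
  set A : Matrix (Fin (n₁+n₂)) (Fin (n₁+n₂)) ℝ :=
    Sd (n₁+n₂) b₁ b₂ * (Sd (n₁+n₂) b₁ b₂)ᵀ with hAdef
  have hHm : H = Hm n₁ n₂ := rfl
  set B : Matrix (Fin (n₁+n₂)) (Fin (n₁+n₂)) ℝ := A - Hm n₁ n₂ * (Hm n₁ n₂)ᵀ with hBdef
  -- the two block projections are vecMulVec's
  have hQ₁ : (fromBlocks (vecMulVec u₁ u₁) (0 : Matrix (Fin n₁) (Fin n₂) ℝ)
          (0 : Matrix (Fin n₂) (Fin n₁) ℝ) (0 : Matrix (Fin n₂) (Fin n₂) ℝ)).submatrix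
        finSumFinEquiv.symm finSumFinEquiv.symm = vecMulVec w₁ w₁ := by
    ext i j
    obtain ⟨s, rfl⟩ := finSumFinEquiv.surjective i
    obtain ⟨t, rfl⟩ := finSumFinEquiv.surjective j
    rw [submatrix_apply, Equiv.symm_apply_apply, Equiv.symm_apply_apply]
    cases s <;> cases t <;>
      simp [hw₁def, vecMulVec_apply]
  have hQ₂ : (fromBlocks (0 : Matrix (Fin n₁) (Fin n₁) ℝ) (0 : Matrix (Fin n₁) (Fin n₂) ℝ)
          (0 : Matrix (Fin n₂) (Fin n₁) ℝ) (vecMulVec u₂ u₂)).submatrix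
        finSumFinEquiv.symm finSumFinEquiv.symm = vecMulVec w₂ w₂ := by
    ext i j
    obtain ⟨s, rfl⟩ := finSumFinEquiv.surjective i
    obtain ⟨t, rfl⟩ := finSumFinEquiv.surjective j
    rw [submatrix_apply, Equiv.symm_apply_apply, Equiv.symm_apply_apply]
    cases s <;> cases t <;>
      simp [hw₂def, vecMulVec_apply]
  have hP : P = vecMulVec u u ⊗ₖ Dp + vecMulVec w₁ w₁ ⊗ₖ Dm + vecMulVec w₂ w₂ ⊗ₖ Dm := by
    show _ = _
    rw [← hQ₁, ← hQ₂]
  have hT : T = A ⊗ₖ Dp + B ⊗ₖ Dm := rfl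
  -- symmetry facts
  have hAT : Aᵀ = A := by
    rw [hAdef, transpose_mul, transpose_transpose]
  have hBT : Bᵀ = B := by
    rw [hBdef, transpose_sub, hAT, transpose_mul, transpose_transpose]
  have hDpT : Dpᵀ = Dp := diagonal_transpose _
  have hDmT : Dmᵀ = Dm := diagonal_transpose _
  -- diagonal products
  have keyd : ∀ (f g h : Fin m → ℝ), (∀ i, f i * g i = h i) →
      Matrix.diagonal f * Matrix.diagonal g = Matrix.diagonal h := by
    intro f g h hf
    rw [diagonal_mul_diagonal]
    exact congrArg Matrix.diagonal (funext hf)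
  have hDp2 : Dp * Dp = Dp :=
    keyd _ _ _ fun i => by split_ifs <;> ring
  have hDm2 : Dm * Dm = Dm :=
    keyd _ _ _ fun i => by split_ifs <;> ring
  have hDpm : Dp * Dm = 0 := by
    rw [show (0 : Matrix (Fin m) (Fin m) ℝ) = Matrix.diagonal (fun _ => (0:ℝ)) from
      diagonal_zero.symm]
    exact keyd _ _ _ fun i => by split_ifs <;> ring
  have hDmp : Dm * Dp = 0 := by
    rw [show (0 : Matrix (Fin m) (Fin m) ℝ) = Matrix.diagonal (fun _ => (0:ℝ)) from
      diagonal_zero.symm]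
    exact keyd _ _ _ fun i => by split_ifs <;> ring
  -- dot products
  have hα2 : α^2 = 1 := by rcases hα with rfl | rfl <;> norm_num
  have huu : u ⬝ᵥ u = 1 := by
    subst hu
    simp only [dotProduct]
    rw [Equiv.sum_comp finSumFinEquiv.symm
      (fun s => (Sum.elim (fun a => C₁ * u₁ a) (fun b => α * (C₂ * u₂ b)) s) *
        (Sum.elim (fun a => C₁ * u₁ a) (fun b => α * (C₂ * u₂ b)) s)),
      Fintype.sum_sum_type]
    simp only [Sum.elim_inl, Sum.elim_inr]
    have e₁ : ∑ a, (C₁ * u₁ a) * (C₁ * u₁ a) = C₁^2 * ∑ a, u₁ a ^ 2 := by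
      rw [Finset.mul_sum]; exact Finset.sum_congr rfl fun a _ => by ring
    have e₂ : ∑ b, (α * (C₂ * u₂ b)) * (α * (C₂ * u₂ b)) = α^2 * C₂^2 * ∑ b, u₂ b ^ 2 := by
      rw [Finset.mul_sum]; exact Finset.sum_congr rfl fun b _ => by ring
    rw [e₁, e₂, hu₁, hu₂, hα2]
    linear_combination hC
  have hw11 : w₁ ⬝ᵥ w₁ = 1 := by
    simp only [dotProduct]
    rw [hw₁def]
    rw [Equiv.sum_comp finSumFinEquiv.symm
      (fun s => (Sum.elim u₁ (0 : Fin n₂ → ℝ) s) * (Sum.elim u₁ (0 : Fin n₂ → ℝ) s)), Fintype.sum_sum_type]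
    simp only [Sum.elim_inl, Sum.elim_inr, Pi.zero_apply, mul_zero, Finset.sum_const_zero,
      add_zero]
    rw [← hu₁]
    exact Finset.sum_congr rfl fun a _ => by ring
  have hw22 : w₂ ⬝ᵥ w₂ = 1 := by
    simp only [dotProduct]
    rw [hw₂def]
    rw [Equiv.sum_comp finSumFinEquiv.symm
      (fun s => (Sum.elim (0 : Fin n₁ → ℝ) u₂ s) * (Sum.elim (0 : Fin n₁ → ℝ) u₂ s)), Fintype.sum_sum_type]
    simp only [Sum.elim_inl, Sum.elim_inr, Pi.zero_apply, mul_zero, zero_mul,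
      Finset.sum_const_zero, zero_add]
    rw [← hu₂]
    exact Finset.sum_congr rfl fun a _ => by ring
  have hw12 : w₁ ⬝ᵥ w₂ = 0 := by
    simp only [dotProduct]
    rw [hw₁def, hw₂def]
    rw [Equiv.sum_comp finSumFinEquiv.symm
      (fun s => (Sum.elim u₁ (0 : Fin n₂ → ℝ) s) * (Sum.elim (0 : Fin n₁ → ℝ) u₂ s)), Fintype.sum_sum_type]
    simp
  have hw21 : w₂ ⬝ᵥ w₁ = 0 := by
    simp only [dotProduct]
    rw [hw₁def, hw₂def]
    rw [Equiv.sum_comp finSumFinEquiv.symm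
      (fun s => (Sum.elim (0 : Fin n₁ → ℝ) u₂ s) * (Sum.elim u₁ (0 : Fin n₂ → ℝ) s)), Fintype.sum_sum_type]
    simp
  -- eigen facts
  have hAu : A *ᵥ u = σ^2 • u := heig
  have hBw₁ : B *ᵥ w₁ = σ^2 • w₁ := by
    rw [hBdef, hAdef, structB n₁ n₂ h₁ h₂ b₁ b₂, submatrix_mulVec_equiv]
    have hcomp : w₁ ∘ ((finSumFinEquiv : Fin n₁ ⊕ Fin n₂ ≃ Fin (n₁+n₂)).symm).symm = Sum.elim u₁ (0 : Fin n₂ → ℝ) := by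
      funext s
      simp [hw₁def]
    rw [hcomp, fromBlocks_mulVec]
    funext i
    simp only [Function.comp_apply, Sum.elim_comp_inl, Sum.elim_comp_inr]
    rcases h : finSumFinEquiv.symm i with a | b
    · simp [h, heig1, hw₁def, Matrix.mulVec_zero, Matrix.zero_mulVec]
    · simp [h, hw₁def, Matrix.mulVec_zero, Matrix.zero_mulVec]
  have hBw₂ : B *ᵥ w₂ = σ^2 • w₂ := by
    rw [hBdef, hAdef, structB n₁ n₂ h₁ h₂ b₁ b₂, submatrix_mulVec_equiv]
    have hcomp : w₂ ∘ ((finSumFinEquiv : Fin n₁ ⊕ Fin n₂ ≃ Fin (n₁+n₂)).symm).symm = Sum.elim (0 : Fin n₁ → ℝ) u₂ := by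
      funext s
      simp [hw₂def]
    rw [hcomp, fromBlocks_mulVec]
    funext i
    simp only [Function.comp_apply, Sum.elim_comp_inl, Sum.elim_comp_inr]
    rcases h : finSumFinEquiv.symm i with a | b
    · simp [h, hw₂def, Matrix.mulVec_zero, Matrix.zero_mulVec]
    · simp [h, heig2, hw₂def, Matrix.mulVec_zero, Matrix.zero_mulVec]
  -- matrix product facts
  have M1 : vecMulVec u u * vecMulVec u u = vecMulVec u u := by
    rw [vmv_mul_vmv, huu, one_smul]
  have M2 : vecMulVec w₁ w₁ * vecMulVec w₁ w₁ = vecMulVec w₁ w₁ := by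
    rw [vmv_mul_vmv, hw11, one_smul]
  have M3 : vecMulVec w₂ w₂ * vecMulVec w₂ w₂ = vecMulVec w₂ w₂ := by
    rw [vmv_mul_vmv, hw22, one_smul]
  have M4 : vecMulVec w₁ w₁ * vecMulVec w₂ w₂ = 0 := by
    rw [vmv_mul_vmv, hw12, zero_smul]
  have M5 : vecMulVec w₂ w₂ * vecMulVec w₁ w₁ = 0 := by
    rw [vmv_mul_vmv, hw21, zero_smul]
  have E1 : A * vecMulVec u u = σ^2 • vecMulVec u u := by
    rw [mul_vmv, hAu, smul_vmv]
  have E2 : vecMulVec u u * A = σ^2 • vecMulVec u u := by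
    rw [vmv_mul, ← hAT, vecMul_transpose, hAu, vmv_smul]
  have E3 : B * vecMulVec w₁ w₁ = σ^2 • vecMulVec w₁ w₁ := by
    rw [mul_vmv, hBw₁, smul_vmv]
  have E4 : vecMulVec w₁ w₁ * B = σ^2 • vecMulVec w₁ w₁ := by
    rw [vmv_mul, ← hBT, vecMul_transpose, hBw₁, vmv_smul]
  have E5 : B * vecMulVec w₂ w₂ = σ^2 • vecMulVec w₂ w₂ := by
    rw [mul_vmv, hBw₂, smul_vmv]
  have E6 : vecMulVec w₂ w₂ * B = σ^2 • vecMulVec w₂ w₂ := by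
    rw [vmv_mul, ← hBT, vecMul_transpose, hBw₂, vmv_smul]
  refine ⟨?_, ?_, ?_, ?_⟩
  · rw [hP, transpose_add, transpose_add, ← kroneckerMap_transpose, ← kroneckerMap_transpose,
      ← kroneckerMap_transpose, vmv_transpose u u, vmv_transpose w₁ w₁, vmv_transpose w₂ w₂,
      hDpT, hDmT]
  · rw [hP]
    simp only [add_mul, mul_add, ← mul_kronecker_mul, M1, M2, M3, M4, M5, hDp2, hDm2, hDpm, hDmp,
      kronecker_zero, zero_kronecker, add_zero, zero_add]
  · rw [hP, hT]
    simp only [add_mul, mul_add, ← mul_kronecker_mul, E1, E3, E5, hDp2, hDm2, hDpm, hDmp,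
      kronecker_zero, zero_kronecker, add_zero, zero_add, smul_kronecker, smul_add]
  · rw [hP, hT]
    simp only [add_mul, mul_add, ← mul_kronecker_mul, E2, E4, E6, hDp2, hDm2, hDpm, hDmp,
      kronecker_zero, zero_kronecker, add_zero, zero_add, smul_kronecker, smul_add]
    abel
end
end

section
/- (Homogeneous Neumann case of the singular-value matching lemma.) Let n₁, n₂ ≥ 1, n = n₁ + n₂, C₁ = √(n₁/n), C₂ = √(n₂/n). Suppose j ∈ {1,…,n} and j₁ ∈ {1,…,n₁} satisfy (n−j)/n = (n₁−j₁)/n₁ (equivalently j₁ = n₁ j / n), and set j₂ = j − j₁. Then: (i) j₂ ∈ {1,…,n₂} and (n−j)/n = (n₂−j₂)/n₂, so 2 sin(π(n−j)/(2n)) = 2 sin(π(n₁−j₁)/(2n₁)) = 2 sin(π(n₂−j₂)/(2n₂)); (ii) for every i ∈ {1,…,n₁}: √(2/n)·cos(π(n−j)(2i−1)/(2n)) = C₁·√(2/n₁)·cos(π(n₁−j₁)(2i−1)/(2n₁)) and √(2/n)·sin(π(n−j)(i−1)/n) = C₁·√(2/n₁)·sin(π(n₁−j₁)(i−1)/n₁);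 (iii) for every ℓ ∈ {1,…,n₂}: √(2/n)·cos(π(n−j)(2(n₁+ℓ)−1)/(2n)) = (−1)^{n₁−j₁}·C₂·√(2/n₂)·cos(π(n₂−j₂)(2ℓ−1)/(2n₂)); (iv) for every ℓ ∈ {1,…,n₂+1}: √(2/n)·sin(π(n−j)(n₁+ℓ−1)/n) = (−1)^{n₁−j₁}·C₂·√(2/n₂)·sin(π(n₂−j₂)(ℓ−1)/n₂). -/
open Real

/-- singular-value matching lemma, homogeneous Neumann (zero-flux) case. -/
theorem stmt8 (n₁ n₂ : ℕ) (h₁ : 1 ≤ n₁) (h₂ : 1 ≤ n₂)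
    (j j₁ : ℕ) (hj : 1 ≤ j ∧ j ≤ n₁ + n₂) (hj₁ : 1 ≤ j₁ ∧ j₁ ≤ n₁)
    (hmatch : (((n₁ : ℝ) + n₂) - j) / ((n₁ : ℝ) + n₂) = ((n₁ : ℝ) - j₁) / n₁) :
    let n : ℕ := n₁ + n₂
    let C₁ : ℝ := Real.sqrt ((n₁ : ℝ) / n)
    let C₂ : ℝ := Real.sqrt ((n₂ : ℝ) / n)
    let j₂ : ℕ := j - j₁
    -- (i)
    (1 ≤ j₂ ∧ j₂ ≤ n₂ ∧
      ((n : ℝ) - j) / n = ((n₂ : ℝ) - j₂) / n₂ ∧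
      2 * Real.sin (π * ((n : ℝ) - j) / (2 * n)) =
        2 * Real.sin (π * ((n₁ : ℝ) - j₁) / (2 * n₁)) ∧
      2 * Real.sin (π * ((n : ℝ) - j) / (2 * n)) =
        2 * Real.sin (π * ((n₂ : ℝ) - j₂) / (2 * n₂))) ∧
    -- (ii)
    (∀ i : ℕ, 1 ≤ i → i ≤ n₁ →
      Real.sqrt (2 / n) * Real.cos (π * ((n : ℝ) - j) * (2 * (i : ℝ) - 1) / (2 * n)) =
        C₁ * (Real.sqrt (2 / n₁) *
          Real.cos (π * ((n₁ : ℝ) - j₁) * (2 * (i : ℝ) - 1) / (2 * n₁))) ∧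
      Real.sqrt (2 / n) * Real.sin (π * ((n : ℝ) - j) * ((i : ℝ) - 1) / n) =
        C₁ * (Real.sqrt (2 / n₁) *
          Real.sin (π * ((n₁ : ℝ) - j₁) * ((i : ℝ) - 1) / n₁))) ∧
    -- (iii)
    (∀ l : ℕ, 1 ≤ l → l ≤ n₂ →
      Real.sqrt (2 / n) *
          Real.cos (π * ((n : ℝ) - j) * (2 * ((n₁ : ℝ) + l) - 1) / (2 * n)) =
        (-1 : ℝ) ^ (n₁ - j₁) * (C₂ * (Real.sqrt (2 / n₂) *
          Real.cos (π * ((n₂ : ℝ) - j₂) * (2 * (l : ℝ) - 1) / (2 * n₂))))) ∧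
    -- (iv)
    (∀ l : ℕ, 1 ≤ l → l ≤ n₂ + 1 →
      Real.sqrt (2 / n) *
          Real.sin (π * ((n : ℝ) - j) * ((n₁ : ℝ) + l - 1) / n) =
        (-1 : ℝ) ^ (n₁ - j₁) * (C₂ * (Real.sqrt (2 / n₂) *
          Real.sin (π * ((n₂ : ℝ) - j₂) * ((l : ℝ) - 1) / n₂)))) := by
  obtain ⟨hja, hjb⟩ := hj
  obtain ⟨hj₁a, hj₁b⟩ := hj₁
  intro n C₁ C₂ j₂
  have hn1 : (0:ℝ) < n₁ := by exact_mod_cast h₁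
  have hn2 : (0:ℝ) < n₂ := by exact_mod_cast h₂
  have hN : (0:ℝ) < (n₁:ℝ) + n₂ := by linarith
  have hr : (((n₁:ℝ) + n₂) - j) * n₁ = ((n₁:ℝ) - j₁) * ((n₁:ℝ) + n₂) := by
    rw [div_eq_div_iff (by linarith) (by linarith)] at hmatch
    linarith
  have hjR : (j₁:ℝ) * ((n₁:ℝ) + n₂) = (n₁:ℝ) * j := by linear_combination hr
  have hnat : j₁ * (n₁ + n₂) = n₁ * j := by exact_mod_cast hjR
  have hle : j₁ ≤ j := by
    have h1 : j₁ * (n₁ + n₂) ≤ j * (n₁ + n₂) := by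
      rw [hnat]; exact Nat.mul_le_mul_right j (Nat.le_add_right n₁ n₂) |>.trans_eq (Nat.mul_comm _ _)
    exact Nat.le_of_mul_le_mul_right h1 (by omega)
  have hj₂R : (j₂:ℝ) = (j:ℝ) - (j₁:ℝ) := by
    show ((j - j₁ : ℕ) : ℝ) = _
    rw [Nat.cast_sub hle]
  have hr2 : (((n₁:ℝ) + n₂) - j) * n₂ = ((n₂:ℝ) - j₂) * ((n₁:ℝ) + n₂) := by
    rw [hj₂R]; linear_combination -hjR
  have hnat2 : j₂ * (n₁ + n₂) = n₂ * j := by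
    have : (j₂:ℝ) * ((n₁:ℝ) + n₂) = (n₂:ℝ) * j := by rw [hj₂R]; linear_combination -hjR
    exact_mod_cast this
  have hj₂1 : 1 ≤ j₂ := by
    by_contra h
    push_neg at h
    interval_cases j₂ <;> simp_all <;> omega
  have hj₂n : j₂ ≤ n₂ := by
    have h1 : j₂ * (n₁ + n₂) ≤ n₂ * (n₁ + n₂) := by
      rw [hnat2]; exact Nat.mul_le_mul_left n₂ hjb
    exact Nat.le_of_mul_le_mul_right h1 (by omega)
  -- m and its cast
  set m := n₁ - j₁ with hm_def
  have hmR : (m:ℝ) = (n₁:ℝ) - j₁ := by rw [hm_def, Nat.cast_sub hj₁b]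
  -- sqrt identities
  have hNcast : ((n:ℕ):ℝ) = (n₁:ℝ) + n₂ := by show ((n₁+n₂:ℕ):ℝ) = _; push_cast; ring
  have hC1 : C₁ * Real.sqrt (2 / (n₁:ℝ)) = Real.sqrt (2 / ((n₁:ℝ) + n₂)) := by
    show Real.sqrt ((n₁:ℝ) / n) * _ = _
    rw [hNcast, ← Real.sqrt_mul (by positivity)]
    rw [div_mul_div_comm]
    congr 1
    field_simp
  have hC2 : C₂ * Real.sqrt (2 / (n₂:ℝ)) = Real.sqrt (2 / ((n₁:ℝ) + n₂)) := by
    show Real.sqrt ((n₂:ℝ) / n) * _ = _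
    rw [hNcast, ← Real.sqrt_mul (by positivity)]
    rw [div_mul_div_comm]
    congr 1
    field_simp
  rw [hNcast]
  refine ⟨⟨hj₂1, hj₂n, ?_, ?_, ?_⟩, ?_, ?_, ?_⟩
  · rw [div_eq_div_iff (by linarith) (by linarith)]
    linarith [hr2]
  · congr 2
    rw [div_eq_div_iff (by positivity) (by positivity)]
    linear_combination (2*π)*hr
  · congr 2
    rw [div_eq_div_iff (by positivity) (by positivity)]
    linear_combination (2*π)*hr2
  · intro i _ _
    constructor
    · have hangle : π * ((n₁:ℝ) + n₂ - j) * (2 * (i:ℝ) - 1) / (2 * ((n₁:ℝ) + n₂)) =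
          π * ((n₁:ℝ) - j₁) * (2 * (i:ℝ) - 1) / (2 * n₁) := by
        rw [div_eq_div_iff (by positivity) (by positivity)]
        linear_combination (2*π*(2*(i:ℝ)-1))*hr
      rw [hangle, ← hC1]; ring
    · have hangle : π * ((n₁:ℝ) + n₂ - j) * ((i:ℝ) - 1) / ((n₁:ℝ) + n₂) =
          π * ((n₁:ℝ) - j₁) * ((i:ℝ) - 1) / n₁ := by
        rw [div_eq_div_iff (by positivity) (by positivity)]
        linear_combination (π*((i:ℝ)-1))*hr
      rw [hangle, ← hC1]; ring
  · intro l _ _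
    have hint1 : ((n₁:ℝ) + n₂ - j) * (2 * n₁) / (2 * ((n₁:ℝ) + n₂)) = (n₁:ℝ) - j₁ := by
      rw [div_eq_iff (by positivity)]
      linear_combination 2*hr
    have hint2 : π * ((n₁:ℝ) + n₂ - j) * (2 * (l:ℝ) - 1) / (2 * ((n₁:ℝ) + n₂)) =
        π * ((n₂:ℝ) - j₂) * (2 * (l:ℝ) - 1) / (2 * n₂) := by
      rw [div_eq_div_iff (by positivity) (by positivity)]
      linear_combination (2*π*(2*(l:ℝ)-1))*hr2
    have hangle : π * ((n₁:ℝ) + n₂ - j) * (2 * ((n₁:ℝ) + l) - 1) / (2 * ((n₁:ℝ) + n₂)) =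
        π * ((n₂:ℝ) - j₂) * (2 * (l:ℝ) - 1) / (2 * n₂) + (m:ℝ) * π := by
      rw [hmR, ← hint1, ← hint2]
      ring
    rw [hangle, Real.cos_add_nat_mul_pi, ← hC2]; ring
  · intro l _ _
    have hint1 : ((n₁:ℝ) + n₂ - j) * n₁ / ((n₁:ℝ) + n₂) = (n₁:ℝ) - j₁ := by
      rw [hr, mul_div_assoc, div_self (ne_of_gt hN), mul_one]
    have hint2 : π * ((n₁:ℝ) + n₂ - j) * ((l:ℝ) - 1) / ((n₁:ℝ) + n₂) =
        π * ((n₂:ℝ) - j₂) * ((l:ℝ) - 1) / n₂ := by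
      rw [div_eq_div_iff (by positivity) (by positivity)]
      linear_combination (π*((l:ℝ)-1))*hr2
    have hangle : π * ((n₁:ℝ) + n₂ - j) * ((n₁:ℝ) + l - 1) / ((n₁:ℝ) + n₂) =
        π * ((n₂:ℝ) - j₂) * ((l:ℝ) - 1) / n₂ + (m:ℝ) * π := by
      rw [hmR, ← hint1, ← hint2]
      ring
    rw [hangle, Real.sin_add_nat_mul_pi, ← hC2]; ring
end

section
/- (Mixed boundary case of the singular-value matching lemma.) Let n₁, n₂ ≥ 1, n = n₁ + n₂, C₁ = √(2n₁/(2n+1)), C₂ = √((2n₂+1)/(2n+1)). Suppose j ∈ {1,…,n} and j₁ ∈ {1,…,n₁} satisfy (n−j+1/2)/(2n+1) = (n₁−j₁)/(2n₁) (equivalently j₁ = 2n₁ j /(2n+1)), and set j₂ = j − j₁. Write θ = π(n−j+1/2)/(2n+1), θ₁ = π(n₁−j₁)/(2n₁), θ₂ = π(n₂−j₂+1/2)/(2n₂+1). Then: (i) j₂ ∈ {1,…,n₂} and θ = θ₂, so 2 sin θ = 2 sin θ₁ = 2 sin θ₂; (ii) for every i ∈ {1,…,n₁}: √(2/(n+1/2))·cos(θ(2i−1))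 = C₁·√(2/n₁)·cos(θ₁(2i−1)) and √(2/(n+1/2))·sin(2θ(i−1)) = C₁·√(2/n₁)·sin(2θ₁(i−1)); (iii) for every ℓ ∈ {1,…,n₂}: √(2/(n+1/2))·cos(θ(2(n₁+ℓ)−1)) = (−1)^{n₁−j₁}·C₂·√(2/(n₂+1/2))·cos(θ₂(2ℓ−1)); (iv) for every ℓ ∈ {1,…,n₂+1}: √(2/(n+1/2))·sin(2θ(n₁+ℓ−1)) = (−1)^{n₁−j₁}·C₂·√(2/(n₂+1/2))·sin(2θ₂(ℓ−1)). -/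
open Real

/-- singular-value matching lemma, Mixed boundary case. -/
theorem stmt9 (n₁ n₂ : ℕ) (h₁ : 1 ≤ n₁) (h₂ : 1 ≤ n₂)
    (j j₁ : ℕ) (hj : 1 ≤ j ∧ j ≤ n₁ + n₂) (hj₁ : 1 ≤ j₁ ∧ j₁ ≤ n₁)
    (hmatch : (((n₁ : ℝ) + n₂) - j + 1/2) / (2 * ((n₁ : ℝ) + n₂) + 1) =
      ((n₁ : ℝ) - j₁) / (2 * n₁)) :
    let n : ℕ := n₁ + n₂
    let C₁ : ℝ := Real.sqrt (2 * (n₁ : ℝ) / (2 * (n : ℝ) + 1))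
    let C₂ : ℝ := Real.sqrt ((2 * (n₂ : ℝ) + 1) / (2 * (n : ℝ) + 1))
    let j₂ : ℕ := j - j₁
    let θ : ℝ := π * ((n : ℝ) - j + 1/2) / (2 * (n : ℝ) + 1)
    let θ₁ : ℝ := π * ((n₁ : ℝ) - j₁) / (2 * (n₁ : ℝ))
    let θ₂ : ℝ := π * ((n₂ : ℝ) - j₂ + 1/2) / (2 * (n₂ : ℝ) + 1)
    -- (i)
    (1 ≤ j₂ ∧ j₂ ≤ n₂ ∧ θ = θ₂ ∧
      2 * Real.sin θ = 2 * Real.sin θ₁ ∧ 2 * Real.sin θ = 2 * Real.sin θ₂) ∧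
    -- (ii)
    (∀ i : ℕ, 1 ≤ i → i ≤ n₁ →
      Real.sqrt (2 / ((n : ℝ) + 1/2)) * Real.cos (θ * (2 * (i : ℝ) - 1)) =
        C₁ * (Real.sqrt (2 / (n₁ : ℝ)) * Real.cos (θ₁ * (2 * (i : ℝ) - 1))) ∧
      Real.sqrt (2 / ((n : ℝ) + 1/2)) * Real.sin (2 * θ * ((i : ℝ) - 1)) =
        C₁ * (Real.sqrt (2 / (n₁ : ℝ)) * Real.sin (2 * θ₁ * ((i : ℝ) - 1)))) ∧
    -- (iii)
    (∀ l : ℕ, 1 ≤ l → l ≤ n₂ →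
      Real.sqrt (2 / ((n : ℝ) + 1/2)) *
          Real.cos (θ * (2 * ((n₁ : ℝ) + l) - 1)) =
        (-1 : ℝ) ^ (n₁ - j₁) * (C₂ * (Real.sqrt (2 / ((n₂ : ℝ) + 1/2)) *
          Real.cos (θ₂ * (2 * (l : ℝ) - 1))))) ∧
    -- (iv)
    (∀ l : ℕ, 1 ≤ l → l ≤ n₂ + 1 →
      Real.sqrt (2 / ((n : ℝ) + 1/2)) *
          Real.sin (2 * θ * ((n₁ : ℝ) + l - 1)) =
        (-1 : ℝ) ^ (n₁ - j₁) * (C₂ * (Real.sqrt (2 / ((n₂ : ℝ) + 1/2)) *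
          Real.sin (2 * θ₂ * ((l : ℝ) - 1))))) := by
  obtain ⟨hj1, hjn⟩ := hj
  obtain ⟨hj₁1, hj₁n⟩ := hj₁
  intro n C₁ C₂ j₂ θ θ₁ θ₂
  have hn : (n : ℝ) = (n₁ : ℝ) + n₂ := by
    show ((n₁ + n₂ : ℕ) : ℝ) = _; push_cast; ring
  have hn₁pos : (0:ℝ) < n₁ := by exact_mod_cast Nat.pos_of_ne_zero (by omega)
  have hn₂pos : (0:ℝ) < n₂ := by exact_mod_cast Nat.pos_of_ne_zero (by omega)
  have hj₁r : (1:ℝ) ≤ j₁ := by exact_mod_cast hj₁1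
  have hjr : (j:ℝ) ≤ (n₁:ℝ) + n₂ := by exact_mod_cast hjn
  -- key integrality relation
  have hkey : (j₁ : ℝ) * (2 * ((n₁ : ℝ) + n₂) + 1) = 2 * n₁ * j := by
    have hd1 : (2 * ((n₁ : ℝ) + n₂) + 1) ≠ 0 := by positivity
    have hd2 : (2 * (n₁ : ℝ)) ≠ 0 := by positivity
    field_simp at hmatch
    linear_combination hmatch
  have hj₁ltj : j₁ < j := by
    have : (j₁ : ℝ) < j := by nlinarith
    exact_mod_cast this
  have hj₂cast : (j₂ : ℝ) = (j : ℝ) - j₁ := by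
    show ((j - j₁ : ℕ) : ℝ) = _
    rw [Nat.cast_sub hj₁ltj.le]
  have hkey2 : (j₂ : ℝ) * (2 * ((n₁ : ℝ) + n₂) + 1) = (j : ℝ) * (2 * n₂ + 1) := by
    rw [hj₂cast]; linear_combination -hkey
  have hj₂1 : 1 ≤ j₂ := by omega
  have hj₂n : j₂ ≤ n₂ := by
    by_contra h
    have h' : (n₂ : ℝ) + 1 ≤ j₂ := by exact_mod_cast Nat.succ_le_of_lt (by omega)
    nlinarith [hkey2]
  have hj₂r : (j₂ : ℝ) ≤ n₂ := by exact_mod_cast hj₂n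
  have hθθ₁ : θ = θ₁ := by
    show π * ((n : ℝ) - j + 1/2) / (2 * (n : ℝ) + 1) = π * ((n₁ : ℝ) - j₁) / (2 * (n₁ : ℝ))
    rw [hn, div_eq_div_iff (by positivity) (by positivity)]
    linear_combination π * hkey
  have hθθ₂ : θ = θ₂ := by
    show π * ((n : ℝ) - j + 1/2) / (2 * (n : ℝ) + 1)
        = π * ((n₂ : ℝ) - j₂ + 1/2) / (2 * (n₂ : ℝ) + 1)
    rw [hn, div_eq_div_iff (by positivity) (by positivity)]
    linear_combination π * hkey2
  have hC1 : C₁ * Real.sqrt (2 / (n₁ : ℝ)) = Real.sqrt (2 / ((n : ℝ) + 1/2)) := by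
    show Real.sqrt (2 * (n₁ : ℝ) / (2 * (n : ℝ) + 1)) * _ = _
    rw [← Real.sqrt_mul (by positivity)]
    congr 1
    rw [hn]; field_simp
  have hC2 : C₂ * Real.sqrt (2 / ((n₂ : ℝ) + 1/2)) = Real.sqrt (2 / ((n : ℝ) + 1/2)) := by
    show Real.sqrt ((2 * (n₂ : ℝ) + 1) / (2 * (n : ℝ) + 1)) * _ = _
    rw [← Real.sqrt_mul (by positivity)]
    congr 1
    rw [hn]; field_simp
  have hm : ((n₁ - j₁ : ℕ) : ℝ) = (n₁ : ℝ) - j₁ := by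
    rw [Nat.cast_sub hj₁n]
  have h2nθ : 2 * (n₁ : ℝ) * θ = ((n₁ - j₁ : ℕ) : ℝ) * π := by
    rw [hθθ₁, hm]
    show 2 * (n₁:ℝ) * (π * ((n₁ : ℝ) - j₁) / (2 * (n₁ : ℝ))) = _
    field_simp
  refine ⟨⟨hj₂1, hj₂n, hθθ₂, by rw [hθθ₁], by rw [hθθ₂]⟩, ?_, ?_, ?_⟩
  · intro i _ _
    constructor
    · rw [hθθ₁, ← mul_assoc, hC1]
    · rw [hθθ₁, ← mul_assoc, hC1]
  · intro l _ _
    have harg : θ * (2 * ((n₁ : ℝ) + l) - 1)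
        = θ₂ * (2 * (l : ℝ) - 1) + ((n₁ - j₁ : ℕ) : ℝ) * π := by
      rw [← hθθ₂]; linear_combination h2nθ
    rw [harg, Real.cos_add_nat_mul_pi, ← hC2]
    ring
  · intro l _ _
    have harg : 2 * θ * ((n₁ : ℝ) + l - 1)
        = 2 * θ₂ * ((l : ℝ) - 1) + ((n₁ - j₁ : ℕ) : ℝ) * π := by
      rw [← hθθ₂]; linear_combination h2nθ
    rw [harg, Real.sin_add_nat_mul_pi, ← hC2]
    ring
end

section
/- (Open boundary case of the singular-value matching lemma.) Let n₁, n₂ ≥ 1, n = n₁ + n₂, C₁ = √((2n₁+1)/(2n+2)), C₂ = √((2n₂+1)/(2n+2)). Suppose j ∈ {1,…,n} and j₁ ∈ {1,…,n₁} satisfy (n−j+1)/(2(n+1)) = (n₁−j₁+1/2)/(2n₁+1) (equivalently j₁ = j(2n₁+1)/(2(n+1))), and set j₂ = j − j₁. Write θ = π(n−j+1)/(2(n+1)), θ₁ = π(n₁−j₁+1/2)/(2n₁+1), θ₂ = π(n₂−j₂+1/2)/(2n₂+1). Then: (i) j₂ ∈ {1,…,n₂} and θ = θ₂, so 2 sin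 θ = 2 sin θ₁ = 2 sin θ₂; (ii) for every i ∈ {1,…,n₁}: √(2/(n+1))·sin(2θ i) = C₁·√(2/(n₁+1/2))·sin(2θ₁ i) and √(2/(n+1))·cos(θ(2i−1)) = C₁·√(2/(n₁+1/2))·cos(θ₁(2i−1)); (iii) for every ℓ ∈ {1,…,n₂}: √(2/(n+1))·sin(2θ(n₁+ℓ)) = (−1)^{n₁−j₁}·C₂·√(2/(n₂+1/2))·cos(θ₂(2ℓ−1)); (iv) for every ℓ ∈ {1,…,n₂+1}: √(2/(n+1))·cos(θ(2(n₁+ℓ)−1)) = −(−1)^{n₁−j₁}·C₂·√(2/(n₂+1/2))·sin(2θ₂(ℓ−1)). -/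
open Real

private lemma my_cos_nat_mul_pi (k : ℕ) : Real.cos (k * π) = (-1) ^ k := by
  simpa using Real.cos_nat_mul_pi_sub 0 k

private lemma my_sin_shift (k : ℕ) (x : ℝ) :
    Real.sin (k * π + (π / 2 + x)) = (-1) ^ k * Real.cos x := by
  simp [Real.sin_add, Real.cos_add, my_cos_nat_mul_pi, Real.sin_nat_mul_pi]

private lemma my_cos_shift (k : ℕ) (x : ℝ) :
    Real.cos (k * π + (π / 2 + x)) = -((-1) ^ k * Real.sin x) := by
  simp [Real.sin_add, Real.cos_add, my_cos_nat_mul_pi, Real.sin_nat_mul_pi]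

private lemma my_pre (m N : ℕ) : Real.sqrt ((2 * (m:ℝ) + 1) / (2 * (N:ℝ) + 2)) *
    Real.sqrt (2 / ((m:ℝ) + 1/2)) = Real.sqrt (2 / ((N:ℝ) + 1)) := by
  rw [← Real.sqrt_mul (by positivity)]
  congr 1
  rw [div_mul_div_comm, div_eq_div_iff (by positivity) (by positivity)]
  ring

set_option maxHeartbeats 1600000 in
/-- singular-value matching lemma, Open boundary case. -/
theorem stmt10 (n₁ n₂ : ℕ) (h₁ : 1 ≤ n₁) (h₂ : 1 ≤ n₂)
    (j j₁ : ℕ) (hj : 1 ≤ j ∧ j ≤ n₁ + n₂) (hj₁ : 1 ≤ j₁ ∧ j₁ ≤ n₁)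
    (hmatch : (((n₁ : ℝ) + n₂) - j + 1) / (2 * (((n₁ : ℝ) + n₂) + 1)) =
      ((n₁ : ℝ) - j₁ + 1/2) / (2 * (n₁ : ℝ) + 1)) :
    let n : ℕ := n₁ + n₂
    let C₁ : ℝ := Real.sqrt ((2 * (n₁ : ℝ) + 1) / (2 * (n : ℝ) + 2))
    let C₂ : ℝ := Real.sqrt ((2 * (n₂ : ℝ) + 1) / (2 * (n : ℝ) + 2))
    let j₂ : ℕ := j - j₁
    let θ : ℝ := π * ((n : ℝ) - j + 1) / (2 * ((n : ℝ) + 1))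
    let θ₁ : ℝ := π * ((n₁ : ℝ) - j₁ + 1/2) / (2 * (n₁ : ℝ) + 1)
    let θ₂ : ℝ := π * ((n₂ : ℝ) - j₂ + 1/2) / (2 * (n₂ : ℝ) + 1)
    -- (i)
    (1 ≤ j₂ ∧ j₂ ≤ n₂ ∧ θ = θ₂ ∧
      2 * Real.sin θ = 2 * Real.sin θ₁ ∧ 2 * Real.sin θ = 2 * Real.sin θ₂) ∧
    -- (ii)
    (∀ i : ℕ, 1 ≤ i → i ≤ n₁ →
      Real.sqrt (2 / ((n : ℝ) + 1)) * Real.sin (2 * θ * (i : ℝ)) =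
        C₁ * (Real.sqrt (2 / ((n₁ : ℝ) + 1/2)) * Real.sin (2 * θ₁ * (i : ℝ))) ∧
      Real.sqrt (2 / ((n : ℝ) + 1)) * Real.cos (θ * (2 * (i : ℝ) - 1)) =
        C₁ * (Real.sqrt (2 / ((n₁ : ℝ) + 1/2)) * Real.cos (θ₁ * (2 * (i : ℝ) - 1)))) ∧
    -- (iii)
    (∀ l : ℕ, 1 ≤ l → l ≤ n₂ →
      Real.sqrt (2 / ((n : ℝ) + 1)) * Real.sin (2 * θ * ((n₁ : ℝ) + l)) =
        (-1 : ℝ) ^ (n₁ - j₁) * (C₂ * (Real.sqrt (2 / ((n₂ : ℝ) + 1/2)) *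
          Real.cos (θ₂ * (2 * (l : ℝ) - 1))))) ∧
    -- (iv)
    (∀ l : ℕ, 1 ≤ l → l ≤ n₂ + 1 →
      Real.sqrt (2 / ((n : ℝ) + 1)) * Real.cos (θ * (2 * ((n₁ : ℝ) + l) - 1)) =
        -((-1 : ℝ) ^ (n₁ - j₁)) * (C₂ * (Real.sqrt (2 / ((n₂ : ℝ) + 1/2)) *
          Real.sin (2 * θ₂ * ((l : ℝ) - 1))))) := by
  intro n C₁ C₂ j₂ θ θ₁ θ₂
  obtain ⟨hj1, hjn⟩ := hj
  obtain ⟨hj₁1, hj₁n⟩ := hj₁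
  have hn : (n : ℝ) = (n₁ : ℝ) + n₂ := by simp [n]
  have hnum : (0:ℝ) < 2 * (n : ℝ) + 2 := by positivity
  have hd1 : (0:ℝ) < 2 * (n₁ : ℝ) + 1 := by positivity
  -- cross-multiplied match
  have hA : (j : ℝ) * (2 * n₁ + 1) = 2 * (j₁ : ℝ) * ((n : ℝ) + 1) := by
    have := hmatch
    rw [div_eq_div_iff (by positivity) (by positivity)] at this
    rw [hn]
    nlinarith [this]
  have hjR : (1:ℝ) ≤ j := by exact_mod_cast hj1
  have hjnR : (j:ℝ) ≤ n := by exact_mod_cast (by simpa [n] using hjn)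
  have hn₂R : (1:ℝ) ≤ n₂ := by exact_mod_cast h₂
  have hn₁R : (1:ℝ) ≤ n₁ := by exact_mod_cast h₁
  -- j₁ < j
  have hj₁lt : j₁ < j := by
    have : (j₁ : ℝ) < j := by nlinarith [hA, hn]
    exact_mod_cast this
  have hj₂cast : (j₂ : ℝ) = (j : ℝ) - j₁ := by
    have : j₁ ≤ j := le_of_lt hj₁lt
    simp [j₂, Nat.cast_sub this]
  have hj₂1 : 1 ≤ j₂ := by
    have := Nat.sub_pos_of_lt hj₁lt
    omega
  have hj₂n : j₂ ≤ n₂ := by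
    have h' : (j₂ : ℝ) < (n₂ : ℝ) + 1 := by
      rw [hj₂cast]
      nlinarith [hA, hn]
    have : (j₂ : ℝ) < ((n₂ + 1 : ℕ) : ℝ) := by push_cast; linarith
    have := Nat.cast_lt.mp this
    omega
  -- θ = θ₁
  have hθ1 : θ = θ₁ := by
    have h1 : ((n:ℝ) - j + 1) / (2 * ((n : ℝ) + 1)) = ((n₁:ℝ) - j₁ + 1/2) / (2 * n₁ + 1) := by
      rw [hn]; exact hmatch
    simp only [θ, θ₁]
    rw [mul_div_assoc, mul_div_assoc, h1]
  -- θ = θ₂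
  have hθ2 : θ = θ₂ := by
    have h2 : ((n:ℝ) - j + 1) / (2 * ((n : ℝ) + 1)) = ((n₂:ℝ) - j₂ + 1/2) / (2 * (n₂:ℝ) + 1) := by
      rw [div_eq_div_iff (by positivity) (by positivity), hj₂cast, hn]
      nlinarith [hA, hn]
    simp only [θ, θ₂]
    rw [mul_div_assoc, mul_div_assoc, h2]
  -- θ*(2n₁+1) = (n₁ - j₁)*π + π/2
  have hkey : θ * (2 * (n₁:ℝ) + 1) = ((n₁ - j₁ : ℕ) : ℝ) * π + π / 2 := by
    have hc : ((n₁ - j₁ : ℕ) : ℝ) = (n₁ : ℝ) - j₁ := by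
      rw [Nat.cast_sub hj₁n]
    rw [hθ1, hc]
    simp only [θ₁]
    field_simp
  have pre1 : C₁ * Real.sqrt (2 / ((n₁:ℝ) + 1/2)) = Real.sqrt (2 / ((n:ℝ) + 1)) := my_pre n₁ n
  have pre2 : C₂ * Real.sqrt (2 / ((n₂:ℝ) + 1/2)) = Real.sqrt (2 / ((n:ℝ) + 1)) := my_pre n₂ n
  refine ⟨⟨hj₂1, hj₂n, hθ2, by rw [hθ1], by rw [hθ2]⟩, ?_, ?_, ?_⟩
  · intro i _ _
    constructor
    · rw [hθ1, ← pre1]; ring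
    · rw [hθ1, ← pre1]; ring
  · intro l _ _
    have harg : 2 * θ * ((n₁:ℝ) + l) = ((n₁ - j₁ : ℕ) : ℝ) * π + (π/2 + θ₂ * (2 * (l:ℝ) - 1)) := by
      have : 2 * θ * ((n₁:ℝ) + l) = θ * (2 * (n₁:ℝ) + 1) + θ * (2 * (l:ℝ) - 1) := by ring
      rw [this, hkey, hθ2]; ring
    rw [harg, my_sin_shift, ← pre2]; ring
  · intro l _ _
    have harg : θ * (2 * ((n₁:ℝ) + l) - 1) =
        ((n₁ - j₁ : ℕ) : ℝ) * π + (π/2 + 2 * θ₂ * ((l:ℝ) - 1)) := by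
      have : θ * (2 * ((n₁:ℝ) + l) - 1) = θ * (2 * (n₁:ℝ) + 1) + θ * (2 * (l:ℝ) - 2) := by ring
      rw [this, hkey, hθ2]; ring
    rw [harg, my_cos_shift, ← pre2]; ring
end

section
/- (Explicit SVD of the diffusion matrix under zero-flux boundary conditions.) Let n ≥ 1 and let S_d = S_d(n; 0, 0). Define U ∈ ℝ^{n×n} by U_{i,j} = √(2/n)·cos(π(n−j)(2i−1)/(2n)) for 1 ≤ j ≤ n−1 and U_{i,n} = 1/√n; define V ∈ ℝ^{(n+1)×(n+1)} by V_{i,j} = −√(2/n)·sin(π(n−j)(i−1)/n) for 1 ≤ j ≤ n−1, with column n of V equal to the first standard basis vector e₁ and column n+1 equal to e_{n+1}; and let Σ be the n × (n+1) matrix with Σ_{j,j} = 2 sin(π(n−j)/(2n)) for 1 ≤ j ≤ n and all other entries 0. Then U and V are orthogonal matrices and S_d = U Σ Vᵀ. In particular S_d has rank n−1. -/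
open Matrix Real
open scoped Matrix

noncomputable section

open Finset

def Umat (n : ℕ) : Matrix (Fin n) (Fin n) ℝ := Matrix.of fun i j =>
      if (j : ℕ) = n - 1 then 1 / Real.sqrt n
      else Real.sqrt (2 / n) *
        Real.cos (π * ((n : ℝ) - (j : ℕ) - 1) * (2 * ((i : ℕ) : ℝ) + 1) / (2 * n))

def Vmat (n : ℕ) : Matrix (Fin (n+1)) (Fin (n+1)) ℝ := Matrix.of fun i j =>
      if (j : ℕ) = n - 1 then (if (i : ℕ) = 0 then 1 else 0)
      else if (j : ℕ) = n then (if (i : ℕ) = n then 1 else 0)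
      else -(Real.sqrt (2 / n) * Real.sin (π * ((n : ℝ) - (j : ℕ) - 1) * ((i : ℕ) : ℝ) / n))

def Sigmat (n : ℕ) : Matrix (Fin n) (Fin (n+1)) ℝ := Matrix.of fun i j =>
      if (i : ℕ) = (j : ℕ) then 2 * Real.sin (π * ((n : ℝ) - (i : ℕ) - 1) / (2 * n)) else 0

lemma tele_odd (θ : ℝ) (N : ℕ) :
    (∑ i ∈ Finset.range N, Real.cos ((2*(i:ℝ)+1)*θ)) * (2 * Real.sin θ)
      = Real.sin (2*(N:ℝ)*θ) := by
  have h : ∀ i : ℕ, Real.cos ((2*(i:ℝ)+1)*θ) * (2 * Real.sin θ)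
      = Real.sin (2*((i:ℝ)+1)*θ) - Real.sin (2*(i:ℝ)*θ) := by
    intro i
    have h1 : (2*((i:ℝ)+1)*θ) = (2*(i:ℝ)+1)*θ + θ := by ring
    have h2 : (2*(i:ℝ)*θ) = (2*(i:ℝ)+1)*θ - θ := by ring
    rw [h1, h2, Real.sin_add, Real.sin_sub]; ring
  rw [Finset.sum_mul]
  have := Finset.sum_range_sub (fun i : ℕ => Real.sin (2*(i:ℝ)*θ)) N
  simp only [h]
  rw [show (fun i : ℕ => Real.sin (2*((i:ℝ)+1)*θ) - Real.sin (2*(i:ℝ)*θ))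
    = (fun i : ℕ => Real.sin (2*((i+1:ℕ):ℝ)*θ) - Real.sin (2*(i:ℝ)*θ)) by push_cast; rfl] at *
  rw [this]
  norm_num

lemma tele_even (θ : ℝ) (N : ℕ) :
    (∑ i ∈ Finset.range N, Real.cos (2*(i:ℝ)*θ)) * (2 * Real.sin θ)
      = Real.sin ((2*(N:ℝ)-1)*θ) + Real.sin θ := by
  have h : ∀ i : ℕ, Real.cos (2*(i:ℝ)*θ) * (2 * Real.sin θ)
      = Real.sin ((2*((i:ℝ)+1)-1)*θ) - Real.sin ((2*(i:ℝ)-1)*θ) := by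
    intro i
    have h1 : ((2*((i:ℝ)+1)-1)*θ) = 2*(i:ℝ)*θ + θ := by ring
    have h2 : ((2*(i:ℝ)-1)*θ) = 2*(i:ℝ)*θ - θ := by ring
    rw [h1, h2, Real.sin_add, Real.sin_sub]; ring
  rw [Finset.sum_mul]
  simp only [h]
  have := Finset.sum_range_sub (fun i : ℕ => Real.sin ((2*(i:ℝ)-1)*θ)) N
  rw [show (fun i : ℕ => Real.sin ((2*((i:ℝ)+1)-1)*θ) - Real.sin ((2*(i:ℝ)-1)*θ))
    = (fun i : ℕ => Real.sin ((2*((i+1:ℕ):ℝ)-1)*θ) - Real.sin ((2*(i:ℝ)-1)*θ)) by push_cast; rfl]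
  rw [this]
  norm_num [Real.sin_sub]

-- sin(xπ/(2n)) ≠ 0 when 0 < |x| < 2n
lemma sin_ne (n : ℕ) (x : ℝ) (h0 : x ≠ 0) (h2 : |x| < 2*n) :
    Real.sin (x*π/(2*n)) ≠ 0 := by
  have hn : (0:ℝ) < n := by
    rcases Nat.eq_zero_or_pos n with h|h
    · exfalso; rw [h] at h2; simp at h2; exact h0 (abs_eq_zero.mp (le_antisymm (le_of_lt h2) (abs_nonneg x)) )
    · exact_mod_cast h
  rcases lt_or_gt_of_ne h0 with hneg|hpos
  · have : Real.sin (-x*π/(2*n)) > 0 := by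
      apply Real.sin_pos_of_pos_of_lt_pi
      · apply div_pos (by nlinarith [Real.pi_pos]) (by positivity)
      · rw [div_lt_iff₀ (by positivity)]
        have : -x < 2*n := by rw [abs_of_neg hneg] at h2; linarith
        nlinarith [Real.pi_pos]
    intro hc
    rw [show -x*π/(2*(n:ℝ)) = -(x*π/(2*n)) by ring, Real.sin_neg, hc] at this
    simp at this
  · have : Real.sin (x*π/(2*n)) > 0 := by
      apply Real.sin_pos_of_pos_of_lt_pi
      · positivity
      · rw [div_lt_iff₀ (by positivity)]
        rw [abs_of_pos hpos] at h2
        nlinarith [Real.pi_pos]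
    linarith

-- ∑_{i<n} cos(xπ(2i+1)/(2n)) = 0 when sin(xπ) = 0 and sin(xπ/2n) ≠ 0
lemma sum_cos_odd (n : ℕ) (hn : 0 < n) (x : ℝ)
    (h1 : Real.sin (x*π/(2*n)) ≠ 0) (h2 : Real.sin (x*π) = 0) :
    ∑ i ∈ Finset.range n, Real.cos (x*π*(2*(i:ℝ)+1)/(2*n)) = 0 := by
  have hn' : (n:ℝ) ≠ 0 := Nat.cast_ne_zero.mpr hn.ne'
  have key := tele_odd (x*π/(2*n)) n
  have harg : ∀ i : ℕ, (2*(i:ℝ)+1)*(x*π/(2*n)) = x*π*(2*(i:ℝ)+1)/(2*n) := by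
    intro i; field_simp; try ring
  simp only [harg] at key
  rw [show 2*(n:ℝ)*(x*π/(2*n)) = x*π by field_simp, h2] at key
  have h2s : (2 * Real.sin (x*π/(2*n))) ≠ 0 := by simpa using h1
  exact (mul_eq_zero.mp key).resolve_right h2s

-- ∑_{i<N} cos(xπ i/n) related; we use range (n+1)
lemma sum_cos_even (n : ℕ) (hn : 0 < n) (x : ℝ)
    (h1 : Real.sin (x*π/(2*n)) ≠ 0) (h2 : Real.sin (x*π) = 0) :
    ∑ i ∈ Finset.range (n+1), Real.cos (x*π*(i:ℝ)/n) = (Real.cos (x*π) + 1)/2 := by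
  have hn' : (n:ℝ) ≠ 0 := Nat.cast_ne_zero.mpr hn.ne'
  have key := tele_even (x*π/(2*n)) (n+1)
  have harg : ∀ i : ℕ, 2*(i:ℝ)*(x*π/(2*n)) = x*π*(i:ℝ)/n := by
    intro i; field_simp; try ring
  simp only [harg] at key
  have harg2 : (2*((n:ℝ)+1)-1)*(x*π/(2*n)) = x*π + x*π/(2*n) := by
    field_simp; try ring
  rw [Nat.cast_add, Nat.cast_one, harg2, Real.sin_add, h2] at key
  have h2s : Real.sin (x*π/(2*n)) ≠ 0 := h1
  have : (∑ i ∈ Finset.range (n+1), Real.cos (x*π*(i:ℝ)/n)) * (2 * Real.sin (x*π/(2*n)))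
      = ((Real.cos (x*π) + 1)/2) * (2 * Real.sin (x*π/(2*n))) := by
    rw [key]; ring
  exact mul_right_cancel₀ (by simpa using h2s) this

-- facts about x = n - j - 1 for a generic (non-special) column
lemma xfacts (n : ℕ) (j : ℕ) (hj1 : j < n) (hj2 : j ≠ n - 1) :
    (1:ℝ) ≤ (n:ℝ) - j - 1 ∧ (n:ℝ) - j - 1 ≤ (n:ℝ) - 1 ∧
      Real.sin (((n:ℝ) - j - 1)*π) = 0 := by
  have h1 : j + 2 ≤ n := by omega
  have h1' : (j:ℝ) + 2 ≤ n := by exact_mod_cast h1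
  have h0j : (0:ℝ) ≤ (j:ℝ) := Nat.cast_nonneg j
  refine ⟨by linarith, by linarith, ?_⟩
  calc Real.sin (((n:ℝ) - j - 1)*π) = Real.sin (((n - j - 1 : ℤ):ℝ)*π) := by norm_num
    _ = 0 := Real.sin_int_mul_pi _

lemma sum_cos_odd' (n : ℕ) (hn : 0 < n) (x : ℝ)
    (h0 : x ≠ 0) (hx : |x| < 2*n) (hint : Real.sin (x*π) = 0) :
    ∑ i ∈ Finset.range n, Real.cos (π * x * (2*(i:ℝ)+1)/(2*n)) = 0 := by
  have := sum_cos_odd n hn x (sin_ne n x h0 hx) hint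
  simpa [mul_comm] using this

lemma Umat_orth (n : ℕ) (hn : 1 ≤ n) : (Umat n)ᵀ * Umat n = 1 := by
  have hn0 : (0:ℝ) < n := by exact_mod_cast hn
  have hsq : Real.sqrt (2/n) * Real.sqrt (2/n) = 2/n :=
    Real.mul_self_sqrt (by positivity)
  have hsn : Real.sqrt n * Real.sqrt n = (n:ℝ) := Real.mul_self_sqrt (le_of_lt hn0)
  have hsn0 : Real.sqrt n ≠ 0 := by positivity
  ext j j'
  rw [Matrix.mul_apply]
  simp only [transpose_apply, Umat, of_apply]
  by_cases hj : (j:ℕ) = n - 1 <;> by_cases hj' : (j':ℕ) = n - 1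
  · -- both special
    have hjj : j = j' := Fin.ext (hj.trans hj'.symm)
    subst hjj
    rw [one_apply_eq]
    simp only [hj, if_true, ite_true, ite_false, if_false, eq_self_iff_true]
    rw [Finset.sum_const, card_univ, Fintype.card_fin]
    rw [div_mul_div_comm, one_mul, hsn]
    rw [nsmul_eq_mul]
    field_simp
  · -- j special, j' generic
    obtain ⟨hx1, hx2, hx3⟩ := xfacts n j' j'.isLt hj'
    set x := (n:ℝ) - (j':ℕ) - 1 with hxdef
    simp only [hj, hj', if_true, ite_true, ite_false, if_false, eq_self_iff_true, if_neg hj']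
    have : ∀ i : Fin n, 1 / Real.sqrt n * (Real.sqrt (2/n) *
        Real.cos (π * x * (2*((i:ℕ):ℝ)+1)/(2*n)))
        = (1 / Real.sqrt n * Real.sqrt (2/n)) *
          Real.cos (π * x * (2*((i:ℕ):ℝ)+1)/(2*n)) := fun i => by ring
    rw [Finset.sum_congr rfl (fun i _ => this i), ← Finset.mul_sum]
    rw [show (∑ i : Fin n, Real.cos (π * x * (2*((i:ℕ):ℝ)+1)/(2*n)))
        = ∑ i ∈ Finset.range n, Real.cos (π * x * (2*(i:ℝ)+1)/(2*n)) from
      Fin.sum_univ_eq_sum_range (fun i => Real.cos (π * x * (2*(i:ℝ)+1)/(2*n))) n]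
    rw [sum_cos_odd' n hn x (by linarith) (by rw [abs_of_pos (by linarith)]; linarith) hx3]
    rw [mul_zero]
    exact (one_apply_ne (fun h => hj' ((congrArg Fin.val h).symm.trans hj))).symm
  · -- j generic, j' special
    obtain ⟨hx1, hx2, hx3⟩ := xfacts n j j.isLt hj
    set x := (n:ℝ) - (j:ℕ) - 1 with hxdef
    simp only [hj, hj', if_true, ite_true, ite_false, if_false, eq_self_iff_true, if_neg hj]
    have : ∀ i : Fin n, (Real.sqrt (2/n) *
        Real.cos (π * x * (2*((i:ℕ):ℝ)+1)/(2*n))) * (1 / Real.sqrt n)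
        = (1 / Real.sqrt n * Real.sqrt (2/n)) *
          Real.cos (π * x * (2*((i:ℕ):ℝ)+1)/(2*n)) := fun i => by ring
    rw [Finset.sum_congr rfl (fun i _ => this i), ← Finset.mul_sum]
    rw [show (∑ i : Fin n, Real.cos (π * x * (2*((i:ℕ):ℝ)+1)/(2*n)))
        = ∑ i ∈ Finset.range n, Real.cos (π * x * (2*(i:ℝ)+1)/(2*n)) from
      Fin.sum_univ_eq_sum_range (fun i => Real.cos (π * x * (2*(i:ℝ)+1)/(2*n))) n]
    rw [sum_cos_odd' n hn x (by linarith) (by rw [abs_of_pos (by linarith)]; linarith) hx3]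
    rw [mul_zero]
    exact (one_apply_ne (fun h => hj ((congrArg Fin.val h).trans hj'))).symm
  · -- both generic
    obtain ⟨ha1, ha2, ha3⟩ := xfacts n j j.isLt hj
    obtain ⟨hb1, hb2, hb3⟩ := xfacts n j' j'.isLt hj'
    set x := (n:ℝ) - (j:ℕ) - 1 with hxdef
    set y := (n:ℝ) - (j':ℕ) - 1 with hydef
    simp only [if_neg hj, if_neg hj']
    have hjr : ((j:ℕ):ℝ) < n := by exact_mod_cast j.isLt
    have hjr' : ((j':ℕ):ℝ) < n := by exact_mod_cast j'.isLt
    have h0j : (0:ℝ) ≤ ((j:ℕ):ℝ) := Nat.cast_nonneg _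
    have h0j' : (0:ℝ) ≤ ((j':ℕ):ℝ) := Nat.cast_nonneg _
    have hterm : ∀ i : Fin n,
        (Real.sqrt (2/n) * Real.cos (π * x * (2*((i:ℕ):ℝ)+1)/(2*n))) *
        (Real.sqrt (2/n) * Real.cos (π * y * (2*((i:ℕ):ℝ)+1)/(2*n)))
        = (1/n) * (Real.cos (π * (x-y) * (2*((i:ℕ):ℝ)+1)/(2*n))
            + Real.cos (π * (x+y) * (2*((i:ℕ):ℝ)+1)/(2*n))) := by
      intro i
      have e1 : π * (x-y) * (2*((i:ℕ):ℝ)+1)/(2*n)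
          = π * x * (2*((i:ℕ):ℝ)+1)/(2*n) - π * y * (2*((i:ℕ):ℝ)+1)/(2*n) := by ring
      have e2 : π * (x+y) * (2*((i:ℕ):ℝ)+1)/(2*n)
          = π * x * (2*((i:ℕ):ℝ)+1)/(2*n) + π * y * (2*((i:ℕ):ℝ)+1)/(2*n) := by ring
      rw [e1, e2, Real.cos_sub, Real.cos_add]
      linear_combination (Real.cos (π * x * (2*((i:ℕ):ℝ)+1)/(2*n)) *
        Real.cos (π * y * (2*((i:ℕ):ℝ)+1)/(2*n))) * hsq
    rw [Finset.sum_congr rfl (fun i _ => hterm i), ← Finset.mul_sum,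
      Finset.sum_add_distrib]
    rw [show (∑ i : Fin n, Real.cos (π * (x-y) * (2*((i:ℕ):ℝ)+1)/(2*n)))
        = ∑ i ∈ Finset.range n, Real.cos (π * (x-y) * (2*(i:ℝ)+1)/(2*n)) from
      Fin.sum_univ_eq_sum_range (fun i => Real.cos (π * (x-y) * (2*(i:ℝ)+1)/(2*n))) n]
    rw [show (∑ i : Fin n, Real.cos (π * (x+y) * (2*((i:ℕ):ℝ)+1)/(2*n)))
        = ∑ i ∈ Finset.range n, Real.cos (π * (x+y) * (2*(i:ℝ)+1)/(2*n)) from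
      Fin.sum_univ_eq_sum_range (fun i => Real.cos (π * (x+y) * (2*(i:ℝ)+1)/(2*n))) n]
    have hsum0 : ∑ i ∈ Finset.range n, Real.cos (π * (x+y) * (2*(i:ℝ)+1)/(2*n)) = 0 := by
      apply sum_cos_odd' n hn (x+y) (by linarith)
      · rw [abs_of_pos (by linarith)]; linarith
      · rw [show (x+y)*π = x*π + y*π by ring, Real.sin_add, ha3, hb3]; ring
    rw [hsum0]
    by_cases hjj : j = j'
    · subst hjj
      have hxy : x - y = 0 := by rw [hxdef, hydef]; ring
      rw [hxy]
      have hs1 : ∑ i ∈ Finset.range n, Real.cos (π * 0 * (2*(i:ℝ)+1)/(2*n)) = n := by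
        simp
      rw [hs1, one_apply_eq, add_zero]
      field_simp
    · have hvne : ((j:ℕ):ℝ) ≠ ((j':ℕ):ℝ) := by
        intro h; exact hjj (Fin.ext (Nat.cast_injective h))
      have hdiff0 : ∑ i ∈ Finset.range n, Real.cos (π * (x-y) * (2*(i:ℝ)+1)/(2*n)) = 0 := by
        apply sum_cos_odd' n hn (x-y)
        · intro h
          apply hvne
          have : x - y = ((j':ℕ):ℝ) - ((j:ℕ):ℝ) := by rw [hxdef, hydef]; ring
          rw [this] at h; linarith [sub_eq_zero.mp h]
        · rw [abs_lt]
          constructor <;> [skip; skip] <;>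
            · have : x - y = ((j':ℕ):ℝ) - ((j:ℕ):ℝ) := by rw [hxdef, hydef]; ring
              rw [this]; linarith
        · rw [show (x-y)*π = x*π - y*π by ring, Real.sin_sub, ha3, hb3]; ring
      rw [hdiff0]
      rw [one_apply_ne hjj]
      ring

lemma sum_cos_even' (n : ℕ) (hn : 0 < n) (x : ℝ)
    (h0 : x ≠ 0) (hx : |x| < 2*n) (hs : Real.sin (x*π) = 0) :
    ∑ i ∈ Finset.range (n+1), Real.cos (π * x * (i:ℝ)/n) = (Real.cos (x*π) + 1)/2 := by
  have := sum_cos_even n hn x (sin_ne n x h0 hx) hs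
  simpa [mul_comm] using this

lemma xcos (n j : ℕ) (hj1 : j < n) :
    Real.cos ((((n:ℝ)-j-1) + ((n:ℝ)-j-1))*π) = 1 := by
  have h2 : j ≤ n - 1 := by omega
  have h3 : 1 ≤ n := by omega
  have e : ((n - 1 - j : ℕ):ℝ) = (n:ℝ) - 1 - j := by
    rw [Nat.cast_sub h2, Nat.cast_sub h3]; norm_num
  have : (((n:ℝ)-j-1) + ((n:ℝ)-j-1))*π = ((n - 1 - j : ℕ):ℝ) * (2*π) := by
    rw [e]; ring
  rw [this, Real.cos_nat_mul_two_pi]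

lemma Vmat_orth (n : ℕ) (hn : 1 ≤ n) : (Vmat n)ᵀ * Vmat n = 1 := by
  have hn0 : (0:ℝ) < n := by exact_mod_cast hn
  have hn' : (n:ℝ) ≠ 0 := ne_of_gt hn0
  have hsq : Real.sqrt (2/n) * Real.sqrt (2/n) = 2/n :=
    Real.mul_self_sqrt (by positivity)
  have pick : ∀ (a : Fin (n+1)) (f : Fin (n+1) → ℝ),
      (∑ i : Fin (n+1), (if (i:ℕ) = (a:ℕ) then (1:ℝ) else 0) * f i) = f a := by
    intro a f
    rw [Finset.sum_eq_single a]
    · simp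
    · intro b _ hb
      rw [if_neg (fun h => hb (Fin.ext h))]; simp
    · intro h; exact absurd (Finset.mem_univ a) h
  have pick' : ∀ (a : Fin (n+1)) (f : Fin (n+1) → ℝ),
      (∑ i : Fin (n+1), f i * (if (i:ℕ) = (a:ℕ) then (1:ℝ) else 0)) = f a := by
    intro a f
    rw [Finset.sum_congr rfl (fun i _ => mul_comm (f i) _)]
    exact pick a f
  have z : Fin (n+1) := ⟨0, by omega⟩
  ext j j'
  rw [Matrix.mul_apply]
  simp only [transpose_apply, Vmat, of_apply]
  by_cases hj : (j:ℕ) = n - 1 <;> by_cases hj' : (j':ℕ) = n - 1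
  · -- both first special
    have hjj : j = j' := Fin.ext (hj.trans hj'.symm)
    subst hjj
    rw [one_apply_eq]
    simp only [hj, if_true, ite_true, ite_false, if_false, eq_self_iff_true]
    have := pick (⟨0, by omega⟩ : Fin (n+1)) (fun i => if (i:ℕ) = 0 then (1:ℝ) else 0)
    simpa using this
  · by_cases hj2' : (j':ℕ) = n
    · -- (s0, sN)
      have hne : ¬(n = n - 1) := by omega
      simp only [hj, hj2', if_true, ite_true, eq_self_iff_true, if_neg hne]
      have := pick (⟨0, by omega⟩ : Fin (n+1)) (fun i => if (i:ℕ) = n then (1:ℝ) else 0)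
      simp only [this]
      rw [if_neg (show ¬((0:ℕ) = n) by omega),
        one_apply_ne (fun h => hj' ((congrArg Fin.val h).symm.trans hj))]
    · -- (s0, g)
      simp only [hj, if_true, ite_true, eq_self_iff_true, if_neg hj', if_neg hj2']
      have := pick (⟨0, by omega⟩ : Fin (n+1))
        (fun i => -(Real.sqrt (2/n) * Real.sin (π * ((n:ℝ) - (j':ℕ) - 1) * ((i:ℕ):ℝ) / n)))
      simp only [this]
      norm_num
      exact (one_apply_ne (fun h => hj' ((congrArg Fin.val h).symm.trans hj))).symm
  · -- j' first special, j not
    by_cases hj2 : (j:ℕ) = n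
    · -- (sN, s0)
      have hne : ¬(n = n - 1) := by omega
      simp only [hj', hj2, if_true, ite_true, eq_self_iff_true, if_neg hne]
      have := pick' (⟨0, by omega⟩ : Fin (n+1)) (fun i => if (i:ℕ) = n then (1:ℝ) else 0)
      simp only [this]
      rw [if_neg (show ¬((0:ℕ) = n) by omega),
        one_apply_ne (fun h => hj ((congrArg Fin.val h).trans hj'))]
    · -- (g, s0)
      simp only [hj', if_true, ite_true, eq_self_iff_true, if_neg hj, if_neg hj2]
      have := pick' (⟨0, by omega⟩ : Fin (n+1))
        (fun i => -(Real.sqrt (2/n) * Real.sin (π * ((n:ℝ) - (j:ℕ) - 1) * ((i:ℕ):ℝ) / n)))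
      simp only [this]
      norm_num
      exact (one_apply_ne (fun h => hj ((congrArg Fin.val h).trans hj'))).symm
  · -- neither first special
    by_cases hj2 : (j:ℕ) = n <;> by_cases hj2' : (j':ℕ) = n
    · -- (sN, sN)
      have hjj : j = j' := Fin.ext (hj2.trans hj2'.symm)
      subst hjj
      rw [one_apply_eq]
      have hne : ¬(n = n - 1) := by omega
      simp only [hj2, if_true, ite_true, eq_self_iff_true, if_neg hne]
      have := pick' (⟨n, by omega⟩ : Fin (n+1)) (fun i => if (i:ℕ) = n then (1:ℝ) else 0)
      simpa using this
    · -- (sN, g)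
      have hne : ¬(n = n - 1) := by omega
      simp only [hj2, if_true, ite_true, eq_self_iff_true, if_neg hne, if_neg hj', if_neg hj2']
      have := pick (⟨n, by omega⟩ : Fin (n+1))
        (fun i => -(Real.sqrt (2/n) * Real.sin (π * ((n:ℝ) - (j':ℕ) - 1) * ((i:ℕ):ℝ) / n)))
      simp only [this]
      obtain ⟨hx1, hx2, hx3⟩ := xfacts n (j':ℕ) (by omega) hj'
      rw [show π * ((n:ℝ) - (j':ℕ) - 1) * ((⟨n, by omega⟩ : Fin (n+1)):ℕ) / n
          = ((n:ℝ) - (j':ℕ) - 1) * π by field_simp]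
      rw [hx3, one_apply_ne (fun h => hj2' ((congrArg Fin.val h).symm.trans hj2))]
      ring
    · -- (g, sN)
      have hne : ¬(n = n - 1) := by omega
      simp only [hj2', if_true, ite_true, eq_self_iff_true, if_neg hne, if_neg hj, if_neg hj2]
      have := pick' (⟨n, by omega⟩ : Fin (n+1))
        (fun i => -(Real.sqrt (2/n) * Real.sin (π * ((n:ℝ) - (j:ℕ) - 1) * ((i:ℕ):ℝ) / n)))
      simp only [this]
      obtain ⟨hx1, hx2, hx3⟩ := xfacts n (j:ℕ) (by omega) hj
      rw [show π * ((n:ℝ) - (j:ℕ) - 1) * ((⟨n, by omega⟩ : Fin (n+1)):ℕ) / n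
          = ((n:ℝ) - (j:ℕ) - 1) * π by field_simp]
      rw [hx3, one_apply_ne (fun h => hj2 ((congrArg Fin.val h).trans hj2'))]
      ring
    · -- (g, g)
      simp only [if_neg hj, if_neg hj', if_neg hj2, if_neg hj2']
      obtain ⟨ha1, ha2, ha3⟩ := xfacts n (j:ℕ) (by omega) hj
      obtain ⟨hb1, hb2, hb3⟩ := xfacts n (j':ℕ) (by omega) hj'
      set x := (n:ℝ) - (j:ℕ) - 1 with hxdef
      set y := (n:ℝ) - (j':ℕ) - 1 with hydef
      have hjr : ((j:ℕ):ℝ) ≤ n := by exact_mod_cast Nat.lt_succ_iff.mp j.isLt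
      have hjr' : ((j':ℕ):ℝ) ≤ n := by exact_mod_cast Nat.lt_succ_iff.mp j'.isLt
      have h0j : (0:ℝ) ≤ ((j:ℕ):ℝ) := Nat.cast_nonneg _
      have h0j' : (0:ℝ) ≤ ((j':ℕ):ℝ) := Nat.cast_nonneg _
      have hterm : ∀ i : Fin (n+1),
          (-(Real.sqrt (2/n) * Real.sin (π * x * ((i:ℕ):ℝ)/n))) *
          (-(Real.sqrt (2/n) * Real.sin (π * y * ((i:ℕ):ℝ)/n)))
          = (1/n) * (Real.cos (π * (x-y) * ((i:ℕ):ℝ)/n)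
              - Real.cos (π * (x+y) * ((i:ℕ):ℝ)/n)) := by
        intro i
        have e1 : π * (x-y) * ((i:ℕ):ℝ)/n
            = π * x * ((i:ℕ):ℝ)/n - π * y * ((i:ℕ):ℝ)/n := by ring
        have e2 : π * (x+y) * ((i:ℕ):ℝ)/n
            = π * x * ((i:ℕ):ℝ)/n + π * y * ((i:ℕ):ℝ)/n := by ring
        rw [e1, e2, Real.cos_sub, Real.cos_add]
        linear_combination (Real.sin (π * x * ((i:ℕ):ℝ)/n) *
          Real.sin (π * y * ((i:ℕ):ℝ)/n)) * hsq
      rw [Finset.sum_congr rfl (fun i _ => hterm i), ← Finset.mul_sum,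
        Finset.sum_sub_distrib]
      rw [show (∑ i : Fin (n+1), Real.cos (π * (x-y) * ((i:ℕ):ℝ)/n))
          = ∑ i ∈ Finset.range (n+1), Real.cos (π * (x-y) * (i:ℝ)/n) from
        Fin.sum_univ_eq_sum_range (fun i => Real.cos (π * (x-y) * (i:ℝ)/n)) (n+1)]
      rw [show (∑ i : Fin (n+1), Real.cos (π * (x+y) * ((i:ℕ):ℝ)/n))
          = ∑ i ∈ Finset.range (n+1), Real.cos (π * (x+y) * (i:ℝ)/n) from
        Fin.sum_univ_eq_sum_range (fun i => Real.cos (π * (x+y) * (i:ℝ)/n)) (n+1)]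
      have hsum : ∑ i ∈ Finset.range (n+1), Real.cos (π * (x+y) * (i:ℝ)/n)
          = (Real.cos ((x+y)*π) + 1)/2 := by
        apply sum_cos_even' n hn (x+y) (by linarith)
        · rw [abs_of_pos (by linarith)]; linarith
        · rw [show (x+y)*π = x*π + y*π by ring, Real.sin_add, ha3, hb3]; ring
      rw [hsum]
      by_cases hjj : j = j'
      · subst hjj
        have hyx : y = x := by rw [hxdef, hydef]
        rw [hyx, sub_self]
        have hs1 : ∑ i ∈ Finset.range (n+1), Real.cos (π * 0 * (i:ℝ)/n) = n+1 := by
          simp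
        rw [hs1, one_apply_eq]
        have hcx : Real.cos ((x+x)*π) = 1 := by rw [hxdef]; exact xcos n (j:ℕ) (by omega)
        rw [hcx]
        field_simp
        ring
      · have hvne : ((j:ℕ):ℝ) ≠ ((j':ℕ):ℝ) := by
          intro h; exact hjj (Fin.ext (Nat.cast_injective h))
        have hxyv : x - y = ((j':ℕ):ℝ) - ((j:ℕ):ℝ) := by rw [hxdef, hydef]; ring
        have hsdiff : ∑ i ∈ Finset.range (n+1), Real.cos (π * (x-y) * (i:ℝ)/n)
            = (Real.cos ((x-y)*π) + 1)/2 := by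
          apply sum_cos_even' n hn (x-y)
          · intro h
            rw [hxyv] at h
            exact hvne (sub_eq_zero.mp h).symm
          · rw [abs_lt]
            constructor <;> · rw [hxyv]; push_cast; linarith
          · rw [show (x-y)*π = x*π - y*π by ring, Real.sin_sub, ha3, hb3]; ring
        rw [hsdiff, one_apply_ne hjj]
        have hceq : Real.cos ((x-y)*π) = Real.cos ((x+y)*π) := by
          rw [show (x-y)*π = x*π - y*π by ring, show (x+y)*π = x*π + y*π by ring,
            Real.cos_sub, Real.cos_add, ha3, hb3]
          ring
        rw [hceq]
        ring


lemma Sd_eq (n : ℕ) (hn : 1 ≤ n) (i : Fin n) (k : Fin (n+1)) :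
    Sd n 0 0 i k =
      (if (i:ℕ) = 0 then 0 else if (k:ℕ) = (i:ℕ) then 1 else 0)
      - (if (i:ℕ) = n - 1 then 0 else if (k:ℕ) = (i:ℕ) + 1 then 1 else 0) := by
  unfold Sd
  simp only [of_apply]
  have hi := i.isLt
  have hk := k.isLt
  by_cases h1 : (k:ℕ) = (i:ℕ) <;> by_cases h2 : (i:ℕ) = 0 <;>
    by_cases h3 : (i:ℕ) = n - 1 <;> simp [h1, h2, h3] <;> try omega
  all_goals (split_ifs <;> first | omega | (simp only [Fin.ext_iff, Fin.val_zero] at *; omega) | norm_num)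

lemma prod_eq (n : ℕ) (hn : 1 ≤ n) : Sd n 0 0 * Vmat n = Umat n * Sigmat n := by
  have hn0 : (0:ℝ) < n := by exact_mod_cast hn
  have hn' : (n:ℝ) ≠ 0 := ne_of_gt hn0
  ext i j
  rw [Matrix.mul_apply, Matrix.mul_apply]
  -- RHS: only k with (k:ℕ) = (j:ℕ) contributes, and only if (j:ℕ) < n
  have hRHS : ∑ k : Fin n, Umat n i k * Sigmat n k j
      = if h : (j:ℕ) < n then Umat n i ⟨(j:ℕ), h⟩ *
          (2 * Real.sin (π * ((n:ℝ) - (j:ℕ) - 1) / (2*n))) else 0 := by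
    split_ifs with h
    · rw [Finset.sum_eq_single (⟨(j:ℕ), h⟩ : Fin n)]
      · simp [Sigmat]
      · intro b _ hb
        have : ¬((b:ℕ) = (j:ℕ)) := fun hc => hb (Fin.ext hc)
        simp only [Sigmat, of_apply, if_neg this, mul_zero]
      · intro hc; exact absurd (Finset.mem_univ _) hc
    · apply Finset.sum_eq_zero
      intro b _
      have : ¬((b:ℕ) = (j:ℕ)) := fun hc => h (hc ▸ b.isLt)
      simp only [Sigmat, of_apply, if_neg this, mul_zero]
  -- LHS
  have hLHS : ∑ k : Fin (n+1), Sd n 0 0 i k * Vmat n k j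
      = (if (i:ℕ) = 0 then 0 else Vmat n ⟨(i:ℕ), by omega⟩ j)
        - (if (i:ℕ) = n - 1 then 0 else Vmat n ⟨(i:ℕ)+1, by omega⟩ j) := by
    have expand : ∀ k : Fin (n+1), Sd n 0 0 i k * Vmat n k j
        = (if (i:ℕ) = 0 then 0 else if (k:ℕ) = ((⟨(i:ℕ), by omega⟩ : Fin (n+1)):ℕ) then Vmat n k j else 0)
          - (if (i:ℕ) = n - 1 then 0 else if (k:ℕ) = ((⟨(i:ℕ)+1, by omega⟩ : Fin (n+1)):ℕ) then Vmat n k j else 0) := by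
      intro k
      rw [Sd_eq n hn i k, sub_mul]
      congr 1 <;> split_ifs <;> simp_all
    rw [Finset.sum_congr rfl (fun k _ => expand k), Finset.sum_sub_distrib]
    congr 1
    · split_ifs with h
      · simp
      · rw [Finset.sum_eq_single (⟨(i:ℕ), by omega⟩ : Fin (n+1))]
        · rw [if_pos rfl]
        · intro b _ hb; rw [if_neg (fun hc => hb (Fin.ext hc))]
        · intro hc; exact absurd (Finset.mem_univ _) hc
    · split_ifs with h
      · simp
      · rw [Finset.sum_eq_single (⟨(i:ℕ)+1, by omega⟩ : Fin (n+1))]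
        · rw [if_pos rfl]
        · intro b _ hb; rw [if_neg (fun hc => hb (Fin.ext hc))]
        · intro hc; exact absurd (Finset.mem_univ _) hc
  rw [hLHS, hRHS]
  by_cases hj : (j:ℕ) = n - 1
  · -- column n-1 : e_0 column, sigma = 0
    have hjn : (j:ℕ) < n := by omega
    rw [dif_pos hjn]
    have hsin : Real.sin (π * ((n:ℝ) - (j:ℕ) - 1) / (2*n)) = 0 := by
      have h1 : ((j:ℕ):ℝ) = (n:ℝ) - 1 := by
        rw [hj, Nat.cast_sub hn]; norm_num
      rw [show π * ((n:ℝ) - (j:ℕ) - 1) / (2*n) = π * ((n:ℝ) - ((j:ℕ):ℝ) - 1) / (2*n) from rfl,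
        h1]
      norm_num
    rw [hsin]
    simp only [Umat, Vmat, of_apply, Fin.val_mk, if_pos hj]
    split_ifs <;> first | contradiction | (exfalso; omega) | norm_num
  · by_cases hj2 : (j:ℕ) = n
    · -- column n : e_n column, no sigma
      rw [dif_neg (by omega)]
      simp only [Vmat, of_apply, Fin.val_mk, if_neg hj, if_pos hj2]
      rw [if_neg (show ¬((i:ℕ) = n) by omega)]
      split_ifs <;> first | contradiction | (exfalso; omega) | norm_num
    · -- generic column
      have hjn : (j:ℕ) < n := by omega
      obtain ⟨hx1, hx2, hx3⟩ := xfacts n (j:ℕ) hjn hj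
      rw [dif_pos hjn]
      simp only [Umat, Vmat, of_apply, Fin.val_mk, if_neg hj, if_neg hj2]
      have hc1 : (if (i:ℕ) = 0 then (0:ℝ)
          else -(Real.sqrt (2/n) * Real.sin (π * ((n:ℝ)-(j:ℕ)-1) * (((i:ℕ):ℕ):ℝ)/n)))
          = -(Real.sqrt (2/n) * Real.sin (π * ((n:ℝ)-(j:ℕ)-1) * ((i:ℕ):ℝ)/n)) := by
        split_ifs with h
        · rw [h]; norm_num
        · norm_num
      have hc2 : (if (i:ℕ) = n - 1 then (0:ℝ)
          else -(Real.sqrt (2/n) * Real.sin (π * ((n:ℝ)-(j:ℕ)-1) * (((i:ℕ)+1:ℕ):ℝ)/n)))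
          = -(Real.sqrt (2/n) * Real.sin (π * ((n:ℝ)-(j:ℕ)-1) * (((i:ℕ):ℝ)+1)/n)) := by
        split_ifs with h
        · have hi1 : ((i:ℕ):ℝ) + 1 = (n:ℝ) := by
            have : (i:ℕ) + 1 = n := by omega
            exact_mod_cast this
          rw [hi1]
          rw [show π * ((n:ℝ)-(j:ℕ)-1) * (n:ℝ)/n = ((n:ℝ)-(j:ℕ)-1) * π by
            field_simp]
          rw [hx3]
          norm_num
        · push_cast; norm_num
      rw [hc1, hc2]
      have eB : π * ((n:ℝ)-(j:ℕ)-1) * (((i:ℕ):ℝ)+1)/n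
          = π * ((n:ℝ)-(j:ℕ)-1) * (2*((i:ℕ):ℝ)+1)/(2*n) + π * ((n:ℝ)-(j:ℕ)-1)/(2*n) := by
        field_simp; ring
      have eA : π * ((n:ℝ)-(j:ℕ)-1) * ((i:ℕ):ℝ)/n
          = π * ((n:ℝ)-(j:ℕ)-1) * (2*((i:ℕ):ℝ)+1)/(2*n) - π * ((n:ℝ)-(j:ℕ)-1)/(2*n) := by
        field_simp; ring
      rw [eB, eA, Real.sin_add, Real.sin_sub]
      ring

lemma SigST (n : ℕ) (hn : 1 ≤ n) : Sigmat n * (Sigmat n)ᵀ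
    = Matrix.diagonal (fun i : Fin n =>
        (2 * Real.sin (π * ((n:ℝ) - (i:ℕ) - 1)/(2*n)))^2) := by
  ext i j
  rw [Matrix.mul_apply]
  by_cases hij : i = j
  · subst hij
    rw [Matrix.diagonal_apply_eq]
    rw [Finset.sum_eq_single (⟨(i:ℕ), by omega⟩ : Fin (n+1))]
    · simp only [Sigmat, of_apply, transpose_apply, Fin.val_mk, eq_self_iff_true, ite_true]
      ring
    · intro b _ hb
      have : ¬((i:ℕ) = (b:ℕ)) := fun hc => hb (Fin.ext hc.symm)
      simp only [Sigmat, of_apply, transpose_apply, if_neg this, mul_zero]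
    · intro hc; exact absurd (Finset.mem_univ _) hc
  · rw [Matrix.diagonal_apply_ne _ hij]
    apply Finset.sum_eq_zero
    intro k _
    by_cases h : (i:ℕ) = (k:ℕ)
    · have : ¬((j:ℕ) = (k:ℕ)) := fun hc => hij (Fin.ext (h.trans hc.symm))
      simp only [Sigmat, of_apply, transpose_apply, if_neg this, mul_zero]
    · simp only [Sigmat, of_apply, transpose_apply, if_neg h, zero_mul]

lemma rank_Sig (n : ℕ) (hn : 1 ≤ n) : (Sigmat n).rank = n - 1 := by
  have hn0 : (0:ℝ) < n := by exact_mod_cast hn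
  rw [← Matrix.rank_self_mul_transpose, SigST n hn, Matrix.rank_diagonal]
  have hiff : ∀ i : Fin n,
      ((2 * Real.sin (π * ((n:ℝ) - (i:ℕ) - 1)/(2*n)))^2 ≠ 0) ↔ ¬(i = ⟨n-1, by omega⟩) := by
    intro i
    constructor
    · intro h hc
      apply h
      subst hc
      have h1 : ((n-1:ℕ):ℝ) = (n:ℝ) - 1 := by rw [Nat.cast_sub hn]; norm_num
      rw [show π * ((n:ℝ) - ((⟨n-1, by omega⟩ : Fin n):ℕ) - 1)/(2*n)
          = π * ((n:ℝ) - ((n-1:ℕ):ℝ) - 1)/(2*n) from rfl, h1]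
      norm_num
    · intro h
      have hvne : (i:ℕ) ≠ n - 1 := fun hc => h (Fin.ext hc)
      obtain ⟨hx1, hx2, _⟩ := xfacts n (i:ℕ) i.isLt hvne
      have hs : Real.sin (((n:ℝ) - (i:ℕ) - 1) * π/(2*n)) ≠ 0 := by
        apply sin_ne n _ (by linarith)
        rw [abs_of_pos (by linarith)]; linarith
      have : Real.sin (π * ((n:ℝ) - (i:ℕ) - 1)/(2*n)) ≠ 0 := by
        rwa [show π * ((n:ℝ) - (i:ℕ) - 1)/(2*n) = ((n:ℝ) - (i:ℕ) - 1) * π/(2*n) by ring]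
      positivity
  rw [Fintype.card_congr (Equiv.subtypeEquivRight hiff)]
  rw [Fintype.card_subtype_compl, Fintype.card_subtype_eq, Fintype.card_fin]


/-- explicit SVD of the diffusion matrix under zero-flux boundary
conditions.  Indices here run from 0, whereas in the informal statement they run from 1;
column `j` (1-indexed) corresponds to `j₀ = j - 1` below. -/
theorem stmt11 (n : ℕ) (hn : 1 ≤ n) :
    let U : Matrix (Fin n) (Fin n) ℝ := Matrix.of fun i j =>
      if (j : ℕ) = n - 1 then 1 / Real.sqrt n
      else Real.sqrt (2 / n) *
        Real.cos (π * ((n : ℝ) - (j : ℕ) - 1) * (2 * ((i : ℕ) : ℝ) + 1) / (2 * n))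
    let V : Matrix (Fin (n+1)) (Fin (n+1)) ℝ := Matrix.of fun i j =>
      if (j : ℕ) = n - 1 then (if (i : ℕ) = 0 then 1 else 0)
      else if (j : ℕ) = n then (if (i : ℕ) = n then 1 else 0)
      else -(Real.sqrt (2 / n) * Real.sin (π * ((n : ℝ) - (j : ℕ) - 1) * ((i : ℕ) : ℝ) / n))
    let Sig : Matrix (Fin n) (Fin (n+1)) ℝ := Matrix.of fun i j =>
      if (i : ℕ) = (j : ℕ) then 2 * Real.sin (π * ((n : ℝ) - (i : ℕ) - 1) / (2 * n)) else 0
    Uᵀ * U = 1 ∧ U * Uᵀ = 1 ∧ Vᵀ * V = 1 ∧ V * Vᵀ = 1 ∧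
      Sd n 0 0 = U * Sig * Vᵀ ∧ (Sd n 0 0).rank = n - 1 := by
  intro U V Sig
  have hUU : Uᵀ * U = 1 := Umat_orth n hn
  have hVV : Vᵀ * V = 1 := Vmat_orth n hn
  have hUU' : U * Uᵀ = 1 := mul_eq_one_comm.mp hUU
  have hVV' : V * Vᵀ = 1 := mul_eq_one_comm.mp hVV
  have hprod : Sd n 0 0 * V = U * Sig := prod_eq n hn
  have hSd : Sd n 0 0 = U * Sig * Vᵀ := by
    rw [← hprod, Matrix.mul_assoc, hVV', Matrix.mul_one]
  refine ⟨hUU, hUU', hVV, hVV', hSd, ?_⟩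
  have hdetU : IsUnit (U : Matrix (Fin n) (Fin n) ℝ).det := by
    apply IsUnit.of_mul_eq_one (Uᵀ.det)
    rw [mul_comm, ← Matrix.det_mul, hUU, Matrix.det_one]
  have hdetVt : IsUnit ((Vᵀ : Matrix (Fin (n+1)) (Fin (n+1)) ℝ)).det := by
    apply IsUnit.of_mul_eq_one (V.det)
    rw [← Matrix.det_mul, hVV, Matrix.det_one]
  rw [hSd, Matrix.mul_assoc,
    Matrix.rank_mul_eq_right_of_isUnit_det U (Sig * Vᵀ) hdetU,
    Matrix.rank_mul_eq_left_of_isUnit_det Vᵀ Sig hdetVt]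
  exact rank_Sig n hn
end
end

section
/- (Explicit SVD of the diffusion matrix under Mixed boundary conditions.) Let n ≥ 1 and let S_d = S_d(n; 0, 1). Define U ∈ ℝ^{n×n} by U_{i,j} = √(2/(n+1/2))·cos(π(n−j+1/2)(2i−1)/(2n+1)); define V ∈ ℝ^{(n+1)×(n+1)} by V_{i,j} = −√(2/(n+1/2))·sin(2π(n−j+1/2)(i−1)/(2n+1)) for 1 ≤ j ≤ n, with column n+1 of V equal to the first standard basis vector e₁; and let Σ be the n × (n+1) matrix with Σ_{j,j} = 2 sin(π(n−j+1/2)/(2n+1)) for 1 ≤ j ≤ n and all other entries 0. Then U and V are orthogonal matrices and S_d = U Σ Vᵀ. In particular S_d has full row rank n. -/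
open Matrix Real
open scoped Matrix

noncomputable section

namespace Stmt12Aux

open Finset

/-! ### Trigonometric sum lemmas -/

lemma key1 (N : ℕ) (x : ℝ) :
    2 * sin x * ∑ i ∈ range N, cos ((2*i+1)*x) = sin (2*N*x) := by
  rw [Finset.mul_sum]
  have : ∀ i ∈ range N, 2 * sin x * cos ((2*i+1)*x)
      = sin (2*(i+1)*x) - sin (2*i*x) := by
    intro i _
    have h1 : (2*(i:ℝ)+2)*x = (2*i+1)*x + x := by ring
    have h2 : (2*(i:ℝ))*x = (2*i+1)*x - x := by ring
    rw [show (2*((i:ℝ)+1)*x) = (2*(i:ℝ)+2)*x by ring, h1, h2, sin_add, sin_sub]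
    ring
  rw [Finset.sum_congr rfl this]
  have := Finset.sum_range_sub (fun i => sin (2*(i:ℝ)*x)) N
  push_cast at this ⊢
  rw [this]
  simp

lemma key2 (N : ℕ) (x : ℝ) :
    2 * sin x * ∑ i ∈ range (N+1), cos (2*i*x) = sin ((2*N+1)*x) + sin x := by
  rw [Finset.mul_sum]
  have : ∀ i ∈ range (N+1), 2 * sin x * cos (2*i*x)
      = sin ((2*(i+1)-1)*x) - sin ((2*i-1)*x) := by
    intro i _
    have h1 : (2*((i:ℝ)+1)-1)*x = (2*i*x) + x := by ring
    have h2 : (2*(i:ℝ)-1)*x = (2*i*x) - x := by ring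
    rw [h1, h2, sin_add, sin_sub]
    ring
  rw [Finset.sum_congr rfl this]
  have := Finset.sum_range_sub (fun i => sin ((2*(i:ℝ)-1)*x)) (N+1)
  push_cast at this ⊢
  rw [this]
  simp [sin_sub]
  ring

lemma sinθ_ne (n : ℕ) (m : ℤ) (h0 : m ≠ 0) (h : m.natAbs ≤ 2*n) :
    sin ((m:ℝ) * (π / (2*n+1))) ≠ 0 := by
  intro hsin
  rw [sin_eq_zero_iff] at hsin
  obtain ⟨k, hk⟩ := hsin
  have h21 : (2*(n:ℝ)+1) ≠ 0 := by positivity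
  have hR : ((k:ℝ)*(2*n+1))*π = (m:ℝ)*π := by
    field_simp at hk
    linear_combination π * hk
  have hZ : k*(2*(n:ℤ)+1) = m := by
    have := mul_right_cancel₀ pi_ne_zero hR
    exact_mod_cast this
  have hk0 : k ≠ 0 := by rintro rfl; simp at hZ; omega
  have habs : m.natAbs = k.natAbs * (2*n+1) := by
    rw [← hZ, Int.natAbs_mul]
    congr 1
  have : 1 ≤ k.natAbs := Int.natAbs_pos.mpr hk0
  nlinarith [h, habs]

lemma Wlem (n : ℕ) (m : ℤ) (h : m.natAbs ≤ 2*n) :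
    ∑ i ∈ range n, cos ((2*i+1)*((m:ℝ) * (π / (2*n+1))))
      = if m = 0 then (n:ℝ) else -cos (m*π)/2 := by
  by_cases h0 : m = 0
  · simp [h0]
  · rw [if_neg h0]
    have hs := sinθ_ne n m h0 h
    have hk := key1 n ((m:ℝ) * (π / (2*n+1)))
    have harg : 2*(n:ℝ)*((m:ℝ) * (π / (2*n+1))) = (m:ℝ)*π - (m:ℝ) * (π / (2*n+1)) := by
      have h21 : (2*(n:ℝ)+1) ≠ 0 := by positivity
      field_simp
      ring
    rw [harg, sin_sub, sin_int_mul_pi] at hk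
    set S := ∑ i ∈ range n, cos ((2*(i:ℝ)+1)*((m:ℝ) * (π / (2*n+1)))) with hS
    have h2 : sin ((m:ℝ) * (π / (2*n+1))) * (2*S + cos ((m:ℝ)*π)) = 0 := by
      linear_combination hk
    have := (mul_eq_zero.1 h2).resolve_left hs
    linarith

lemma Tlem (n : ℕ) (m : ℤ) (h : m.natAbs ≤ 2*n) :
    ∑ i ∈ range (n+1), cos (2*i*((m:ℝ) * (π / (2*n+1))))
      = if m = 0 then (n:ℝ)+1 else 1/2 := by
  by_cases h0 : m = 0
  · simp [h0]
  · rw [if_neg h0]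
    have hs := sinθ_ne n m h0 h
    have hk := key2 n ((m:ℝ) * (π / (2*n+1)))
    have harg : (2*(n:ℝ)+1)*((m:ℝ) * (π / (2*n+1))) = (m:ℝ)*π := by
      have h21 : (2*(n:ℝ)+1) ≠ 0 := by positivity
      field_simp
    rw [harg, sin_int_mul_pi] at hk
    set S := ∑ i ∈ range (n+1), cos (2*(i:ℝ)*((m:ℝ) * (π / (2*n+1)))) with hS
    have h2 : sin ((m:ℝ) * (π / (2*n+1))) * (2*S - 1) = 0 := by
      linear_combination hk
    have := (mul_eq_zero.1 h2).resolve_left hs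
    linarith

/-- reflected version of `Wlem`, summation over the frequency index -/
lemma W'lem (n : ℕ) (m : ℤ) (h : m.natAbs ≤ 2*n) :
    ∑ j ∈ range n, cos ((2*((n:ℝ)-j)-1)*((m:ℝ) * (π / (2*n+1))))
      = if m = 0 then (n:ℝ) else -cos (m*π)/2 := by
  rw [← Wlem n m h, ← Finset.sum_range_reflect]
  refine Finset.sum_congr rfl ?_
  intro j hj
  have hj' : j + 1 ≤ n := Finset.mem_range.1 hj
  congr 2
  rw [Nat.sub_sub, Nat.cast_sub (by omega : 1 + j ≤ n)]
  push_cast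
  ring

/-! ### cosine of integer multiples of π -/

lemma cos_odd_pi (k : ℤ) : cos ((2*(k:ℝ)+1)*π) = -1 := by
  rw [show (2*(k:ℝ)+1)*π = π - (-k:ℤ)*(2*π) by push_cast; ring,
    cos_sub_int_mul_two_pi, cos_pi]

lemma cos_even_pi (k : ℤ) : cos ((2*(k:ℝ))*π) = 1 := by
  rw [show (2*(k:ℝ))*π = 0 - (-k:ℤ)*(2*π) by push_cast; ring,
    cos_sub_int_mul_two_pi, cos_zero]

lemma sin_odd_pi (k : ℤ) : sin ((2*(k:ℝ)+1)*π) = 0 := by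
  rw [show (2*(k:ℝ)+1)*π = ((2*k+1 : ℤ):ℝ)*π by push_cast; ring, sin_int_mul_pi]

/-- if `a + b` is odd then `cos aπ + cos bπ = 0`. -/
lemma cos_opp (a b c : ℤ) (h : a + b = 2*c+1) : cos ((a:ℝ)*π) + cos ((b:ℝ)*π) = 0 := by
  have hb : (b:ℝ) = 2*(c:ℝ)+1-(a:ℝ) := by
    have : (b:ℤ) = 2*c+1-a := by omega
    exact_mod_cast congrArg (Int.cast : ℤ → ℝ) this
  rw [show (b:ℝ)*π = (2*(c:ℝ)+1)*π - (a:ℝ)*π by rw [hb]; ring, cos_sub,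
    cos_odd_pi, sin_odd_pi]
  ring

/-- shifting by an even integer doesn't change `cos (mπ)`. -/
lemma cos_shift (a l : ℤ) : cos (((a + 2*l : ℤ):ℝ)*π) = cos ((a:ℝ)*π) := by
  rw [show ((a + 2*l : ℤ):ℝ)*π = (a:ℝ)*π - (-l:ℤ)*(2*π) by push_cast; ring,
    cos_sub_int_mul_two_pi]

/-! ### product-to-sum identities -/

lemma coscos (x y : ℝ) : cos x * cos y = (cos (x - y) + cos (x + y))/2 := by
  rw [cos_sub, cos_add]; ring

lemma sinsin (x y : ℝ) : sin x * sin y = (cos (x - y) - cos (x + y))/2 := by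
  rw [cos_sub, cos_add]; ring

lemma trig3 (x y z : ℝ) : cos x * (2 * sin y) * sin z
    = (cos (x+y-z) - cos (x+y+z) - cos (x-y-z) + cos (x-y+z))/2 := by
  simp only [show x+y-z = (x+y)-z by ring, show x-y-z = (x-y)-z by ring,
    show x-y+z = (x-y)+z by ring, cos_sub, cos_add, sin_add, sin_sub]
  ring


lemma cosZ_odd (m k : ℤ) (h : m = 2*k+1) : cos ((m:ℝ)*π) = -1 := by
  subst h; push_cast; exact cos_odd_pi k

lemma cosZ_even (m k : ℤ) (h : m = 2*k) : cos ((m:ℝ)*π) = 1 := by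
  subst h; push_cast; exact cos_even_pi k

def Um (n : ℕ) : Matrix (Fin n) (Fin n) ℝ := Matrix.of fun i j =>
  Real.sqrt (2 / ((n : ℝ) + 1/2)) *
    Real.cos (π * ((n : ℝ) - (j : ℕ) - 1/2) * (2 * ((i : ℕ) : ℝ) + 1) / (2 * n + 1))

lemma UtU (n : ℕ) (hn : 1 ≤ n) : (Um n)ᵀ * Um n = 1 := by
  ext j k
  have hj := j.isLt
  have hk := k.isLt
  set c := Real.sqrt (2 / ((n:ℝ) + 1/2)) with hc
  have hc2 : c^2 = 2/((n:ℝ)+1/2) := Real.sq_sqrt (by positivity)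
  rw [Matrix.mul_apply, Matrix.one_apply]
  have hstep : ∑ i : Fin n, (Um n)ᵀ j i * Um n i k
      = c^2/2 * ((if (((k:ℕ):ℤ)-((j:ℕ):ℤ)) = 0 then (n:ℝ)
            else -cos ((((k:ℕ):ℤ)-((j:ℕ):ℤ) : ℤ)*π)/2)
        + (if (2*(n:ℤ)-1-((j:ℕ):ℤ)-((k:ℕ):ℤ)) = 0 then (n:ℝ)
            else -cos ((2*(n:ℤ)-1-((j:ℕ):ℤ)-((k:ℕ):ℤ) : ℤ)*π)/2)) := by
    rw [← Wlem n (((k:ℕ):ℤ)-((j:ℕ):ℤ)) (by omega),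
        ← Wlem n (2*(n:ℤ)-1-((j:ℕ):ℤ)-((k:ℕ):ℤ)) (by omega),
        ← Finset.sum_add_distrib, Finset.mul_sum,
        ← Fin.sum_univ_eq_sum_range (fun i => c^2/2 *
          (cos ((2*(i:ℝ)+1)*(((((k:ℕ):ℤ)-((j:ℕ):ℤ) : ℤ):ℝ) * (π / (2*n+1))))
           + cos ((2*(i:ℝ)+1)*(((2*(n:ℤ)-1-((j:ℕ):ℤ)-((k:ℕ):ℤ) : ℤ):ℝ) * (π / (2*n+1)))))) n]
    refine Finset.sum_congr rfl fun i _ => ?_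
    simp only [transpose_apply, Um, Matrix.of_apply]
    rw [show c * cos (π * ((n:ℝ) - (j:ℕ) - 1/2) * (2*((i:ℕ):ℝ)+1) / (2*n+1))
          * (c * cos (π * ((n:ℝ) - (k:ℕ) - 1/2) * (2*((i:ℕ):ℝ)+1) / (2*n+1)))
        = c^2 * (cos (π * ((n:ℝ) - (j:ℕ) - 1/2) * (2*((i:ℕ):ℝ)+1) / (2*n+1))
          * cos (π * ((n:ℝ) - (k:ℕ) - 1/2) * (2*((i:ℕ):ℝ)+1) / (2*n+1))) by ring,
      coscos]
    rw [show π * ((n:ℝ) - (j:ℕ) - 1/2) * (2*((i:ℕ):ℝ)+1) / (2*n+1)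
          - π * ((n:ℝ) - (k:ℕ) - 1/2) * (2*((i:ℕ):ℝ)+1) / (2*n+1)
        = (2*((i:ℕ):ℝ)+1)*(((((k:ℕ):ℤ)-((j:ℕ):ℤ) : ℤ):ℝ) * (π / (2*n+1))) by push_cast; ring]
    rw [show π * ((n:ℝ) - (j:ℕ) - 1/2) * (2*((i:ℕ):ℝ)+1) / (2*n+1)
          + π * ((n:ℝ) - (k:ℕ) - 1/2) * (2*((i:ℕ):ℝ)+1) / (2*n+1)
        = (2*((i:ℕ):ℝ)+1)*(((2*(n:ℤ)-1-((j:ℕ):ℤ)-((k:ℕ):ℤ) : ℤ):ℝ) * (π / (2*n+1)))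
        by push_cast; ring]
    ring
  rw [hstep]
  by_cases hjk : j = k
  · subst hjk
    rw [if_pos rfl, if_pos (show (((j:ℕ):ℤ)-((j:ℕ):ℤ)) = 0 by omega),
      if_neg (show ¬(2*(n:ℤ)-1-((j:ℕ):ℤ)-((j:ℕ):ℤ)) = 0 by omega),
      cosZ_odd _ ((n:ℤ)-1-((j:ℕ):ℤ)) (by omega)]
    have : ((n:ℝ)+1/2) ≠ 0 := by positivity
    rw [hc2]
    field_simp
  · have hne : (j:ℕ) ≠ (k:ℕ) := fun h => hjk (Fin.ext h)
    rw [if_neg hjk, if_neg (show ¬(((k:ℕ):ℤ)-((j:ℕ):ℤ)) = 0 by omega),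
      if_neg (show ¬(2*(n:ℤ)-1-((j:ℕ):ℤ)-((k:ℕ):ℤ)) = 0 by omega)]
    have := cos_opp (((k:ℕ):ℤ)-((j:ℕ):ℤ)) (2*(n:ℤ)-1-((j:ℕ):ℤ)-((k:ℕ):ℤ))
      ((n:ℤ)-1-((j:ℕ):ℤ)) (by omega)
    linear_combination (-(c^2)/4) * this


def Vm (n : ℕ) : Matrix (Fin (n+1)) (Fin (n+1)) ℝ := Matrix.of fun i j =>
  if (j : ℕ) = n then (if (i : ℕ) = 0 then 1 else 0)
  else -(Real.sqrt (2 / ((n : ℝ) + 1/2)) *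
    Real.sin (2 * π * ((n : ℝ) - (j : ℕ) - 1/2) * ((i : ℕ) : ℝ) / (2 * n + 1)))

lemma VtV (n : ℕ) (hn : 1 ≤ n) : (Vm n)ᵀ * Vm n = 1 := by
  ext j k
  have hj := j.isLt
  have hk := k.isLt
  set c := Real.sqrt (2 / ((n:ℝ) + 1/2)) with hc
  have hc2 : c^2 = 2/((n:ℝ)+1/2) := Real.sq_sqrt (by positivity)
  rw [Matrix.mul_apply, Matrix.one_apply]
  by_cases hjn : (j:ℕ) = n
  · by_cases hkn : (k:ℕ) = n
    · have hjk : j = k := Fin.ext (hjn.trans hkn.symm)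
      rw [if_pos hjk]
      subst hjk
      rw [Finset.sum_eq_single (0 : Fin (n+1))]
      · simp [Vm, transpose_apply, hjn]
      · intro b _ hb
        have : (b:ℕ) ≠ 0 := fun h => hb (Fin.ext h)
        simp [Vm, transpose_apply, hjn, this, hb]
      · simp
    · have hjk : j ≠ k := fun h => hkn (h ▸ hjn)
      rw [if_neg hjk, Finset.sum_eq_single (0 : Fin (n+1))]
      · simp [Vm, transpose_apply, hjn, hkn]
      · intro b _ hb
        have : (b:ℕ) ≠ 0 := fun h => hb (Fin.ext h)
        simp [Vm, transpose_apply, hjn, this, hb]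
      · simp
  · by_cases hkn : (k:ℕ) = n
    · have hjk : j ≠ k := fun h => hjn (h ▸ hkn)
      rw [if_neg hjk, Finset.sum_eq_single (0 : Fin (n+1))]
      · simp [Vm, transpose_apply, hjn, hkn]
      · intro b _ hb
        have : (b:ℕ) ≠ 0 := fun h => hb (Fin.ext h)
        simp [Vm, transpose_apply, hkn, this, hb]
      · simp
    · -- both interior columns
      have hstep : ∑ i : Fin (n+1), (Vm n)ᵀ j i * Vm n i k
          = c^2/2 * ((if (((k:ℕ):ℤ)-((j:ℕ):ℤ)) = 0 then (n:ℝ)+1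
                else (1:ℝ)/2)
            - (if (2*(n:ℤ)-1-((j:ℕ):ℤ)-((k:ℕ):ℤ)) = 0 then (n:ℝ)+1
                else (1:ℝ)/2)) := by
        rw [← Tlem n (((k:ℕ):ℤ)-((j:ℕ):ℤ)) (by omega),
            ← Tlem n (2*(n:ℤ)-1-((j:ℕ):ℤ)-((k:ℕ):ℤ)) (by omega),
            ← Finset.sum_sub_distrib, Finset.mul_sum,
            ← Fin.sum_univ_eq_sum_range (fun i => c^2/2 *
              (cos (2*(i:ℝ)*(((((k:ℕ):ℤ)-((j:ℕ):ℤ) : ℤ):ℝ) * (π / (2*n+1))))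
               - cos (2*(i:ℝ)*(((2*(n:ℤ)-1-((j:ℕ):ℤ)-((k:ℕ):ℤ) : ℤ):ℝ) * (π / (2*n+1)))))) (n+1)]
        refine Finset.sum_congr rfl fun i _ => ?_
        simp only [transpose_apply, Vm, Matrix.of_apply, if_neg hjn, if_neg hkn]
        rw [show -(c * sin (2 * π * ((n:ℝ) - (j:ℕ) - 1/2) * ((i:ℕ):ℝ) / (2*n+1)))
              * -(c * sin (2 * π * ((n:ℝ) - (k:ℕ) - 1/2) * ((i:ℕ):ℝ) / (2*n+1)))
            = c^2 * (sin (2 * π * ((n:ℝ) - (j:ℕ) - 1/2) * ((i:ℕ):ℝ) / (2*n+1))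
              * sin (2 * π * ((n:ℝ) - (k:ℕ) - 1/2) * ((i:ℕ):ℝ) / (2*n+1))) by ring,
          sinsin]
        rw [show 2 * π * ((n:ℝ) - (j:ℕ) - 1/2) * ((i:ℕ):ℝ) / (2*n+1)
              - 2 * π * ((n:ℝ) - (k:ℕ) - 1/2) * ((i:ℕ):ℝ) / (2*n+1)
            = 2*((i:ℕ):ℝ)*(((((k:ℕ):ℤ)-((j:ℕ):ℤ) : ℤ):ℝ) * (π / (2*n+1))) by push_cast; ring]
        rw [show 2 * π * ((n:ℝ) - (j:ℕ) - 1/2) * ((i:ℕ):ℝ) / (2*n+1)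
              + 2 * π * ((n:ℝ) - (k:ℕ) - 1/2) * ((i:ℕ):ℝ) / (2*n+1)
            = 2*((i:ℕ):ℝ)*(((2*(n:ℤ)-1-((j:ℕ):ℤ)-((k:ℕ):ℤ) : ℤ):ℝ) * (π / (2*n+1))) by push_cast; ring]
        ring
      rw [hstep]
      by_cases hjk : j = k
      · subst hjk
        rw [if_pos rfl, if_pos (show (((j:ℕ):ℤ)-((j:ℕ):ℤ)) = 0 by omega),
          if_neg (show ¬(2*(n:ℤ)-1-((j:ℕ):ℤ)-((j:ℕ):ℤ)) = 0 by omega)]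
        have : ((n:ℝ)+1/2) ≠ 0 := by positivity
        rw [hc2]
        field_simp
        ring
      · have hne : (j:ℕ) ≠ (k:ℕ) := fun h => hjk (Fin.ext h)
        rw [if_neg hjk, if_neg (show ¬(((k:ℕ):ℤ)-((j:ℕ):ℤ)) = 0 by omega),
          if_neg (show ¬(2*(n:ℤ)-1-((j:ℕ):ℤ)-((k:ℕ):ℤ)) = 0 by omega)]
        ring


def Sigm (n : ℕ) : Matrix (Fin n) (Fin (n+1)) ℝ := Matrix.of fun i j =>
  if (i : ℕ) = (j : ℕ) then
    2 * Real.sin (π * ((n : ℝ) - (i : ℕ) - 1/2) / (2 * n + 1))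
  else 0

lemma prodlem (n : ℕ) (hn : 1 ≤ n) : Sd n 0 1 = Um n * Sigm n * (Vm n)ᵀ := by
  ext i l
  have hi := i.isLt
  have hl := l.isLt
  set c := Real.sqrt (2 / ((n:ℝ) + 1/2)) with hc
  have hc2 : c^2 = 2/((n:ℝ)+1/2) := Real.sq_sqrt (by positivity)
  have hUS : ∀ k : Fin n, (Um n * Sigm n) i k.castSucc
      = c * cos (π * ((n:ℝ) - (k:ℕ) - 1/2) * (2*((i:ℕ):ℝ)+1) / (2*n+1))
        * (2 * sin (π * ((n:ℝ) - (k:ℕ) - 1/2) / (2*n+1))) := by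
    intro k
    rw [Matrix.mul_apply, Finset.sum_eq_single k]
    · simp only [Um, Sigm, Matrix.of_apply, Fin.coe_castSucc]
      rw [if_true, hc]
    · intro b _ hb
      have : (b:ℕ) ≠ (k:ℕ) := fun h => hb (Fin.ext h)
      simp [Sigm, Fin.coe_castSucc, this]
    · simp
  have hUSlast : (Um n * Sigm n) i (Fin.last n) = 0 := by
    rw [Matrix.mul_apply]
    apply Finset.sum_eq_zero
    intro b _
    have : (b:ℕ) ≠ n := Nat.ne_of_lt b.isLt
    simp [Sigm, Fin.val_last, this]
  have hstep : (Um n * Sigm n * (Vm n)ᵀ) i l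
      = -(c^2)/2 *
        ((if (((i:ℕ):ℤ)+1-((l:ℕ):ℤ)) = 0 then (n:ℝ)
            else -cos ((((i:ℕ):ℤ)+1-((l:ℕ):ℤ) : ℤ)*π)/2)
         - (if (((i:ℕ):ℤ)+1+((l:ℕ):ℤ)) = 0 then (n:ℝ)
            else -cos ((((i:ℕ):ℤ)+1+((l:ℕ):ℤ) : ℤ)*π)/2)
         - (if (((i:ℕ):ℤ)-((l:ℕ):ℤ)) = 0 then (n:ℝ)
            else -cos ((((i:ℕ):ℤ)-((l:ℕ):ℤ) : ℤ)*π)/2)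
         + (if (((i:ℕ):ℤ)+((l:ℕ):ℤ)) = 0 then (n:ℝ)
            else -cos ((((i:ℕ):ℤ)+((l:ℕ):ℤ) : ℤ)*π)/2)) := by
    rw [Matrix.mul_apply]
    rw [Fin.sum_univ_castSucc
      (f := fun k : Fin (n+1) => (Um n * Sigm n) i k * (Vm n)ᵀ k l)]
    rw [hUSlast, zero_mul, add_zero]
    rw [← W'lem n (((i:ℕ):ℤ)+1-((l:ℕ):ℤ)) (by omega),
        ← W'lem n (((i:ℕ):ℤ)+1+((l:ℕ):ℤ)) (by omega),
        ← W'lem n (((i:ℕ):ℤ)-((l:ℕ):ℤ)) (by omega),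
        ← W'lem n (((i:ℕ):ℤ)+((l:ℕ):ℤ)) (by omega)]
    rw [← Finset.sum_sub_distrib, ← Finset.sum_sub_distrib, ← Finset.sum_add_distrib,
      Finset.mul_sum,
      ← Fin.sum_univ_eq_sum_range (fun k => -(c^2)/2 *
        (cos ((2*((n:ℝ)-k)-1)*(((((i:ℕ):ℤ)+1-((l:ℕ):ℤ) : ℤ):ℝ) * (π / (2*n+1))))
         - cos ((2*((n:ℝ)-k)-1)*(((((i:ℕ):ℤ)+1+((l:ℕ):ℤ) : ℤ):ℝ) * (π / (2*n+1))))
         - cos ((2*((n:ℝ)-k)-1)*(((((i:ℕ):ℤ)-((l:ℕ):ℤ) : ℤ):ℝ) * (π / (2*n+1))))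
         + cos ((2*((n:ℝ)-k)-1)*(((((i:ℕ):ℤ)+((l:ℕ):ℤ) : ℤ):ℝ) * (π / (2*n+1)))))) n]
    refine Finset.sum_congr rfl fun k _ => ?_
    rw [hUS k, transpose_apply]
    simp only [Vm, Matrix.of_apply, Fin.coe_castSucc]
    rw [if_neg (Nat.ne_of_lt k.isLt)]
    rw [show c * cos (π * ((n:ℝ) - (k:ℕ) - 1/2) * (2*((i:ℕ):ℝ)+1) / (2*n+1))
          * (2 * sin (π * ((n:ℝ) - (k:ℕ) - 1/2) / (2*n+1)))
          * -(c * sin (2 * π * ((n:ℝ) - (k:ℕ) - 1/2) * ((l:ℕ):ℝ) / (2*n+1)))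
        = -(c^2) * (cos (π * ((n:ℝ) - (k:ℕ) - 1/2) * (2*((i:ℕ):ℝ)+1) / (2*n+1))
            * (2 * sin (π * ((n:ℝ) - (k:ℕ) - 1/2) / (2*n+1)))
            * sin (2 * π * ((n:ℝ) - (k:ℕ) - 1/2) * ((l:ℕ):ℝ) / (2*n+1))) by ring,
      trig3]
    rw [show π * ((n:ℝ) - (k:ℕ) - 1/2) * (2*((i:ℕ):ℝ)+1) / (2*n+1)
          + π * ((n:ℝ) - (k:ℕ) - 1/2) / (2*n+1)
          - 2 * π * ((n:ℝ) - (k:ℕ) - 1/2) * ((l:ℕ):ℝ) / (2*n+1)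
        = (2*((n:ℝ)-(k:ℕ))-1)*(((((i:ℕ):ℤ)+1-((l:ℕ):ℤ) : ℤ):ℝ) * (π / (2*n+1)))
        by push_cast; ring]
    rw [show π * ((n:ℝ) - (k:ℕ) - 1/2) * (2*((i:ℕ):ℝ)+1) / (2*n+1)
          + π * ((n:ℝ) - (k:ℕ) - 1/2) / (2*n+1)
          + 2 * π * ((n:ℝ) - (k:ℕ) - 1/2) * ((l:ℕ):ℝ) / (2*n+1)
        = (2*((n:ℝ)-(k:ℕ))-1)*(((((i:ℕ):ℤ)+1+((l:ℕ):ℤ) : ℤ):ℝ) * (π / (2*n+1)))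
        by push_cast; ring]
    rw [show π * ((n:ℝ) - (k:ℕ) - 1/2) * (2*((i:ℕ):ℝ)+1) / (2*n+1)
          - π * ((n:ℝ) - (k:ℕ) - 1/2) / (2*n+1)
          - 2 * π * ((n:ℝ) - (k:ℕ) - 1/2) * ((l:ℕ):ℝ) / (2*n+1)
        = (2*((n:ℝ)-(k:ℕ))-1)*(((((i:ℕ):ℤ)-((l:ℕ):ℤ) : ℤ):ℝ) * (π / (2*n+1)))
        by push_cast; ring]
    rw [show π * ((n:ℝ) - (k:ℕ) - 1/2) * (2*((i:ℕ):ℝ)+1) / (2*n+1)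
          - π * ((n:ℝ) - (k:ℕ) - 1/2) / (2*n+1)
          + 2 * π * ((n:ℝ) - (k:ℕ) - 1/2) * ((l:ℕ):ℝ) / (2*n+1)
        = (2*((n:ℝ)-(k:ℕ))-1)*(((((i:ℕ):ℤ)+((l:ℕ):ℤ) : ℤ):ℝ) * (π / (2*n+1)))
        by push_cast; ring]
    ring
  rw [hstep]
  by_cases h1 : (l:ℕ) = (i:ℕ)
  · by_cases h2 : (i:ℕ) = 0
    · -- corner: value 0
      simp only [Sd, Matrix.of_apply, if_pos (⟨h1, h2⟩ : (l:ℕ) = (i:ℕ) ∧ (i:ℕ) = 0)]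
      rw [if_neg (show ¬(((i:ℕ):ℤ)+1-((l:ℕ):ℤ)) = 0 by omega),
        if_neg (show ¬(((i:ℕ):ℤ)+1+((l:ℕ):ℤ)) = 0 by omega),
        if_pos (show (((i:ℕ):ℤ)-((l:ℕ):ℤ)) = 0 by omega),
        if_pos (show (((i:ℕ):ℤ)+((l:ℕ):ℤ)) = 0 by omega),
        show (((i:ℕ):ℤ)+1-((l:ℕ):ℤ)) = (((i:ℕ):ℤ)+1+((l:ℕ):ℤ)) by omega]
      ring
    · -- diagonal: value 1
      simp only [Sd, Matrix.of_apply]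
      rw [if_neg (by omega : ¬((l:ℕ) = (i:ℕ) ∧ (i:ℕ) = 0)), if_pos h1]
      rw [if_neg (show ¬(((i:ℕ):ℤ)+1-((l:ℕ):ℤ)) = 0 by omega),
        if_neg (show ¬(((i:ℕ):ℤ)+1+((l:ℕ):ℤ)) = 0 by omega),
        if_pos (show (((i:ℕ):ℤ)-((l:ℕ):ℤ)) = 0 by omega),
        if_neg (show ¬(((i:ℕ):ℤ)+((l:ℕ):ℤ)) = 0 by omega),
        cosZ_odd (((i:ℕ):ℤ)+1-((l:ℕ):ℤ)) 0 (by omega),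
        cosZ_odd (((i:ℕ):ℤ)+1+((l:ℕ):ℤ)) ((i:ℕ):ℤ) (by omega),
        cosZ_even (((i:ℕ):ℤ)+((l:ℕ):ℤ)) ((i:ℕ):ℤ) (by omega)]
      have : ((n:ℝ)+1/2) ≠ 0 := by positivity
      rw [hc2]
      field_simp
      ring
  · by_cases h2 : (l:ℕ) = (i:ℕ) + 1
    · -- superdiagonal: value -1
      have hSd : Sd n 0 1 i l = -1 := by
        simp only [Sd, Matrix.of_apply]
        rw [if_neg (by omega : ¬((l:ℕ) = (i:ℕ) ∧ (i:ℕ) = 0)), if_neg h1]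
        by_cases h3 : (i:ℕ) = n - 1
        · rw [if_pos ⟨h2, h3⟩]
        · rw [if_neg (by tauto : ¬((l:ℕ) = (i:ℕ)+1 ∧ (i:ℕ) = n-1)), if_pos h2]
      rw [hSd]
      rw [if_pos (show (((i:ℕ):ℤ)+1-((l:ℕ):ℤ)) = 0 by omega),
        if_neg (show ¬(((i:ℕ):ℤ)+1+((l:ℕ):ℤ)) = 0 by omega),
        if_neg (show ¬(((i:ℕ):ℤ)-((l:ℕ):ℤ)) = 0 by omega),
        if_neg (show ¬(((i:ℕ):ℤ)+((l:ℕ):ℤ)) = 0 by omega),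
        cosZ_even (((i:ℕ):ℤ)+1+((l:ℕ):ℤ)) (((i:ℕ):ℤ)+1) (by omega),
        cosZ_odd (((i:ℕ):ℤ)-((l:ℕ):ℤ)) (-1) (by omega),
        cosZ_odd (((i:ℕ):ℤ)+((l:ℕ):ℤ)) ((i:ℕ):ℤ) (by omega)]
      have : ((n:ℝ)+1/2) ≠ 0 := by positivity
      rw [hc2]
      field_simp
      ring
    · -- zero entry
      have hSd : Sd n 0 1 i l = 0 := by
        simp only [Sd, Matrix.of_apply]
        rw [if_neg (by omega : ¬((l:ℕ) = (i:ℕ) ∧ (i:ℕ) = 0)), if_neg h1,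
          if_neg (by tauto : ¬((l:ℕ) = (i:ℕ)+1 ∧ (i:ℕ) = n-1)), if_neg h2]
      rw [hSd]
      rw [if_neg (show ¬(((i:ℕ):ℤ)+1-((l:ℕ):ℤ)) = 0 by omega),
        if_neg (show ¬(((i:ℕ):ℤ)+1+((l:ℕ):ℤ)) = 0 by omega),
        if_neg (show ¬(((i:ℕ):ℤ)-((l:ℕ):ℤ)) = 0 by omega),
        if_neg (show ¬(((i:ℕ):ℤ)+((l:ℕ):ℤ)) = 0 by omega),
        show (((i:ℕ):ℤ)+1+((l:ℕ):ℤ)) = (((i:ℕ):ℤ)+1-((l:ℕ):ℤ)) + 2*((l:ℕ):ℤ) by ring,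
        cos_shift,
        show (((i:ℕ):ℤ)+((l:ℕ):ℤ)) = (((i:ℕ):ℤ)-((l:ℕ):ℤ)) + 2*((l:ℕ):ℤ) by ring,
        cos_shift]
      ring


lemma sig_pos (n : ℕ) (j : Fin n) :
    0 < 2 * Real.sin (π * ((n : ℝ) - (j : ℕ) - 1/2) / (2 * n + 1)) := by
  have hj := j.isLt
  have h1 : (0:ℝ) < π * ((n : ℝ) - (j : ℕ) - 1/2) / (2 * n + 1) := by
    have : ((j:ℕ):ℝ) + 1 ≤ (n:ℝ) := by exact_mod_cast hj
    have hπ := pi_pos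
    apply div_pos (by nlinarith) (by positivity)
  have h2 : π * ((n : ℝ) - (j : ℕ) - 1/2) / (2 * n + 1) < π := by
    have hπ := pi_pos
    rw [div_lt_iff₀ (by positivity)]
    have : (0:ℝ) ≤ (j:ℕ) := by positivity
    nlinarith
  have := Real.sin_pos_of_pos_of_lt_pi h1 h2
  linarith

lemma SigSigT (n : ℕ) : Sigm n * (Sigm n)ᵀ
    = Matrix.diagonal (fun j : Fin n =>
        (2 * Real.sin (π * ((n : ℝ) - (j : ℕ) - 1/2) / (2 * n + 1)))^2) := by
  ext j k
  rw [Matrix.mul_apply, Matrix.diagonal_apply]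
  rw [Finset.sum_eq_single (j.castSucc)]
  · simp only [Sigm, Matrix.of_apply, transpose_apply, Fin.coe_castSucc]
    rw [if_true]
    by_cases hjk : j = k
    · subst hjk; rw [if_pos rfl, if_pos rfl]; ring
    · have : (k:ℕ) ≠ (j:ℕ) := fun h => hjk (Fin.ext h.symm)
      rw [if_neg this, if_neg hjk, mul_zero]
  · intro b _ hb
    have : (j:ℕ) ≠ (b:ℕ) := by
      intro h
      apply hb
      have hjb : (b:ℕ) < n + 1 := b.isLt
      exact Fin.ext (by simp [Fin.coe_castSucc, ← h])
    simp [Sigm, this]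
  · simp

lemma rank_Sigm (n : ℕ) : (Sigm n).rank = n := by
  rw [← Matrix.rank_self_mul_transpose, SigSigT]
  have hu : IsUnit (Matrix.diagonal (fun j : Fin n =>
      (2 * Real.sin (π * ((n : ℝ) - (j : ℕ) - 1/2) / (2 * n + 1)))^2)) := by
    rw [Matrix.isUnit_iff_isUnit_det, Matrix.det_diagonal, isUnit_iff_ne_zero]
    apply Finset.prod_ne_zero_iff.mpr
    intro j _
    have := sig_pos n j
    positivity
  rw [Matrix.rank_of_isUnit _ hu, Fintype.card_fin]


end Stmt12Aux

/-- explicit SVD of the diffusion matrix under Mixed boundary conditions.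
Indices here run from 0, whereas in the informal statement they run from 1. -/
theorem stmt12 (n : ℕ) (hn : 1 ≤ n) :
    let U : Matrix (Fin n) (Fin n) ℝ := Matrix.of fun i j =>
      Real.sqrt (2 / ((n : ℝ) + 1/2)) *
        Real.cos (π * ((n : ℝ) - (j : ℕ) - 1/2) * (2 * ((i : ℕ) : ℝ) + 1) / (2 * n + 1))
    let V : Matrix (Fin (n+1)) (Fin (n+1)) ℝ := Matrix.of fun i j =>
      if (j : ℕ) = n then (if (i : ℕ) = 0 then 1 else 0)
      else -(Real.sqrt (2 / ((n : ℝ) + 1/2)) *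
        Real.sin (2 * π * ((n : ℝ) - (j : ℕ) - 1/2) * ((i : ℕ) : ℝ) / (2 * n + 1)))
    let Sig : Matrix (Fin n) (Fin (n+1)) ℝ := Matrix.of fun i j =>
      if (i : ℕ) = (j : ℕ) then
        2 * Real.sin (π * ((n : ℝ) - (i : ℕ) - 1/2) / (2 * n + 1))
      else 0
    Uᵀ * U = 1 ∧ U * Uᵀ = 1 ∧ Vᵀ * V = 1 ∧ V * Vᵀ = 1 ∧
      Sd n 0 1 = U * Sig * Vᵀ ∧ (Sd n 0 1).rank = n := by
  intro U V Sig
  have hUtU := Stmt12Aux.UtU n hn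
  have hVtV := Stmt12Aux.VtV n hn
  have hprod := Stmt12Aux.prodlem n hn
  have hUUt : Stmt12Aux.Um n * (Stmt12Aux.Um n)ᵀ = 1 := mul_eq_one_comm.mp hUtU
  have hVVt : Stmt12Aux.Vm n * (Stmt12Aux.Vm n)ᵀ = 1 := mul_eq_one_comm.mp hVtV
  refine ⟨hUtU, hUUt, hVtV, hVVt, hprod, ?_⟩
  have hUdet : IsUnit (Stmt12Aux.Um n).det :=
    IsUnit.of_mul_eq_one _ (by rw [← Matrix.det_mul, hUUt, Matrix.det_one])
  have hVdet : IsUnit ((Stmt12Aux.Vm n)ᵀ).det := by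
    rw [Matrix.det_transpose]
    exact IsUnit.of_mul_eq_one _ (by rw [← Matrix.det_mul, hVVt, Matrix.det_one])
  rw [hprod, Matrix.mul_assoc,
    Matrix.rank_mul_eq_right_of_isUnit_det _ _ hUdet,
    Matrix.rank_mul_eq_left_of_isUnit_det _ _ hVdet,
    Stmt12Aux.rank_Sigm]

end
end
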